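/- arXiv:1403.6050 — 5 statements merged into one kernel-verified Lean document; each statement's English description precedes it below -/
import Mathlib

section
/- Let Λ ⊆ ℝ^d be compact with f(Λ) = Λ. Suppose (E, F) and (E', F') are two pairs of maps on Λ, each assigning linear subspaces with ℝ^d = E(x) ⊕ F(x) = E'(x) ⊕ F'(x) for all x ∈ Λ, each Df-invariant (Df_x(E(x)) = E(f(x)), Df_x(F(x)) = F(f(x)), and similarly for E', F'), each satisfying the domination inequality for some constants C > 0, λ ∈ (0,1) and C' > 0, λ' ∈ (0,1) respectively (continuity not assumed), and with dim E(x) = dim E'(x) = i for every x ∈ Λ. Then E(x) = E'(x) and F(x) = F'(x) for all x ∈ Λ; that is, a dominated splitting of index i on Λ is unique. -/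
open Set

noncomputable section

abbrev Euc (d : ℕ) := EuclideanSpace ℝ (Fin d)

/-- f is a C¹ diffeomorphism of ℝ^d. -/
def IsC1Diffeo {d : ℕ} (f : Euc d → Euc d) : Prop :=
  Function.Bijective f ∧ ContDiff ℝ 1 f ∧
    ∃ g : Euc d → Euc d, ContDiff ℝ 1 g ∧ Function.LeftInverse g f ∧ Function.RightInverse g f

/-- The orthogonal projection onto V, as an endomorphism. -/
def projSub {d : ℕ} (V : Submodule ℝ (Euc d)) : Euc d →L[ℝ] Euc d :=
  V.subtypeL.comp (V.orthogonalProjectionOnto)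

/-- The domination inequality. -/
def DomIneq {d : ℕ} (f : Euc d → Euc d) (Λ : Set (Euc d))
    (E F : Euc d → Submodule ℝ (Euc d)) (C lam : ℝ) : Prop :=
  ∀ x ∈ Λ, ∀ n : ℕ, ∀ u ∈ E x, u ≠ 0 → ∀ v ∈ F x, v ≠ 0 →
    ‖fderiv ℝ (f^[n]) x u‖ / ‖u‖ ≤ C * lam ^ n * (‖fderiv ℝ (f^[n]) x v‖ / ‖v‖)

/-- Dominated splitting on Λ with constants C, lam. -/
def IsDomSplitting {d : ℕ} (f : Euc d → Euc d) (Λ : Set (Euc d))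
    (E F : Euc d → Submodule ℝ (Euc d)) (C lam : ℝ) : Prop :=
  (∀ x ∈ Λ, IsCompl (E x) (F x)) ∧
  (∀ x ∈ Λ, (E x).map (fderiv ℝ f x : Euc d →ₗ[ℝ] Euc d) = E (f x)) ∧
  (∀ x ∈ Λ, (F x).map (fderiv ℝ f x : Euc d →ₗ[ℝ] Euc d) = F (f x)) ∧
  ContinuousOn (fun x => projSub (E x)) Λ ∧
  ContinuousOn (fun x => projSub (F x)) Λ ∧
  DomIneq f Λ E F C lam

set_option maxHeartbeats 1000000

namespace DSUnique

variable {d : ℕ}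

/-- map of a submodule under a composition of continuous linear maps -/
lemma map_comp_clm (A B : Euc d →L[ℝ] Euc d) (p : Submodule ℝ (Euc d)) :
    p.map ((A.comp B : Euc d →L[ℝ] Euc d) : Euc d →ₗ[ℝ] Euc d) = (p.map (B : Euc d →ₗ[ℝ] Euc d)).map (A : Euc d →ₗ[ℝ] Euc d) := by
  ext y
  simp only [Submodule.mem_map, ContinuousLinearMap.comp_apply]
  constructor
  · rintro ⟨z, hz, rfl⟩; exact ⟨B z, ⟨z, hz, rfl⟩, rfl⟩
  · rintro ⟨w, ⟨z, hz, rfl⟩, rfl⟩; exact ⟨z, hz, rfl⟩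

lemma map_id_clm (p : Submodule ℝ (Euc d)) :
    p.map (ContinuousLinearMap.id ℝ (Euc d) : Euc d →ₗ[ℝ] Euc d) = p := by
  ext y; simp [Submodule.mem_map]

/-- Pointwise abstract lemma: disjointness of E' and F. -/
lemma key_disj (T : ℕ → (Euc d →L[ℝ] Euc d)) (hT : ∀ n, Function.Injective (T n))
    {E F E' F' : Submodule ℝ (Euc d)} (hc : IsCompl E F) (hc' : IsCompl E' F')
    (hrk : Module.finrank ℝ F' = Module.finrank ℝ F)
    {C lam C' lam' : ℝ} (hC : 0 < C) (hlam0 : 0 < lam) (hlam1 : lam < 1)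
    (hC' : 0 < C') (hlam0' : 0 < lam') (hlam1' : lam' < 1)
    (hdom : ∀ n : ℕ, ∀ u ∈ E, ∀ v ∈ F, v ≠ 0 →
      ‖T n u‖ * ‖v‖ ≤ C * lam ^ n * (‖u‖ * ‖T n v‖))
    (hdom' : ∀ n : ℕ, ∀ u ∈ E', ∀ v ∈ F', v ≠ 0 →
      ‖T n u‖ * ‖v‖ ≤ C' * lam' ^ n * (‖u‖ * ‖T n v‖)) :
    E' ⊓ F = ⊥ := by
  have hTn : ∀ (n : ℕ) (w : Euc d), w ≠ 0 → 0 < ‖T n w‖ := by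
    intro n w hw
    have hne : T n w ≠ 0 := by
      intro h
      exact hw (hT n (by simpa using h))
    simpa using norm_pos_iff.mpr hne
  rw [Submodule.eq_bot_iff]
  rintro v ⟨hvE', hvF⟩
  by_contra hv0
  have hq_v : 0 < ‖v‖ := norm_pos_iff.mpr hv0
  -- First: F' ⊓ E = ⊥ (elementwise)
  have hFE : ∀ z : Euc d, z ∈ F' → z ∈ E → z = 0 := by
    intro z hzF' hzE
    by_contra hz0
    have hq_z : 0 < ‖z‖ := norm_pos_iff.mpr hz0
    have hll1 : lam * lam' < 1 := by nlinarith
    obtain ⟨n, hn⟩ := exists_pow_lt_of_lt_one (x := (C * C')⁻¹) (by positivity) hll1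
    have h1 := hdom n z hzE v hvF hv0
    have h2 := hdom' n v hvE' z hzF' hz0
    have p1 := hTn n z hz0
    have p2 := hTn n v hv0
    have key : (1:ℝ) ≤ C * C' * (lam * lam') ^ n := by
      rw [mul_pow]
      nlinarith [mul_le_mul h1 h2 (by positivity) (by positivity),
        mul_pos (mul_pos p1 p2) (mul_pos hq_z hq_v),
        pow_pos hlam0 n, pow_pos hlam0' n]
    have hCC : (0:ℝ) < C * C' := mul_pos hC hC'
    have := mul_lt_mul_of_pos_left hn hCC
    rw [mul_inv_cancel₀ hCC.ne'] at this
    linarith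
  -- projection from F' to F along E is injective, hence surjective
  set π := F.linearProjOfIsCompl E hc.symm with hπ
  have hinj : Function.Injective (π.comp F'.subtype) := by
    rw [← LinearMap.ker_eq_bot, Submodule.eq_bot_iff]
    rintro ⟨z, hz⟩ hker
    have hz0 : π z = 0 := by simpa using hker
    have hzE : z ∈ E := (Submodule.linearProjOfIsCompl_apply_eq_zero_iff hc.symm).mp hz0
    exact Subtype.ext (hFE z hz hzE)
  have hsurj : Function.Surjective (π.comp F'.subtype) :=
    (LinearMap.injective_iff_surjective_of_finrank_eq_finrank hrk).mp hinj
  obtain ⟨w', hw'⟩ := hsurj ⟨v, hvF⟩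
  set w : Euc d := (w' : Euc d) with hwdef
  have hwF' : w ∈ F' := w'.2
  have hπw : (π w : Euc d) = v := by
    have : π w = ⟨v, hvF⟩ := by simpa using hw'
    rw [this]
  set u : Euc d := (E.linearProjOfIsCompl F hc w : Euc d) with hudef
  have hu : u ∈ E := SetLike.coe_mem _
  have huvw : u + v = w := by
    have this : u + (π w : Euc d) = w := Submodule.projection_add_projection_eq_self hc w
    rw [← hπw]
    exact this
  have hw0 : w ≠ 0 := by
    intro h
    apply hv0
    rw [← hπw, h]
    simp
  have hq_w : 0 < ‖w‖ := norm_pos_iff.mpr hw0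
  -- choose n
  have hden : (0:ℝ) < C' * (C * ‖u‖ + ‖v‖) := by
    have : (0:ℝ) ≤ C * ‖u‖ := by positivity
    nlinarith
  obtain ⟨n, hn⟩ := exists_pow_lt_of_lt_one (x := ‖w‖ / (C' * (C * ‖u‖ + ‖v‖))) (by positivity) hlam1'
  have h1 := hdom' n v hvE' w hwF' hw0
  have h2 := hdom n u hu v hvF hv0
  have h3 : ‖T n w‖ ≤ ‖T n u‖ + ‖T n v‖ := by
    have : T n w = T n u + T n v := by rw [← huvw, map_add]
    rw [this]; exact norm_add_le _ _
  have hlamle : lam ^ n ≤ 1 := pow_le_one₀ hlam0.le hlam1.le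
  have p2 := hTn n v hv0
  have keycalc : ‖w‖ * (‖T n v‖ * ‖v‖) ≤ (C' * lam' ^ n * (C * ‖u‖ + ‖v‖)) * (‖T n v‖ * ‖v‖) := by
    calc ‖w‖ * (‖T n v‖ * ‖v‖) = (‖T n v‖ * ‖w‖) * ‖v‖ := by ring
      _ ≤ (C' * lam' ^ n * (‖v‖ * ‖T n w‖)) * ‖v‖ := by
          exact mul_le_mul_of_nonneg_right h1 hq_v.le
      _ ≤ (C' * lam' ^ n * (‖v‖ * (‖T n u‖ + ‖T n v‖))) * ‖v‖ := by gcongr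
      _ = C' * lam' ^ n * ‖v‖ * (‖T n u‖ * ‖v‖) + C' * lam' ^ n * (‖v‖ * ‖v‖) * ‖T n v‖ := by ring
      _ ≤ C' * lam' ^ n * ‖v‖ * (C * lam ^ n * (‖u‖ * ‖T n v‖))
            + C' * lam' ^ n * (‖v‖ * ‖v‖) * ‖T n v‖ := by gcongr
      _ ≤ C' * lam' ^ n * ‖v‖ * (C * 1 * (‖u‖ * ‖T n v‖))
            + C' * lam' ^ n * (‖v‖ * ‖v‖) * ‖T n v‖ := by gcongr
      _ = (C' * lam' ^ n * (C * ‖u‖ + ‖v‖)) * (‖T n v‖ * ‖v‖) := by ring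
  have hw_le : ‖w‖ ≤ C' * lam' ^ n * (C * ‖u‖ + ‖v‖) :=
    le_of_mul_le_mul_right keycalc (by positivity)
  rw [lt_div_iff₀ hden] at hn
  nlinarith [hn, hw_le]

/-- Pointwise abstract lemma: E' ≤ E. -/
lemma key_le (T : ℕ → (Euc d →L[ℝ] Euc d)) (hT : ∀ n, Function.Injective (T n))
    {E F E' F' : Submodule ℝ (Euc d)} (hc : IsCompl E F) (hc' : IsCompl E' F')
    (hrk : Module.finrank ℝ E = Module.finrank ℝ E')
    {C lam C' lam' : ℝ} (hC : 0 < C) (hlam0 : 0 < lam) (hlam1 : lam < 1)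
    (hC' : 0 < C') (hlam0' : 0 < lam') (hlam1' : lam' < 1)
    (hdom : ∀ n : ℕ, ∀ u ∈ E, ∀ v ∈ F, v ≠ 0 →
      ‖T n u‖ * ‖v‖ ≤ C * lam ^ n * (‖u‖ * ‖T n v‖))
    (hdom' : ∀ n : ℕ, ∀ u ∈ E', ∀ v ∈ F', v ≠ 0 →
      ‖T n u‖ * ‖v‖ ≤ C' * lam' ^ n * (‖u‖ * ‖T n v‖)) :
    E' ≤ E := by
  have hTn : ∀ (n : ℕ) (w : Euc d), w ≠ 0 → 0 < ‖T n w‖ := by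
    intro n w hw
    have hne : T n w ≠ 0 := by
      intro h
      exact hw (hT n (by simpa using h))
    simpa using norm_pos_iff.mpr hne
  have hrkF : Module.finrank ℝ F' = Module.finrank ℝ F := by
    have h1 := Submodule.finrank_add_eq_of_isCompl hc
    have h2 := Submodule.finrank_add_eq_of_isCompl hc'
    omega
  have hd1 : E' ⊓ F = ⊥ :=
    key_disj T hT hc hc' hrkF hC hlam0 hlam1 hC' hlam0' hlam1' hdom hdom'
  intro v hvE'
  set u : Euc d := (E.linearProjOfIsCompl F hc v : Euc d) with hudef
  set w : Euc d := (F.linearProjOfIsCompl E hc.symm v : Euc d) with hwdef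
  have hu : u ∈ E := SetLike.coe_mem _
  have hw : w ∈ F := SetLike.coe_mem _
  have huvw : u + w = v := Submodule.projection_add_projection_eq_self hc v
  have hwzero : w = 0 := by
    by_contra hw0
    have hv0 : v ≠ 0 := by
      rintro rfl
      apply hw0
      rw [hwdef]
      simp
    set a : Euc d := (E'.linearProjOfIsCompl F' hc' w : Euc d) with hadef
    set b : Euc d := (F'.linearProjOfIsCompl E' hc'.symm w : Euc d) with hbdef
    have ha : a ∈ E' := SetLike.coe_mem _
    have hb : b ∈ F' := SetLike.coe_mem _
    have habw : a + b = w := Submodule.projection_add_projection_eq_self hc' w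
    have hb0 : b ≠ 0 := by
      intro hb0
      have hmem : w ∈ E' ⊓ F := ⟨by rw [← habw, hb0, add_zero]; exact ha, hw⟩
      rw [hd1] at hmem
      exact hw0 hmem
    have hq_w : 0 < ‖w‖ := norm_pos_iff.mpr hw0
    have hq_b : 0 < ‖b‖ := norm_pos_iff.mpr hb0
    have hq_v : 0 < ‖v‖ := norm_pos_iff.mpr hv0
    set r : ℝ := max lam lam' with hrdef
    have hr1 : r < 1 := max_lt hlam1 hlam1'
    have hr0 : 0 < r := lt_max_of_lt_left hlam0
    set ε : ℝ := min (‖w‖ / (2 * C * (‖u‖ + 1)))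
        (min (‖b‖ / (2 * C' * (‖a‖ + 1))) (‖b‖ / (4 * C' * (‖v‖ + 1)))) with hεdef
    have hε : 0 < ε := by
      apply lt_min (by positivity)
      exact lt_min (by positivity) (by positivity)
    obtain ⟨n, hn⟩ := exists_pow_lt_of_lt_one hε hr1
    have hlamn : lam ^ n ≤ r ^ n := pow_le_pow_left₀ hlam0.le (le_max_left _ _) n
    have hlamn' : lam' ^ n ≤ r ^ n := pow_le_pow_left₀ hlam0'.le (le_max_right _ _) n
    have hrn0 : 0 < r ^ n := pow_pos hr0 n
    -- the three smallness conditions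
    have hε1 : C * lam ^ n * ‖u‖ ≤ ‖w‖ / 2 := by
      have h := (lt_div_iff₀ (by positivity : (0:ℝ) < 2 * C * (‖u‖ + 1))).mp
        (lt_of_lt_of_le hn (min_le_left _ _))
      nlinarith [norm_nonneg u, pow_nonneg hlam0.le n,
        mul_le_mul_of_nonneg_right hlamn (by positivity : (0:ℝ) ≤ C * ‖u‖),
        mul_nonneg (mul_nonneg hC.le hrn0.le) (norm_nonneg u), mul_nonneg hC.le hrn0.le]
    have hε2 : C' * lam' ^ n * ‖a‖ ≤ ‖b‖ / 2 := by
      have h := (lt_div_iff₀ (by positivity : (0:ℝ) < 2 * C' * (‖a‖ + 1))).mp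
        (lt_of_lt_of_le hn ((min_le_right _ _).trans (min_le_left _ _)))
      nlinarith [norm_nonneg a, pow_nonneg hlam0'.le n,
        mul_le_mul_of_nonneg_right hlamn' (by positivity : (0:ℝ) ≤ C' * ‖a‖),
        mul_nonneg (mul_nonneg hC'.le hrn0.le) (norm_nonneg a), mul_nonneg hC'.le hrn0.le]
    have hε3 : 4 * C' * lam' ^ n * ‖v‖ < ‖b‖ := by
      have h := (lt_div_iff₀ (by positivity : (0:ℝ) < 4 * C' * (‖v‖ + 1))).mp
        (lt_of_lt_of_le hn ((min_le_right _ _).trans (min_le_right _ _)))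
      nlinarith [pow_nonneg hlam0'.le n,
        mul_le_mul_of_nonneg_right hlamn' (by positivity : (0:ℝ) ≤ C' * ‖v‖),
        mul_nonneg (mul_nonneg hC'.le hrn0.le) (norm_nonneg v), mul_nonneg hC'.le hrn0.le]
    -- the estimates
    have h1 := hdom n u hu w hw hw0
    have h2 := hdom' n a ha b hb hb0
    have h3 := hdom' n v hvE' b hb hb0
    have h4 : ‖T n b‖ ≤ ‖T n w‖ + ‖T n a‖ := by
      have heq : T n b = T n w - T n a := by
        rw [← habw, map_add]; abel
      rw [heq]
      exact norm_sub_le (T n w) (T n a)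
    have h5 : ‖T n w‖ ≤ ‖T n u‖ + ‖T n v‖ := by
      have heq : T n w = T n v - T n u := by
        rw [← huvw, map_add]; abel
      rw [heq]
      have := norm_sub_le (T n v) (T n u)
      linarith
    have pw := hTn n w hw0
    have pv := hTn n v hv0
    have pb := hTn n b hb0
    -- Step A : ‖T n a‖ ≤ ‖T n w‖
    have hA : ‖T n a‖ ≤ ‖T n w‖ := by
      have c1 : ‖T n a‖ * ‖b‖ ≤ (‖b‖ / 2) * (‖T n w‖ + ‖T n a‖) := by
        calc ‖T n a‖ * ‖b‖ ≤ C' * lam' ^ n * (‖a‖ * ‖T n b‖) := h2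
          _ ≤ C' * lam' ^ n * (‖a‖ * (‖T n w‖ + ‖T n a‖)) := by gcongr
          _ = (C' * lam' ^ n * ‖a‖) * (‖T n w‖ + ‖T n a‖) := by ring
          _ ≤ (‖b‖ / 2) * (‖T n w‖ + ‖T n a‖) := by
              apply mul_le_mul_of_nonneg_right hε2
              positivity
      nlinarith [c1, hq_b]
    have hTb : ‖T n b‖ ≤ 2 * ‖T n w‖ := by linarith
    -- Step B : ‖T n w‖ ≤ 2 ‖T n v‖
    have hB : ‖T n w‖ ≤ 2 * ‖T n v‖ := by
      have c2 : ‖T n u‖ * ‖w‖ ≤ (‖w‖ / 2) * ‖T n w‖ := by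
        calc ‖T n u‖ * ‖w‖ ≤ C * lam ^ n * (‖u‖ * ‖T n w‖) := h1
          _ = (C * lam ^ n * ‖u‖) * ‖T n w‖ := by ring
          _ ≤ (‖w‖ / 2) * ‖T n w‖ := by
              apply mul_le_mul_of_nonneg_right hε1
              positivity
      nlinarith [c2, mul_le_mul_of_nonneg_right h5 hq_w.le, hq_w,
        norm_nonneg (T n v)]
    -- Step C : contradiction
    have hfin : ‖b‖ ≤ 4 * C' * lam' ^ n * ‖v‖ := by
      have c3 : ‖T n v‖ * ‖b‖ ≤ ‖T n v‖ * (4 * C' * lam' ^ n * ‖v‖) := by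
        calc ‖T n v‖ * ‖b‖ ≤ C' * lam' ^ n * (‖v‖ * ‖T n b‖) := h3
          _ ≤ C' * lam' ^ n * (‖v‖ * (2 * ‖T n w‖)) := by gcongr
          _ ≤ C' * lam' ^ n * (‖v‖ * (2 * (2 * ‖T n v‖))) := by gcongr
          _ = ‖T n v‖ * (4 * C' * lam' ^ n * ‖v‖) := by ring
      exact le_of_mul_le_mul_left c3 pv
    linarith
  have : v = u := by rw [← huvw, hwzero, add_zero]
  rw [this]
  exact hu

/-- iterates stay in an invariant set -/
lemma iter_mem {h : Euc d → Euc d} {Λ : Set (Euc d)} (hm : ∀ x ∈ Λ, h x ∈ Λ) :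
    ∀ n : ℕ, ∀ x ∈ Λ, h^[n] x ∈ Λ := by
  intro n
  induction n with
  | zero => intro x hx; simpa using hx
  | succ n ih =>
    intro x hx
    rw [Function.iterate_succ_apply']
    exact hm _ (ih x hx)

lemma fderiv_iterate_succ {f : Euc d → Euc d} (hfd : Differentiable ℝ f) (n : ℕ) (x : Euc d) :
    fderiv ℝ (f^[n+1]) x = (fderiv ℝ f (f^[n] x)).comp (fderiv ℝ (f^[n]) x) := by
  rw [Function.iterate_succ']
  exact fderiv_comp x (hfd.differentiableAt) ((hfd.iterate n).differentiableAt)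

lemma fderiv_iter_leftinv {f g : Euc d → Euc d} (hfd : Differentiable ℝ f)
    (hgd : Differentiable ℝ g) (hgf : Function.LeftInverse g f) (n : ℕ) (x : Euc d) :
    (fderiv ℝ (g^[n]) (f^[n] x)).comp (fderiv ℝ (f^[n]) x) = ContinuousLinearMap.id ℝ (Euc d) := by
  have h1 : g^[n] ∘ f^[n] = id := (hgf.iterate n).comp_eq_id
  have h2 := fderiv_comp x ((hgd.iterate n).differentiableAt) ((hfd.iterate n).differentiableAt)
  rw [h1, fderiv_id] at h2
  exact h2.symm

lemma fderiv_iter_cancel {f g : Euc d → Euc d} (hfd : Differentiable ℝ f)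
    (hgd : Differentiable ℝ g) (hgf : Function.LeftInverse g f) (n : ℕ) (x : Euc d)
    (z : Euc d) : fderiv ℝ (g^[n]) (f^[n] x) (fderiv ℝ (f^[n]) x z) = z := by
  have := fderiv_iter_leftinv hfd hgd hgf n x
  rw [← ContinuousLinearMap.comp_apply, this]
  rfl

lemma inj_fderiv_iter {f g : Euc d → Euc d} (hfd : Differentiable ℝ f)
    (hgd : Differentiable ℝ g) (hgf : Function.LeftInverse g f) (n : ℕ) (x : Euc d) :
    Function.Injective (fderiv ℝ (f^[n]) x) := by
  intro a b hab
  rw [← fderiv_iter_cancel hfd hgd hgf n x a, ← fderiv_iter_cancel hfd hgd hgf n x b, hab]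

/-- invariance of a family of subspaces under iterated derivatives -/
lemma map_iterate {f : Euc d → Euc d} (hfd : Differentiable ℝ f) {Λ : Set (Euc d)}
    (hΛf : ∀ x ∈ Λ, f x ∈ Λ) {S : Euc d → Submodule ℝ (Euc d)}
    (hS : ∀ x ∈ Λ, (S x).map (fderiv ℝ f x : Euc d →ₗ[ℝ] Euc d) = S (f x)) (n : ℕ) :
    ∀ x ∈ Λ, (S x).map (fderiv ℝ (f^[n]) x : Euc d →ₗ[ℝ] Euc d) = S (f^[n] x) := by
  induction n with
  | zero =>
    intro x hx
    simp only [Function.iterate_zero, fderiv_id, id_eq]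
    exact map_id_clm _
  | succ n ih =>
    intro x hx
    have hxn : f^[n] x ∈ Λ := iter_mem hΛf n x hx
    rw [fderiv_iterate_succ hfd n x, map_comp_clm, ih x hx, hS _ hxn,
      ← Function.iterate_succ_apply' f n x]

/-- backward invariance -/
lemma map_iterate_inv {f g : Euc d → Euc d} (hfd : Differentiable ℝ f)
    (hgd : Differentiable ℝ g) (hgf : Function.LeftInverse g f)
    (hfg : Function.RightInverse g f) {Λ : Set (Euc d)}
    (hΛf : ∀ x ∈ Λ, f x ∈ Λ) (hΛg : ∀ x ∈ Λ, g x ∈ Λ) {S : Euc d → Submodule ℝ (Euc d)}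
    (hS : ∀ x ∈ Λ, (S x).map (fderiv ℝ f x : Euc d →ₗ[ℝ] Euc d) = S (f x)) (n : ℕ) :
    ∀ x ∈ Λ, (S x).map (fderiv ℝ (g^[n]) x : Euc d →ₗ[ℝ] Euc d) = S (g^[n] x) := by
  intro x hx
  set y : Euc d := g^[n] x with hydef
  have hy : y ∈ Λ := iter_mem hΛg n x hx
  have hfy : f^[n] y = x := hfg.iterate n x
  have h1 : (S y).map (fderiv ℝ (f^[n]) y : Euc d →ₗ[ℝ] Euc d) = S x := by
    rw [map_iterate hfd hΛf hS n y hy, hfy]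
  have hid : (fderiv ℝ (g^[n]) x).comp (fderiv ℝ (f^[n]) y) = ContinuousLinearMap.id ℝ (Euc d) := by
    have := fderiv_iter_leftinv hfd hgd hgf n y
    rwa [hfy] at this
  calc (S x).map (fderiv ℝ (g^[n]) x : Euc d →ₗ[ℝ] Euc d)
      = ((S y).map (fderiv ℝ (f^[n]) y : Euc d →ₗ[ℝ] Euc d)).map (fderiv ℝ (g^[n]) x : Euc d →ₗ[ℝ] Euc d) := by rw [h1]
    _ = (S y).map (((fderiv ℝ (g^[n]) x).comp (fderiv ℝ (f^[n]) y) : Euc d →L[ℝ] Euc d) : Euc d →ₗ[ℝ] Euc d) := (map_comp_clm _ _ _).symm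
    _ = S y := by rw [hid]; exact map_id_clm _

/-- multiplicative version of the domination inequality -/
lemma domIneq_mult {f : Euc d → Euc d} {Λ : Set (Euc d)} {E F : Euc d → Submodule ℝ (Euc d)}
    {C lam : ℝ} (hC : 0 < C) (hlam0 : 0 < lam) (hdom : DomIneq f Λ E F C lam) :
    ∀ x ∈ Λ, ∀ n : ℕ, ∀ u ∈ E x, ∀ v ∈ F x, v ≠ 0 →
      ‖fderiv ℝ (f^[n]) x u‖ * ‖v‖ ≤ C * lam ^ n * (‖u‖ * ‖fderiv ℝ (f^[n]) x v‖) := by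
  intro x hx n u hu v hv hv0
  rcases eq_or_ne u 0 with rfl | hu0
  · simp only [map_zero, norm_zero, zero_mul, mul_zero]
    positivity
  have h := hdom x hx n u hu hu0 v hv hv0
  have hnu : 0 < ‖u‖ := norm_pos_iff.mpr hu0
  have hnv : 0 < ‖v‖ := norm_pos_iff.mpr hv0
  rw [← mul_div_assoc, div_le_div_iff₀ hnu hnv] at h
  exact h.trans_eq (by ring)

/-- domination for the inverse map, with the roles of E and F exchanged -/
lemma gdom_of_dom {f g : Euc d → Euc d} (hfd : Differentiable ℝ f) (hgd : Differentiable ℝ g)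
    (hgf : Function.LeftInverse g f) (hfg : Function.RightInverse g f)
    {Λ : Set (Euc d)} (hΛf : ∀ x ∈ Λ, f x ∈ Λ) (hΛg : ∀ x ∈ Λ, g x ∈ Λ)
    {E F : Euc d → Submodule ℝ (Euc d)}
    (hEinv : ∀ x ∈ Λ, (E x).map (fderiv ℝ f x : Euc d →ₗ[ℝ] Euc d) = E (f x))
    (hFinv : ∀ x ∈ Λ, (F x).map (fderiv ℝ f x : Euc d →ₗ[ℝ] Euc d) = F (f x))
    {C lam : ℝ} (hC : 0 < C) (hlam0 : 0 < lam)
    (hdom : DomIneq f Λ E F C lam) :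
    ∀ x ∈ Λ, ∀ n : ℕ, ∀ u ∈ F x, ∀ v ∈ E x, v ≠ 0 →
      ‖fderiv ℝ (g^[n]) x u‖ * ‖v‖ ≤ C * lam ^ n * (‖u‖ * ‖fderiv ℝ (g^[n]) x v‖) := by
  intro x hx n u hu v hv hv0
  rcases eq_or_ne u 0 with rfl | hu0
  · simp only [map_zero, norm_zero, zero_mul, mul_zero]
    positivity
  set y : Euc d := g^[n] x with hydef
  have hy : y ∈ Λ := iter_mem hΛg n x hx
  have hfy : f^[n] y = x := hfg.iterate n x
  have hidT : ∀ z : Euc d, fderiv ℝ (f^[n]) y (fderiv ℝ (g^[n]) x z) = z := by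
    intro z
    have := fderiv_iter_cancel hgd hfd hfg n x z
    rwa [← hydef] at this
  have hmemu : fderiv ℝ (g^[n]) x u ∈ F y := by
    rw [← map_iterate_inv hfd hgd hgf hfg hΛf hΛg hFinv n x hx]
    exact Submodule.mem_map_of_mem hu
  have hmemv : fderiv ℝ (g^[n]) x v ∈ E y := by
    rw [← map_iterate_inv hfd hgd hgf hfg hΛf hΛg hEinv n x hx]
    exact Submodule.mem_map_of_mem hv
  have hu0' : fderiv ℝ (g^[n]) x u ≠ 0 := by
    intro h
    apply hu0
    rw [← hidT u, h, map_zero]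
  have key := domIneq_mult hC hlam0 hdom y hy n (fderiv ℝ (g^[n]) x v) hmemv
    (fderiv ℝ (g^[n]) x u) hmemu hu0'
  rw [hidT u, hidT v] at key
  nlinarith [key]

end DSUnique

/-- Uniqueness of a dominated splitting of given index
(continuity not assumed). -/
theorem dominated_splitting_unique
    {d : ℕ} (hd : 1 ≤ d) (f : Euc d → Euc d) (hf : IsC1Diffeo f)
    (Λ : Set (Euc d)) (hΛ : IsCompact Λ) (hinv : f '' Λ = Λ)
    (E F E' F' : Euc d → Submodule ℝ (Euc d)) (i : ℕ)
    (hcompl : ∀ x ∈ Λ, IsCompl (E x) (F x))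
    (hcompl' : ∀ x ∈ Λ, IsCompl (E' x) (F' x))
    (hEinv : ∀ x ∈ Λ, (E x).map (fderiv ℝ f x : Euc d →ₗ[ℝ] Euc d) = E (f x))
    (hFinv : ∀ x ∈ Λ, (F x).map (fderiv ℝ f x : Euc d →ₗ[ℝ] Euc d) = F (f x))
    (hEinv' : ∀ x ∈ Λ, (E' x).map (fderiv ℝ f x : Euc d →ₗ[ℝ] Euc d) = E' (f x))
    (hFinv' : ∀ x ∈ Λ, (F' x).map (fderiv ℝ f x : Euc d →ₗ[ℝ] Euc d) = F' (f x))
    (C lam : ℝ) (hC : 0 < C) (hlam0 : 0 < lam) (hlam1 : lam < 1)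
    (C' lam' : ℝ) (hC' : 0 < C') (hlam0' : 0 < lam') (hlam1' : lam' < 1)
    (hdom : DomIneq f Λ E F C lam) (hdom' : DomIneq f Λ E' F' C' lam')
    (hdim : ∀ x ∈ Λ, Module.finrank ℝ (E x) = i)
    (hdim' : ∀ x ∈ Λ, Module.finrank ℝ (E' x) = i) :
    ∀ x ∈ Λ, E x = E' x ∧ F x = F' x := by
  classical
  obtain ⟨hbij, hfC1, g, hgC1, hgf, hfg⟩ := hf
  have hfd : Differentiable ℝ f := hfC1.differentiable one_ne_zero
  have hgd : Differentiable ℝ g := hgC1.differentiable one_ne_zero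
  have hΛf : ∀ x ∈ Λ, f x ∈ Λ := fun x hx => hinv ▸ mem_image_of_mem f hx
  have hΛg : ∀ x ∈ Λ, g x ∈ Λ := by
    intro x hx
    have hx' : x ∈ f '' Λ := hinv.symm ▸ hx
    obtain ⟨y, hy, rfl⟩ := hx'
    rwa [hgf y]
  intro x hx
  -- forward multiplicative dominations at x
  have hdm := DSUnique.domIneq_mult hC hlam0 hdom x hx
  have hdm' := DSUnique.domIneq_mult hC' hlam0' hdom' x hx
  have hinjf := DSUnique.inj_fderiv_iter hfd hgd hgf
  have hinjg := DSUnique.inj_fderiv_iter hgd hfd hfg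
  -- E equality
  have hE1 : E' x ≤ E x :=
    DSUnique.key_le (fun n => fderiv ℝ (f^[n]) x) (fun n => hinjf n x)
      (hcompl x hx) (hcompl' x hx) (by rw [hdim x hx, hdim' x hx])
      hC hlam0 hlam1 hC' hlam0' hlam1'
      (fun n u hu v hv hv0 => hdm n u hu v hv hv0)
      (fun n u hu v hv hv0 => hdm' n u hu v hv hv0)
  have hE2 : E x ≤ E' x :=
    DSUnique.key_le (fun n => fderiv ℝ (f^[n]) x) (fun n => hinjf n x)
      (hcompl' x hx) (hcompl x hx) (by rw [hdim x hx, hdim' x hx])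
      hC' hlam0' hlam1' hC hlam0 hlam1
      (fun n u hu v hv hv0 => hdm' n u hu v hv hv0)
      (fun n u hu v hv hv0 => hdm n u hu v hv hv0)
  -- F equality, via the inverse map
  have hgdom := DSUnique.gdom_of_dom hfd hgd hgf hfg hΛf hΛg hEinv hFinv hC hlam0 hdom x hx
  have hgdom' := DSUnique.gdom_of_dom hfd hgd hgf hfg hΛf hΛg hEinv' hFinv' hC' hlam0' hdom' x hx
  have hrkF : Module.finrank ℝ (F x) = Module.finrank ℝ (F' x) := by
    have h1 := Submodule.finrank_add_eq_of_isCompl (hcompl x hx)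
    have h2 := Submodule.finrank_add_eq_of_isCompl (hcompl' x hx)
    have h3 := hdim x hx
    have h4 := hdim' x hx
    omega
  have hF1 : F' x ≤ F x :=
    DSUnique.key_le (fun n => fderiv ℝ (g^[n]) x) (fun n => hinjg n x)
      (hcompl x hx).symm (hcompl' x hx).symm hrkF
      hC hlam0 hlam1 hC' hlam0' hlam1'
      (fun n u hu v hv hv0 => hgdom n u hu v hv hv0)
      (fun n u hu v hv hv0 => hgdom' n u hu v hv hv0)
  have hF2 : F x ≤ F' x :=
    DSUnique.key_le (fun n => fderiv ℝ (g^[n]) x) (fun n => hinjg n x)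
      (hcompl' x hx).symm (hcompl x hx).symm hrkF.symm
      hC' hlam0' hlam1' hC hlam0 hlam1
      (fun n u hu v hv hv0 => hgdom' n u hu v hv hv0)
      (fun n u hu v hv hv0 => hgdom n u hu v hv hv0)
  exact ⟨le_antisymm hE2 hE1, le_antisymm hF2 hF1⟩
end
end

section
/- Let Λ ⊆ ℝ^d be compact with f(Λ) = Λ, and let E, F assign to each x ∈ Λ linear subspaces with ℝ^d = E(x) ⊕ F(x), Df-invariant (Df_x(E(x)) = E(f(x)), Df_x(F(x)) = F(f(x))). Then the following two conditions are equivalent: (a) there exist C > 0 and λ ∈ (0,1) such that for every x ∈ Λ, every n ≥ 0 and all nonzero u ∈ E(x), v ∈ F(x), ‖D(f^n)_x u‖/‖u‖ ≤ C·λ^n·‖D(f^n)_x v‖/‖v‖; (b) there exists a positive integer m such that for every x ∈ Λ and all nonzero u ∈ E(x), v ∈ F(x), ‖D(f^m)_x u‖/‖u‖ ≤ (1/2)·‖D(f^m)_x v‖/‖v‖. -/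
open Set

noncomputable section

/-- Iterates of a C¹ map are C¹. -/
lemma contDiff_iterate' {d : ℕ} {f : Euc d → Euc d} (hf : ContDiff ℝ 1 f) (n : ℕ) :
    ContDiff ℝ 1 (f^[n]) := by
  induction n with
  | zero => simpa using contDiff_id
  | succ n ih => rw [Function.iterate_succ]; exact ih.comp hf

/-- Chain rule for iterates. -/
lemma fderiv_iterate_add' {d : ℕ} {f : Euc d → Euc d} (hf : ContDiff ℝ 1 f) (a b : ℕ)
    (x : Euc d) :
    fderiv ℝ (f^[a + b]) x =
      (fderiv ℝ (f^[a]) (f^[b] x)).comp (fderiv ℝ (f^[b]) x) := by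
  rw [Function.iterate_add]
  exact fderiv_comp x ((contDiff_iterate' hf a).differentiable one_ne_zero _)
    ((contDiff_iterate' hf b).differentiable one_ne_zero _)

/-- The domination inequality with constants (C, λ) is equivalent to
one-step domination by 1/2 at some fixed time m. -/
theorem domination_iff_uniform_time
    {d : ℕ} (hd : 1 ≤ d) (f : Euc d → Euc d) (hf : IsC1Diffeo f)
    (Λ : Set (Euc d)) (hΛ : IsCompact Λ) (hinv : f '' Λ = Λ)
    (E F : Euc d → Submodule ℝ (Euc d))
    (hcompl : ∀ x ∈ Λ, IsCompl (E x) (F x))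
    (hEinv : ∀ x ∈ Λ, (E x).map (fderiv ℝ f x : Euc d →ₗ[ℝ] Euc d) = E (f x))
    (hFinv : ∀ x ∈ Λ, (F x).map (fderiv ℝ f x : Euc d →ₗ[ℝ] Euc d) = F (f x)) :
    (∃ C lam : ℝ, 0 < C ∧ 0 < lam ∧ lam < 1 ∧ DomIneq f Λ E F C lam) ↔
    (∃ m : ℕ, 0 < m ∧ ∀ x ∈ Λ, ∀ u ∈ E x, u ≠ 0 → ∀ v ∈ F x, v ≠ 0 →
      ‖fderiv ℝ (f^[m]) x u‖ / ‖u‖ ≤ (1/2) * (‖fderiv ℝ (f^[m]) x v‖ / ‖v‖)) := by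
  obtain ⟨hbij, hcf, g, hcg, hgf, hfg⟩ := hf
  constructor
  · -- forward direction: easy, choose m with C * lam ^ m ≤ 1/2
    rintro ⟨C, lam, hC, hlam0, hlam1, hD⟩
    obtain ⟨n, hn⟩ := exists_pow_lt_of_lt_one (show (0:ℝ) < 1/(2*C) by positivity) hlam1
    refine ⟨n + 1, Nat.succ_pos n, ?_⟩
    intro x hx u hu hune v hv hvne
    refine (hD x hx (n+1) u hu hune v hv hvne).trans ?_
    have hR : 0 ≤ ‖fderiv ℝ (f^[n+1]) x v‖ / ‖v‖ := by positivity
    refine mul_le_mul_of_nonneg_right ?_ hR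
    have h1 : lam ^ (n+1) ≤ lam ^ n :=
      pow_le_pow_of_le_one hlam0.le hlam1.le (Nat.le_succ n)
    have h2 : C * lam ^ n ≤ C * (1/(2*C)) :=
      mul_le_mul_of_nonneg_left (le_trans (le_of_eq rfl) hn.le) hC.le
    have h3 : C * (1/(2*C)) = 1/2 := by field_simp
    calc C * lam ^ (n+1) ≤ C * lam ^ n := by
          exact mul_le_mul_of_nonneg_left h1 hC.le
      _ ≤ C * (1/(2*C)) := h2
      _ = 1/2 := h3
  · -- backward direction
    rintro ⟨m, hm, hdom⟩
    rcases Λ.eq_empty_or_nonempty with rfl | ⟨x₀, hx₀⟩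
    · exact ⟨1, 1/2, one_pos, by norm_num, by norm_num, fun x hx => absurd hx (by simp)⟩
    -- basic setup
    have hdf : Differentiable ℝ f := hcf.differentiable one_ne_zero
    have hΛf : ∀ x ∈ Λ, f x ∈ Λ := fun x hx => hinv ▸ mem_image_of_mem f hx
    have hΛiter : ∀ n, ∀ x ∈ Λ, f^[n] x ∈ Λ := by
      intro n
      induction n with
      | zero => intro x hx; simpa using hx
      | succ n ih =>
        intro x hx
        rw [Function.iterate_succ_apply']
        exact hΛf _ (ih x hx)
    -- chain-rule single step
    have keyf : ∀ n (x : Euc d), fderiv ℝ (f^[n+1]) x =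
        (fderiv ℝ f (f^[n] x)).comp (fderiv ℝ (f^[n]) x) := by
      intro n x
      have h := fderiv_iterate_add' hcf 1 n x
      rw [Nat.add_comm 1 n] at h
      simpa [Function.iterate_one] using h
    have keyg : ∀ n (x : Euc d), fderiv ℝ (g^[n+1]) x =
        (fderiv ℝ g (g^[n] x)).comp (fderiv ℝ (g^[n]) x) := by
      intro n x
      have h := fderiv_iterate_add' hcg 1 n x
      rw [Nat.add_comm 1 n] at h
      simpa [Function.iterate_one] using h
    -- invariance of E, F under iterated derivatives (membership form)
    have hΛg : ∀ x ∈ Λ, g x ∈ Λ := by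
      intro x hx
      rw [← hinv] at hx
      obtain ⟨z, hz, rfl⟩ := hx
      rwa [hgf z]
    have hEm : ∀ n, ∀ x ∈ Λ, ∀ u ∈ E x, fderiv ℝ (f^[n]) x u ∈ E (f^[n] x) := by
      intro n
      induction n with
      | zero => intro x hx u hu; simpa [fderiv_id] using hu
      | succ n ih =>
        intro x hx u hu
        rw [keyf n x]
        simp only [ContinuousLinearMap.coe_comp', Function.comp_apply]
        have h1 := ih x hx u hu
        have h2 : fderiv ℝ f (f^[n] x) (fderiv ℝ (f^[n]) x u) ∈
            (E (f^[n] x)).map (fderiv ℝ f (f^[n] x) : Euc d →ₗ[ℝ] Euc d) := Submodule.mem_map_of_mem h1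
        rw [hEinv _ (hΛiter n x hx)] at h2
        rw [Function.iterate_succ_apply']
        exact h2
    have hFm : ∀ n, ∀ x ∈ Λ, ∀ v ∈ F x, fderiv ℝ (f^[n]) x v ∈ F (f^[n] x) := by
      intro n
      induction n with
      | zero => intro x hx v hv; simpa [fderiv_id] using hv
      | succ n ih =>
        intro x hx v hv
        rw [keyf n x]
        simp only [ContinuousLinearMap.coe_comp', Function.comp_apply]
        have h1 := ih x hx v hv
        have h2 : fderiv ℝ f (f^[n] x) (fderiv ℝ (f^[n]) x v) ∈
            (F (f^[n] x)).map (fderiv ℝ f (f^[n] x) : Euc d →ₗ[ℝ] Euc d) := Submodule.mem_map_of_mem h1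
        rw [hFinv _ (hΛiter n x hx)] at h2
        rw [Function.iterate_succ_apply']
        exact h2
    -- compactness bounds on the derivative norms
    obtain ⟨xf, hxf, hxfmax⟩ := hΛ.exists_isMaxOn ⟨x₀, hx₀⟩
      ((hcf.continuous_fderiv one_ne_zero).norm.continuousOn)
    obtain ⟨xg, hxg, hxgmax⟩ := hΛ.exists_isMaxOn ⟨x₀, hx₀⟩
      ((hcg.continuous_fderiv one_ne_zero).norm.continuousOn)
    set Mf : ℝ := max 1 ‖fderiv ℝ f xf‖ with hMfdef
    set Mg : ℝ := max 1 ‖fderiv ℝ g xg‖ with hMgdef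
    have hMf1 : (1:ℝ) ≤ Mf := le_max_left _ _
    have hMg1 : (1:ℝ) ≤ Mg := le_max_left _ _
    have hMf : ∀ x ∈ Λ, ‖fderiv ℝ f x‖ ≤ Mf := fun x hx =>
      le_trans (hxfmax hx) (le_max_right _ _)
    have hMg : ∀ x ∈ Λ, ‖fderiv ℝ g x‖ ≤ Mg := fun x hx =>
      le_trans (hxgmax hx) (le_max_right _ _)
    -- growth bound for derivatives of iterates
    have lemA : ∀ r, ∀ x ∈ Λ, ∀ w : Euc d, ‖fderiv ℝ (f^[r]) x w‖ ≤ Mf ^ r * ‖w‖ := by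
      intro r
      induction r with
      | zero => intro x hx w; simp [fderiv_id]
      | succ r ih =>
        intro x hx w
        rw [keyf r x]
        simp only [ContinuousLinearMap.coe_comp', Function.comp_apply]
        calc ‖fderiv ℝ f (f^[r] x) (fderiv ℝ (f^[r]) x w)‖
            ≤ ‖fderiv ℝ f (f^[r] x)‖ * ‖fderiv ℝ (f^[r]) x w‖ :=
              ContinuousLinearMap.le_opNorm _ _
          _ ≤ Mf * (Mf ^ r * ‖w‖) := by
              apply mul_le_mul (hMf _ (hΛiter r x hx)) (ih x hx w) (norm_nonneg _)
              linarith
          _ = Mf ^ (r+1) * ‖w‖ := by ring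
    have lemB : ∀ r, ∀ x ∈ Λ, ∀ w : Euc d, ‖fderiv ℝ (g^[r]) x w‖ ≤ Mg ^ r * ‖w‖ := by
      intro r
      induction r with
      | zero => intro x hx w; simp [fderiv_id]
      | succ r ih =>
        intro x hx w
        have hΛgiter : ∀ n, ∀ x ∈ Λ, g^[n] x ∈ Λ := by
          intro n
          induction n with
          | zero => intro x hx; simpa using hx
          | succ n ih2 =>
            intro x hx
            rw [Function.iterate_succ_apply']
            exact hΛg _ (ih2 x hx)
        rw [keyg r x]
        simp only [ContinuousLinearMap.coe_comp', Function.comp_apply]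
        calc ‖fderiv ℝ g (g^[r] x) (fderiv ℝ (g^[r]) x w)‖
            ≤ ‖fderiv ℝ g (g^[r] x)‖ * ‖fderiv ℝ (g^[r]) x w‖ :=
              ContinuousLinearMap.le_opNorm _ _
          _ ≤ Mg * (Mg ^ r * ‖w‖) := by
              apply mul_le_mul (hMg _ (hΛgiter r x hx)) (ih x hx w) (norm_nonneg _)
              linarith
          _ = Mg ^ (r+1) * ‖w‖ := by ring
    -- derivative of iterate of g inverts derivative of iterate of f
    have leminvert : ∀ r (x : Euc d) (w : Euc d),
        fderiv ℝ (g^[r]) (f^[r] x) (fderiv ℝ (f^[r]) x w) = w := by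
      intro r x w
      have hid : g^[r] ∘ f^[r] = id := funext (hgf.iterate r)
      have hcomp : fderiv ℝ (g^[r] ∘ f^[r]) x =
          (fderiv ℝ (g^[r]) (f^[r] x)).comp (fderiv ℝ (f^[r]) x) :=
        fderiv_comp x ((contDiff_iterate' hcg r).differentiable one_ne_zero _)
          ((contDiff_iterate' hcf r).differentiable one_ne_zero _)
      rw [hid, fderiv_id] at hcomp
      have := congrArg (fun (L : Euc d →L[ℝ] Euc d) => L w) hcomp
      simpa using this.symm
    -- lower bound for derivative of iterates
    have lemInv : ∀ r, ∀ x ∈ Λ, ∀ w : Euc d,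
        ‖w‖ ≤ Mg ^ r * ‖fderiv ℝ (f^[r]) x w‖ := by
      intro r x hx w
      have h := lemB r (f^[r] x) (hΛiter r x hx) (fderiv ℝ (f^[r]) x w)
      rwa [leminvert r x w] at h
    have hnz : ∀ r, ∀ x ∈ Λ, ∀ w : Euc d, w ≠ 0 → fderiv ℝ (f^[r]) x w ≠ 0 := by
      intro r x hx w hw h0
      have h := lemInv r x hx w
      rw [h0] at h
      simp at h
      exact hw h
    -- the k-step domination along multiples of m
    have step : ∀ k, ∀ x ∈ Λ, ∀ u ∈ E x, u ≠ 0 → ∀ v ∈ F x, v ≠ 0 →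
        ‖fderiv ℝ (f^[m * k]) x u‖ / ‖u‖ ≤
          (1/2:ℝ) ^ k * (‖fderiv ℝ (f^[m * k]) x v‖ / ‖v‖) := by
      intro k
      induction k with
      | zero =>
        intro x hx u hu hune v hv hvne
        simp only [Nat.mul_zero, Function.iterate_zero, fderiv_id, pow_zero, one_mul,
          ContinuousLinearMap.coe_id', id_eq]
        rw [div_self (norm_ne_zero_iff.2 hune), div_self (norm_ne_zero_iff.2 hvne)]
      | succ k ih =>
        intro x hx u hu hune v hv hvne
        have hmk : m * (k + 1) = m + m * k := by ring
        rw [hmk, fderiv_iterate_add' hcf m (m * k) x]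
        simp only [ContinuousLinearMap.coe_comp', Function.comp_apply]
        set x' := f^[m * k] x with hx'def
        set u' := fderiv ℝ (f^[m * k]) x u with hu'def
        set v' := fderiv ℝ (f^[m * k]) x v with hv'def
        have hx' : x' ∈ Λ := hΛiter _ x hx
        have hu' : u' ∈ E x' := hEm _ x hx u hu
        have hv' : v' ∈ F x' := hFm _ x hx v hv
        have hu'ne : u' ≠ 0 := hnz _ x hx u hune
        have hv'ne : v' ≠ 0 := hnz _ x hx v hvne
        have h1 := hdom x' hx' u' hu' hu'ne v' hv' hv'ne
        have h2 := ih x hx u hu hune v hv hvne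
        have hnn1 : (0:ℝ) ≤ ‖fderiv ℝ (f^[m]) x' u'‖ / ‖u'‖ := by positivity
        have hnn2 : (0:ℝ) ≤ ‖u'‖ / ‖u‖ := by positivity
        have hmul := mul_le_mul h1 h2 hnn2 (by positivity)
        have hcancel1 : ‖fderiv ℝ (f^[m]) x' u'‖ / ‖u'‖ * (‖u'‖ / ‖u‖) =
            ‖fderiv ℝ (f^[m]) x' u'‖ / ‖u‖ := by
          rw [div_mul_div_comm, mul_comm ‖u'‖ ‖u‖, mul_div_mul_right _ _
            (norm_ne_zero_iff.2 hu'ne)]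
        have hcancel2 : ‖fderiv ℝ (f^[m]) x' v'‖ / ‖v'‖ * (‖v'‖ / ‖v‖) =
            ‖fderiv ℝ (f^[m]) x' v'‖ / ‖v‖ := by
          rw [div_mul_div_comm, mul_comm ‖v'‖ ‖v‖, mul_div_mul_right _ _
            (norm_ne_zero_iff.2 hv'ne)]
        calc ‖fderiv ℝ (f^[m]) x' u'‖ / ‖u‖
            = ‖fderiv ℝ (f^[m]) x' u'‖ / ‖u'‖ * (‖u'‖ / ‖u‖) := hcancel1.symm
          _ ≤ (1/2 * (‖fderiv ℝ (f^[m]) x' v'‖ / ‖v'‖)) *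
              ((1/2:ℝ) ^ k * (‖v'‖ / ‖v‖)) := hmul
          _ = (1/2:ℝ) ^ (k+1) * (‖fderiv ℝ (f^[m]) x' v'‖ / ‖v'‖ * (‖v'‖ / ‖v‖)) := by
              ring
          _ = (1/2:ℝ) ^ (k+1) * (‖fderiv ℝ (f^[m]) x' v'‖ / ‖v‖) := by rw [hcancel2]
    -- define the constants
    have hmpos : (0:ℝ) < (m:ℝ) := by exact_mod_cast hm
    set lam : ℝ := (2:ℝ) ^ (-(1/(m:ℝ))) with hlamdef
    have hlam0 : 0 < lam := Real.rpow_pos_of_pos two_pos _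
    have hlam1 : lam < 1 := by
      apply Real.rpow_lt_one_of_one_lt_of_neg one_lt_two
      simp only [neg_neg, Left.neg_neg_iff]
      positivity
    refine ⟨2 * (Mf ^ m * Mg ^ m), lam, by positivity, hlam0, hlam1, ?_⟩
    intro x hx n u hu hune v hv hvne
    set k := n / m with hkdef
    set r := n % m with hrdef
    have hnkr : m * k + r = n := Nat.div_add_mod n m
    have hrm : r < m := Nat.mod_lt n hm
    -- decompose the derivative at time n
    have hdec : fderiv ℝ (f^[n]) x =
        (fderiv ℝ (f^[r]) (f^[m * k] x)).comp (fderiv ℝ (f^[m * k]) x) := by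
      rw [show n = r + m * k by omega]
      exact fderiv_iterate_add' hcf r (m * k) x
    set x' := f^[m * k] x with hx'def
    set u' := fderiv ℝ (f^[m * k]) x u with hu'def
    set v' := fderiv ℝ (f^[m * k]) x v with hv'def
    have hx' : x' ∈ Λ := hΛiter _ x hx
    have hUa : ‖fderiv ℝ (f^[n]) x u‖ ≤ Mf ^ m * ‖u'‖ := by
      rw [hdec]
      simp only [ContinuousLinearMap.coe_comp', Function.comp_apply]
      refine (lemA r x' hx' u').trans ?_
      apply mul_le_mul_of_nonneg_right _ (norm_nonneg _)
      exact pow_le_pow_right₀ (by linarith) hrm.le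
    have hVa : ‖v'‖ ≤ Mg ^ m * ‖fderiv ℝ (f^[n]) x v‖ := by
      have h := lemInv r x' hx' v'
      have heq : fderiv ℝ (f^[r]) x' v' = fderiv ℝ (f^[n]) x v := by
        rw [hdec]; simp only [ContinuousLinearMap.coe_comp', Function.comp_apply]; rfl
      rw [heq] at h
      refine h.trans ?_
      apply mul_le_mul_of_nonneg_right _ (norm_nonneg _)
      exact pow_le_pow_right₀ (by linarith) hrm.le
    have hstep := step k x hx u hu hune v hv hvne
    -- (1/2)^k ≤ 2 * lam ^ n
    have hhalf : (1/2:ℝ) ^ k ≤ 2 * lam ^ n := by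
      have e1 : lam ^ n = (2:ℝ) ^ ((-(1/(m:ℝ))) * n) := by
        rw [hlamdef, ← Real.rpow_natCast ((2:ℝ) ^ (-(1/(m:ℝ)))) n,
          ← Real.rpow_mul (by norm_num)]
      have e2 : (1/2:ℝ) ^ k = (2:ℝ) ^ (-(k:ℝ)) := by
        rw [Real.rpow_neg (by norm_num), Real.rpow_natCast]
        simp [one_div, inv_pow]
      have e3 : 2 * lam ^ n = (2:ℝ) ^ (1 + (-(1/(m:ℝ))) * n) := by
        rw [e1, Real.rpow_add two_pos, Real.rpow_one]
      rw [e2, e3]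
      apply Real.rpow_le_rpow_of_exponent_le one_le_two
      have hn1 : (n:ℝ) ≤ (k:ℝ) * m + m := by
        have : n ≤ m * k + m := by omega
        push_cast
        calc (n:ℝ) ≤ (m:ℝ) * k + m := by exact_mod_cast this
          _ = (k:ℝ) * m + m := by ring
      rw [neg_mul, ← sub_eq_add_neg, le_sub_iff_add_le]
      have : (1/(m:ℝ)) * n ≤ (k:ℝ) + 1 := by
        rw [one_div, inv_mul_le_iff₀ hmpos]
        linarith
      linarith
    -- put everything together
    have hune' : ‖u‖ ≠ 0 := norm_ne_zero_iff.2 hune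
    have hvne' : ‖v‖ ≠ 0 := norm_ne_zero_iff.2 hvne
    have hupos : (0:ℝ) < ‖u‖ := norm_pos_iff.2 hune
    have hvpos : (0:ℝ) < ‖v‖ := norm_pos_iff.2 hvne
    calc ‖fderiv ℝ (f^[n]) x u‖ / ‖u‖
        ≤ (Mf ^ m * ‖u'‖) / ‖u‖ := by gcongr
      _ = Mf ^ m * (‖u'‖ / ‖u‖) := by rw [mul_div_assoc]
      _ ≤ Mf ^ m * ((1/2:ℝ) ^ k * (‖v'‖ / ‖v‖)) := by
          apply mul_le_mul_of_nonneg_left hstep (by positivity)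
      _ ≤ Mf ^ m * ((2 * lam ^ n) * ((Mg ^ m * ‖fderiv ℝ (f^[n]) x v‖) / ‖v‖)) := by
          apply mul_le_mul_of_nonneg_left _ (by positivity)
          apply mul_le_mul hhalf _ (by positivity) (by positivity)
          gcongr
      _ = 2 * (Mf ^ m * Mg ^ m) * lam ^ n * (‖fderiv ℝ (f^[n]) x v‖ / ‖v‖) := by
          ring
end
end

section
/- Let Λ ⊆ ℝ^d be compact with f(Λ) = Λ and let (E, F) be a dominated splitting on Λ with constants C > 0, λ ∈ (0,1). Then there exist an adapted family of norms and λ' ∈ (0,1) with which the domination is seen in one step: a continuous map assigning to each x ∈ Λ an inner product ⟨·,·⟩_x on ℝ^d, whose induced norms |·|_x are uniformly equivalent to the Euclidean norm (there is c ≥ 1 with c⁻¹‖v‖ ≤ |v|_x ≤ c‖v‖ for all x ∈ Λ, v ∈ ℝ^d), such that for every x ∈ Λ and all nonzero u ∈ E(x), v ∈ F(x): |Df_x u|_{f(x)}/|u|_x ≤ λ'·|Df_x v|_{f(x)}/|v|_x. -/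
open Set

noncomputable section

section Aux
variable {d : ℕ}

/-- The bilinear form `(w, w') ↦ ⟪S w, w'⟫` as a continuous bilinear map. -/
def sqForm (S : Euc d →L[ℝ] Euc d) : Euc d →L[ℝ] (Euc d →L[ℝ] ℝ) :=
  LinearMap.mkContinuous
    { toFun := fun w => innerSL ℝ (S w)
      map_add' := by intro a b; ext w'; simp [inner_add_left]
      map_smul' := by intro c a; ext w'; simp [real_inner_smul_left] }
    ‖S‖ (fun w => by
      show ‖innerSL ℝ (S w)‖ ≤ ‖S‖ * ‖w‖
      rw [innerSL_apply_norm (𝕜 := ℝ) (S w)]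
      exact S.le_opNorm w)

lemma sqForm_apply (S : Euc d →L[ℝ] Euc d) (w w' : Euc d) :
    sqForm S w w' = inner ℝ (S w) w' := rfl

lemma norm_sqForm_le (S : Euc d →L[ℝ] Euc d) : ‖sqForm S‖ ≤ ‖S‖ :=
  LinearMap.mkContinuous_norm_le _ (norm_nonneg S) _

/-- `sqForm` as a continuous linear map. -/
def sqFormL : (Euc d →L[ℝ] Euc d) →L[ℝ] (Euc d →L[ℝ] (Euc d →L[ℝ] ℝ)) :=
  LinearMap.mkContinuous
    { toFun := sqForm
      map_add' := by
        intro S T; ext w w'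
        simp [sqForm_apply, inner_add_left, ContinuousLinearMap.add_apply]
      map_smul' := by
        intro c S; ext w w'
        simp [sqForm_apply, real_inner_smul_left, ContinuousLinearMap.smul_apply,
          Finset.mul_sum, mul_assoc] }
    1 (fun S => by rw [one_mul]; exact norm_sqForm_le S)

lemma continuous_sqForm : Continuous (sqForm (d := d)) := by
  have h : sqForm (d := d) = fun S => sqFormL S := rfl
  rw [h]; exact sqFormL.continuous

lemma tele_prod (ρ : ℕ → ℝ) (hpos : ∀ i, 0 < ρ i) (N K : ℕ) :
    ∏ k ∈ Finset.range N, (ρ (k + K) / ρ k) = ∏ i ∈ Finset.range K, (ρ (N + i) / ρ i) := by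
  rw [Finset.prod_div_distrib, Finset.prod_div_distrib]
  have h1 := Finset.prod_range_add ρ K N
  have h2 := Finset.prod_range_add ρ N K
  rw [Nat.add_comm K N] at h1
  have hKpos : (0:ℝ) < ∏ i ∈ Finset.range K, ρ i := Finset.prod_pos (fun i _ => hpos i)
  have hNpos : (0:ℝ) < ∏ i ∈ Finset.range N, ρ i := Finset.prod_pos (fun i _ => hpos i)
  have e0 : (∏ k ∈ Finset.range N, ρ (k + K)) = ∏ k ∈ Finset.range N, ρ (K + k) :=
    Finset.prod_congr rfl (fun i _ => by rw [Nat.add_comm])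
  have e1 : ∏ k ∈ Finset.range N, ρ (k + K)
      = (∏ i ∈ Finset.range (N + K), ρ i) / ∏ i ∈ Finset.range K, ρ i := by
    rw [e0, h1]; field_simp
  have e2 : ∏ i ∈ Finset.range K, ρ (N + i)
      = (∏ i ∈ Finset.range (N + K), ρ i) / ∏ i ∈ Finset.range N, ρ i := by
    rw [h2]; field_simp
  rw [e1, e2, div_div, div_div, mul_comm]

/-- Orthogonal projection contracts. -/
lemma projSub_norm_le (V : Submodule ℝ (Euc d)) (w : Euc d) : ‖projSub V w‖ ≤ ‖w‖ := by
  have h1 : ‖projSub V w‖ = ‖V.orthogonalProjectionOnto w‖ := rfl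
  rw [h1]
  calc ‖V.orthogonalProjectionOnto w‖ ≤ ‖(V.orthogonalProjectionOnto : Euc d →L[ℝ] V)‖ * ‖w‖ :=
        (V.orthogonalProjectionOnto).le_opNorm w
    _ ≤ 1 * ‖w‖ := by gcongr; exact V.orthogonalProjectionOnto_norm_le
    _ = ‖w‖ := one_mul _

lemma projSub_mem (V : Submodule ℝ (Euc d)) (w : Euc d) : projSub V w ∈ V :=
  (V.orthogonalProjectionOnto w).2

lemma projSub_fix (V : Submodule ℝ (Euc d)) (w : Euc d) (hw : w ∈ V) : projSub V w = w := by
  have : projSub V w = (V.starProjection w : Euc d) := rfl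
  rw [this, Submodule.starProjection_eq_self_iff.mpr hw]

lemma projSub_eq_self_of_norm (V : Submodule ℝ (Euc d)) (w : Euc d)
    (h : ‖projSub V w‖ = ‖w‖) : projSub V w = w := by
  have hmem := projSub_mem V w
  have hz : (inner ℝ (w - projSub V w) (projSub V w) : ℝ) = 0 :=
    Submodule.starProjection_inner_eq_zero (K := V) w _ hmem
  have hexp : ‖w‖^2 = ‖w - projSub V w‖^2 + ‖projSub V w‖^2 := by
    have : w = (w - projSub V w) + projSub V w := by abel
    nth_rewrite 1 [this]
    rw [norm_add_sq_real, hz]; ring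
  have : ‖w - projSub V w‖^2 = 0 := by rw [h] at hexp; nlinarith
  have : ‖w - projSub V w‖ = 0 := by nlinarith [norm_nonneg (w - projSub V w)]
  have := norm_eq_zero.mp this
  have : w = projSub V w := by linear_combination (norm := abel) this
  exact this.symm

end Aux

set_option maxHeartbeats 4000000 in
/-- Gourmelon: existence of an adapted family of inner products
in which the domination is seen in one step. -/
theorem exists_adapted_norms
    {d : ℕ} (hd : 1 ≤ d) (f : Euc d → Euc d) (hf : IsC1Diffeo f)
    (Λ : Set (Euc d)) (hΛ : IsCompact Λ) (hinv : f '' Λ = Λ)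
    (E F : Euc d → Submodule ℝ (Euc d))
    (C lam : ℝ) (hC : 0 < C) (hlam0 : 0 < lam) (hlam1 : lam < 1)
    (hds : IsDomSplitting f Λ E F C lam) :
    ∃ (B : Euc d → (Euc d →L[ℝ] Euc d →L[ℝ] ℝ)) (lam' : ℝ) (c : ℝ),
      0 < lam' ∧ lam' < 1 ∧ 1 ≤ c ∧
      -- continuity of the family of inner products on Λ
      ContinuousOn B Λ ∧
      -- each B x is a (symmetric, positive definite) inner product
      (∀ x ∈ Λ, ∀ u v : Euc d, B x u v = B x v u) ∧
      (∀ x ∈ Λ, ∀ v : Euc d, v ≠ 0 → 0 < B x v v) ∧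
      -- the induced norms are uniformly equivalent to the Euclidean norm
      (∀ x ∈ Λ, ∀ v : Euc d,
        c⁻¹ * ‖v‖ ≤ Real.sqrt (B x v v) ∧ Real.sqrt (B x v v) ≤ c * ‖v‖) ∧
      -- one-step domination in the adapted norms
      (∀ x ∈ Λ, ∀ u ∈ E x, u ≠ 0 → ∀ v ∈ F x, v ≠ 0 →
        Real.sqrt (B (f x) (fderiv ℝ f x u) (fderiv ℝ f x u)) / Real.sqrt (B x u u) ≤
        lam' * (Real.sqrt (B (f x) (fderiv ℝ f x v) (fderiv ℝ f x v)) / Real.sqrt (B x v v))) := by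

  classical
  obtain ⟨hbij, hcf, g, hcg, hgf, hfg⟩ := hf
  obtain ⟨hcompl, hE, hF, hQE, hQF, hdom⟩ := hds
  rcases Λ.eq_empty_or_nonempty with rfl | hne
  · refine ⟨fun _ => sqForm (1 : Euc d →L[ℝ] Euc d), 1/2, 1, by norm_num, by norm_num,
      le_refl 1, continuousOn_empty _, ?_, ?_, ?_, ?_⟩ <;>
    · intro x hx; exact absurd hx (notMem_empty x)
  -- ===== basic differentiability and chain rules =====
  have hdf : Differentiable ℝ f := hcf.differentiable one_ne_zero
  have hdg : Differentiable ℝ g := hcg.differentiable one_ne_zero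
  have hcfIter : ∀ n : ℕ, ContDiff ℝ 1 (f^[n]) := by
    intro n; induction n with
    | zero => simpa using contDiff_id
    | succ n ih => rw [Function.iterate_succ']; exact hcf.comp ih
  have hcgIter : ∀ n : ℕ, ContDiff ℝ 1 (g^[n]) := by
    intro n; induction n with
    | zero => simpa using contDiff_id
    | succ n ih => rw [Function.iterate_succ']; exact hcg.comp ih
  have hdfIter : ∀ n, Differentiable ℝ (f^[n]) := fun n => (hcfIter n).differentiable one_ne_zero
  have hdgIter : ∀ n, Differentiable ℝ (g^[n]) := fun n => (hcgIter n).differentiable one_ne_zero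
  have hchain : ∀ (φ ψ : Euc d → Euc d), Differentiable ℝ φ → Differentiable ℝ ψ →
      ∀ x : Euc d, fderiv ℝ (φ ∘ ψ) x = (fderiv ℝ φ (ψ x)).comp (fderiv ℝ ψ x) :=
    fun φ ψ hφ hψ x => fderiv_comp x (hφ _) (hψ _)
  have hρ0 : ∀ (x u : Euc d), fderiv ℝ (f^[0]) x u = u := by
    intro x u; rw [Function.iterate_zero, fderiv_id]; rfl
  have hρ0g : ∀ (x u : Euc d), fderiv ℝ (g^[0]) x u = u := by
    intro x u; rw [Function.iterate_zero, fderiv_id]; rfl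
  have hDsucc : ∀ (n : ℕ) (x w : Euc d),
      fderiv ℝ (f^[n]) (f x) (fderiv ℝ f x w) = fderiv ℝ (f^[n+1]) x w := by
    intro n x w
    have h1 : f^[n+1] = f^[n] ∘ f := Function.iterate_succ f n
    rw [h1, hchain _ _ (hdfIter n) hdf x]; rfl
  have hDsucc' : ∀ (n : ℕ) (x w : Euc d),
      fderiv ℝ f (f^[n] x) (fderiv ℝ (f^[n]) x w) = fderiv ℝ (f^[n+1]) x w := by
    intro n x w
    have h1 : f^[n+1] = f ∘ f^[n] := Function.iterate_succ' f n
    rw [h1, hchain _ _ hdf (hdfIter n) x]; rfl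
  have hDgsucc' : ∀ (n : ℕ) (x w : Euc d),
      fderiv ℝ g (g^[n] x) (fderiv ℝ (g^[n]) x w) = fderiv ℝ (g^[n+1]) x w := by
    intro n x w
    have h1 : g^[n+1] = g ∘ g^[n] := Function.iterate_succ' g n
    rw [h1, hchain _ _ hdg (hdgIter n) x]; rfl
  have hDadd : ∀ (m n : ℕ) (x w : Euc d),
      fderiv ℝ (f^[m]) (f^[n] x) (fderiv ℝ (f^[n]) x w) = fderiv ℝ (f^[m+n]) x w := by
    intro m n x w
    have h1 : f^[m+n] = f^[m] ∘ f^[n] := Function.iterate_add f m n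
    rw [h1, hchain _ _ (hdfIter m) (hdfIter n) x]; rfl
  have hDgDf : ∀ (x w : Euc d), fderiv ℝ g (f x) (fderiv ℝ f x w) = w := by
    intro x w
    have h1 := hchain g f hdg hdf x
    have h2 : g ∘ f = id := funext hgf
    rw [h2, fderiv_id] at h1
    have h3 := congrArg (fun (T : Euc d →L[ℝ] Euc d) => T w) h1
    simpa using h3.symm
  have hDfDg : ∀ (y w : Euc d), fderiv ℝ f (g y) (fderiv ℝ g y w) = w := by
    intro y w
    have h1 := hchain f g hdf hdg y
    have h2 : f ∘ g = id := funext hfg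
    rw [h2, fderiv_id] at h1
    have h3 := congrArg (fun (T : Euc d →L[ℝ] Euc d) => T w) h1
    simpa using h3.symm
  have hDgsucc : ∀ (k : ℕ) (x w : Euc d),
      fderiv ℝ (g^[k+1]) (f x) (fderiv ℝ f x w) = fderiv ℝ (g^[k]) x w := by
    intro k x w
    have h1 : g^[k+1] ∘ f = g^[k] := by
      funext z
      rw [Function.comp_apply, Function.iterate_succ_apply, hgf z]
    have h2 := hchain (g^[k+1]) f (hdgIter (k+1)) hdf x
    rw [h1] at h2
    have h3 := congrArg (fun (T : Euc d →L[ℝ] Euc d) => T w) h2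
    simpa using h3.symm
  have hfgIter : ∀ (n : ℕ) (z : Euc d), f^[n] (g^[n] z) = z := by
    intro n; induction n with
    | zero => intro z; simp
    | succ n ih =>
        intro z
        rw [Function.iterate_succ_apply' g, Function.iterate_succ_apply f, hfg _]
        exact ih z
  have hfg_le : ∀ (i n : ℕ), i ≤ n → ∀ z : Euc d, f^[i] (g^[n] z) = g^[n-i] z := by
    intro i n h z
    have h1 : g^[n] z = g^[i] (g^[n-i] z) := by
      rw [← Function.iterate_add_apply, Nat.add_sub_cancel' h]
    rw [h1, hfgIter i _]
  -- ===== Λ dynamics =====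
  have hmapsf : ∀ x ∈ Λ, f x ∈ Λ := fun x hx => by
    rw [← hinv]; exact mem_image_of_mem f hx
  have hmapsg : ∀ x ∈ Λ, g x ∈ Λ := by
    intro x hx
    rw [← hinv] at hx
    obtain ⟨z, hz, rfl⟩ := hx
    rwa [hgf z]
  have hmapsfI : ∀ (n : ℕ), ∀ x ∈ Λ, f^[n] x ∈ Λ := by
    intro n; induction n with
    | zero => intro x hx; simpa using hx
    | succ n ih =>
        intro x hx; rw [Function.iterate_succ_apply']; exact hmapsf _ (ih x hx)
  have hmapsgI : ∀ (n : ℕ), ∀ x ∈ Λ, g^[n] x ∈ Λ := by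
    intro n; induction n with
    | zero => intro x hx; simpa using hx
    | succ n ih =>
        intro x hx; rw [Function.iterate_succ_apply']; exact hmapsg _ (ih x hx)
  -- ===== invariance =====
  have hEmem : ∀ x ∈ Λ, ∀ u ∈ E x, fderiv ℝ f x u ∈ E (f x) := by
    intro x hx u hu; rw [← hE x hx]; exact Submodule.mem_map_of_mem hu
  have hFmem : ∀ x ∈ Λ, ∀ v ∈ F x, fderiv ℝ f x v ∈ F (f x) := by
    intro x hx v hv; rw [← hF x hx]; exact Submodule.mem_map_of_mem hv
  have hFmemg : ∀ x ∈ Λ, ∀ v ∈ F x, fderiv ℝ g x v ∈ F (g x) := by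
    intro x hx v hv
    have hgx : g x ∈ Λ := hmapsg x hx
    have h1 : (F (g x)).map (fderiv ℝ f (g x) : Euc d →ₗ[ℝ] Euc d) = F (f (g x)) := hF _ hgx
    rw [hfg x] at h1
    rw [← h1] at hv
    obtain ⟨w, hw, hwv⟩ := hv
    have h2 : fderiv ℝ g x (fderiv ℝ f (g x) w) = w := by
      have h3 := hDgDf (g x) w
      rwa [hfg x] at h3
    rw [← hwv, ContinuousLinearMap.coe_coe, h2]; exact hw
  have hEmemI : ∀ (n : ℕ), ∀ x ∈ Λ, ∀ u ∈ E x, fderiv ℝ (f^[n]) x u ∈ E (f^[n] x) := by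
    intro n; induction n with
    | zero => intro x hx u hu; rw [Function.iterate_zero]; simpa [hρ0 x u] using hu
    | succ n ih =>
        intro x hx u hu
        rw [Function.iterate_succ_apply', ← hDsucc' n x u]
        exact hEmem _ (hmapsfI n x hx) _ (ih x hx u hu)
  have hFmemI : ∀ (n : ℕ), ∀ x ∈ Λ, ∀ v ∈ F x, fderiv ℝ (f^[n]) x v ∈ F (f^[n] x) := by
    intro n; induction n with
    | zero => intro x hx v hv; rw [Function.iterate_zero]; simpa [hρ0 x v] using hv
    | succ n ih =>
        intro x hx v hv
        rw [Function.iterate_succ_apply', ← hDsucc' n x v]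
        exact hFmem _ (hmapsfI n x hx) _ (ih x hx v hv)
  have hFmemgI : ∀ (n : ℕ), ∀ x ∈ Λ, ∀ v ∈ F x, fderiv ℝ (g^[n]) x v ∈ F (g^[n] x) := by
    intro n; induction n with
    | zero => intro x hx v hv; rw [Function.iterate_zero]; simpa [hρ0g x v] using hv
    | succ n ih =>
        intro x hx v hv
        rw [Function.iterate_succ_apply', ← hDgsucc' n x v]
        exact hFmemg _ (hmapsgI n x hx) _ (ih x hx v hv)
  -- ===== constants =====
  obtain ⟨M₀, hM₀⟩ := hΛ.exists_bound_of_continuousOn ((hcf.continuous_fderiv one_ne_zero).continuousOn)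
  obtain ⟨G₀, hG₀⟩ := hΛ.exists_bound_of_continuousOn ((hcg.continuous_fderiv one_ne_zero).continuousOn)
  set Mb : ℝ := max M₀ 1 with hMbdef
  set Gb : ℝ := max G₀ 1 with hGbdef
  have hMb1 : (1:ℝ) ≤ Mb := le_max_right _ _
  have hGb1 : (1:ℝ) ≤ Gb := le_max_right _ _
  have hMb0 : (0:ℝ) < Mb := lt_of_lt_of_le one_pos hMb1
  have hGb0 : (0:ℝ) < Gb := lt_of_lt_of_le one_pos hGb1
  have hDfle : ∀ x ∈ Λ, ‖fderiv ℝ f x‖ ≤ Mb := fun x hx => (hM₀ x hx).trans (le_max_left _ _)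
  have hDgle : ∀ x ∈ Λ, ‖fderiv ℝ g x‖ ≤ Gb := fun x hx => (hG₀ x hx).trans (le_max_left _ _)
  set mc : ℝ := Gb⁻¹ with hmdef
  have hm0 : 0 < mc := inv_pos.mpr hGb0
  set C' : ℝ := max C 1 with hC'def
  have hC'1 : 1 ≤ C' := le_max_right _ _
  have hC'0 : 0 < C' := lt_of_lt_of_le one_pos hC'1
  set ω : ℝ := (1 + lam)/2 with hωdef
  have hω1 : ω < 1 := by rw [hωdef]; linarith
  have hωpos : 0 < ω := by rw [hωdef]; linarith
  set t : ℝ := lam * ω with htdef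
  have ht0 : 0 < t := mul_pos hlam0 hωpos
  have htω : t < ω := by
    rw [htdef]; nlinarith
  set σt : ℝ := (2*t + ω)/3 with hσtdef
  set σ : ℝ := (t + 2*ω)/3 with hσdef
  have htσt : t < σt := by rw [hσtdef]; linarith
  have hσtσ : σt < σ := by rw [hσtdef, hσdef]; linarith
  have hσω : σ < ω := by rw [hσdef]; linarith
  have hσt0 : 0 < σt := lt_trans ht0 htσt
  have hσ0 : 0 < σ := lt_trans hσt0 hσtσ
  have hσ1 : σ < 1 := lt_trans hσω hω1
  set lam' : ℝ := σ / ω with hlam'def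
  have hlam'0 : 0 < lam' := div_pos hσ0 hωpos
  have hlam'1 : lam' < 1 := (div_lt_one hωpos).mpr hσω
  have hCC' : C ≤ C' := le_max_left _ _
  clear_value Mb Gb mc C' ω t σt σ lam'
  -- ===== choice of K and N =====
  have h1σ : 1 < σ/σt := (one_lt_div hσt0).mpr hσtσ
  obtain ⟨K₁, hK₁⟩ := pow_unbounded_of_one_lt (Mb * Gb) h1σ
  have htσt1 : t/σt < 1 := (div_lt_one hσt0).mpr htσt
  have htσt0 : (0:ℝ) ≤ t/σt := le_of_lt (div_pos ht0 hσt0)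
  obtain ⟨K₂, hK₂⟩ := exists_pow_lt_of_lt_one (show (0:ℝ) < (C' * (Mb*Gb))⁻¹ by positivity) htσt1
  set K : ℕ := max (max K₁ K₂) 1 with hKdef
  have hK1 : 1 ≤ K := le_max_right _ _
  have hKne : K ≠ 0 := by omega
  have hKa : Mb * Gb ≤ (σ/σt)^K := by
    calc Mb * Gb ≤ (σ/σt)^K₁ := hK₁.le
      _ ≤ (σ/σt)^K := pow_le_pow_right₀ (le_of_lt h1σ)
          (le_trans (le_max_left _ _) (le_max_left _ _))
  have hKb : C' * (Mb*Gb) * (t/σt)^K ≤ 1 := by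
    have h2 : (t/σt)^K ≤ (t/σt)^K₂ :=
      pow_le_pow_of_le_one htσt0 (le_of_lt htσt1)
        (le_trans (le_max_right _ _) (le_max_left _ _))
    calc C' * (Mb*Gb) * (t/σt)^K ≤ C' * (Mb*Gb) * (C' * (Mb*Gb))⁻¹ := by
          apply mul_le_mul_of_nonneg_left (le_of_lt (lt_of_le_of_lt h2 hK₂)) (by positivity)
      _ = 1 := mul_inv_cancel₀ (by positivity)
  set N : ℕ := K * K with hNdef
  have hNne : N ≠ 0 := by
    rw [hNdef]; exact Nat.mul_ne_zero hKne hKne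
  obtain ⟨M, hMN⟩ : ∃ M, N = M + 1 := ⟨N - 1, by omega⟩
  clear_value K N
  -- ===== the scalar function Θ =====
  set TK : Euc d → (Euc d →L[ℝ] Euc d) := fun z => (fderiv ℝ (f^[K]) z).comp (projSub (E z))
    with hTKdef
  set Θ : Euc d → ℝ := fun z => σt⁻¹ * max (lam * mc) (‖TK z‖ ^ ((K:ℝ)⁻¹)) with hΘdef
  have hΘpos : ∀ z, 0 < Θ z := by
    intro z
    apply mul_pos (inv_pos.mpr hσt0)
    exact lt_of_lt_of_le (mul_pos hlam0 hm0) (le_max_left _ _)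
  have hσtΘ : ∀ z, σt * Θ z = max (lam*mc) (‖TK z‖ ^ ((K:ℝ)⁻¹)) := by
    intro z
    show σt * (σt⁻¹ * max (lam * mc) (‖TK z‖ ^ ((K:ℝ)⁻¹))) = _
    rw [← mul_assoc, mul_inv_cancel₀ (ne_of_gt hσt0), one_mul]
  have hrpowK : ∀ a : ℝ, 0 ≤ a → (a ^ ((K:ℝ)⁻¹))^K = a := by
    intro a ha
    rw [← Real.rpow_natCast (a ^ ((K:ℝ)⁻¹)) K, ← Real.rpow_mul ha,
      inv_mul_cancel₀ (by exact_mod_cast hKne), Real.rpow_one]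
  have hΘ_ge : ∀ z, ‖TK z‖ ≤ (σt * Θ z)^K := by
    intro z
    rw [hσtΘ z]
    calc ‖TK z‖ = (‖TK z‖ ^ ((K:ℝ)⁻¹))^K := (hrpowK _ (norm_nonneg _)).symm
      _ ≤ (max (lam*mc) (‖TK z‖ ^ ((K:ℝ)⁻¹)))^K :=
          pow_le_pow_left₀ (Real.rpow_nonneg (norm_nonneg _) _) (le_max_right _ _) K
  have hΘ_le : ∀ z, (σt * Θ z)^K ≤ max ((lam*mc)^K) (‖TK z‖) := by
    intro z
    rw [hσtΘ z]
    rcases le_total (lam*mc) (‖TK z‖ ^ ((K:ℝ)⁻¹)) with h | h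
    · rw [max_eq_right h, hrpowK _ (norm_nonneg _)]; exact le_max_right _ _
    · rw [max_eq_left h]; exact le_max_of_le_left (le_refl _)
  -- ===== one-step norm bounds along orbits =====
  have hρup : ∀ x ∈ Λ, ∀ u : Euc d, ∀ j : ℕ,
      ‖fderiv ℝ (f^[j+1]) x u‖ ≤ Mb * ‖fderiv ℝ (f^[j]) x u‖ := by
    intro x hx u j
    rw [← hDsucc' j x u]
    calc ‖fderiv ℝ f (f^[j] x) (fderiv ℝ (f^[j]) x u)‖
        ≤ ‖fderiv ℝ f (f^[j] x)‖ * ‖fderiv ℝ (f^[j]) x u‖ := ContinuousLinearMap.le_opNorm _ _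
      _ ≤ Mb * ‖fderiv ℝ (f^[j]) x u‖ :=
          mul_le_mul_of_nonneg_right (hDfle _ (hmapsfI j x hx)) (norm_nonneg _)
  have hρdown : ∀ x ∈ Λ, ∀ u : Euc d, ∀ j : ℕ,
      ‖fderiv ℝ (f^[j]) x u‖ ≤ Gb * ‖fderiv ℝ (f^[j+1]) x u‖ := by
    intro x hx u j
    have h1 : fderiv ℝ (f^[j]) x u
        = fderiv ℝ g (f (f^[j] x)) (fderiv ℝ f (f^[j] x) (fderiv ℝ (f^[j]) x u)) :=
      (hDgDf _ _).symm
    rw [hDsucc' j x u] at h1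
    have hmem : f (f^[j] x) ∈ Λ := hmapsf _ (hmapsfI j x hx)
    calc ‖fderiv ℝ (f^[j]) x u‖
        = ‖fderiv ℝ g (f (f^[j] x)) (fderiv ℝ (f^[j+1]) x u)‖ := by rw [← h1]
      _ ≤ ‖fderiv ℝ g (f (f^[j] x))‖ * ‖fderiv ℝ (f^[j+1]) x u‖ :=
          ContinuousLinearMap.le_opNorm _ _
      _ ≤ Gb * ‖fderiv ℝ (f^[j+1]) x u‖ :=
          mul_le_mul_of_nonneg_right (hDgle _ hmem) (norm_nonneg _)
  have hρpos : ∀ x ∈ Λ, ∀ u : Euc d, u ≠ 0 → ∀ j, 0 < ‖fderiv ℝ (f^[j]) x u‖ := by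
    intro x hx u hu j
    induction j with
    | zero => rw [hρ0 x u]; simpa [norm_pos_iff] using hu
    | succ j ih =>
        by_contra h
        push_neg at h
        have h0 : ‖fderiv ℝ (f^[j+1]) x u‖ = 0 := le_antisymm h (norm_nonneg _)
        have h2 := hρdown x hx u j
        rw [h0, mul_zero] at h2
        exact absurd (le_antisymm h2 (norm_nonneg _)) (ne_of_gt ih)
  have hwin_up : ∀ x ∈ Λ, ∀ u : Euc d, ∀ a i : ℕ,
      ‖fderiv ℝ (f^[a+i]) x u‖ ≤ Mb^i * ‖fderiv ℝ (f^[a]) x u‖ := by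
    intro x hx u a i
    induction i with
    | zero => simp
    | succ i ih =>
        have h1 := hρup x hx u (a+i)
        have h2 : a + (i+1) = (a+i) + 1 := by omega
        calc ‖fderiv ℝ (f^[a+(i+1)]) x u‖ = ‖fderiv ℝ (f^[(a+i)+1]) x u‖ := by rw [h2]
          _ ≤ Mb * ‖fderiv ℝ (f^[a+i]) x u‖ := h1
          _ ≤ Mb * (Mb^i * ‖fderiv ℝ (f^[a]) x u‖) :=
              mul_le_mul_of_nonneg_left ih (le_of_lt hMb0)
          _ = Mb^(i+1) * ‖fderiv ℝ (f^[a]) x u‖ := by ring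
  have hwin_down : ∀ x ∈ Λ, ∀ u : Euc d, ∀ a i : ℕ,
      ‖fderiv ℝ (f^[a]) x u‖ ≤ Gb^i * ‖fderiv ℝ (f^[a+i]) x u‖ := by
    intro x hx u a i
    induction i with
    | zero => simp
    | succ i ih =>
        have h1 := hρdown x hx u (a+i)
        have h2 : a + (i+1) = (a+i) + 1 := by omega
        calc ‖fderiv ℝ (f^[a]) x u‖ ≤ Gb^i * ‖fderiv ℝ (f^[a+i]) x u‖ := ih
          _ ≤ Gb^i * (Gb * ‖fderiv ℝ (f^[(a+i)+1]) x u‖) :=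
              mul_le_mul_of_nonneg_left h1 (by positivity)
          _ = Gb^(i+1) * ‖fderiv ℝ (f^[(a+i)+1]) x u‖ := by ring
          _ = Gb^(i+1) * ‖fderiv ℝ (f^[a+(i+1)]) x u‖ := by rw [← h2]
  -- ===== domination: operator norm bound for TK =====
  have hdomTK : ∀ z ∈ Λ, ∀ v ∈ F z, v ≠ 0 →
      ‖TK z‖ ≤ C' * lam^K * (‖fderiv ℝ (f^[K]) z v‖ / ‖v‖) := by
    intro z hz v hv hv0
    have hv0' : 0 < ‖v‖ := by simpa [norm_pos_iff] using hv0
    have hrpos : 0 ≤ C' * lam^K * (‖fderiv ℝ (f^[K]) z v‖ / ‖v‖) := by positivity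
    refine ContinuousLinearMap.opNorm_le_bound _ hrpos ?_
    intro ζ
    have hval : TK z ζ = fderiv ℝ (f^[K]) z (projSub (E z) ζ) := rfl
    by_cases h0 : projSub (E z) ζ = 0
    · rw [hval, h0, map_zero, norm_zero]
      positivity
    · have hmem : projSub (E z) ζ ∈ E z := projSub_mem _ _
      have hdd := hdom z hz K _ hmem h0 v hv hv0
      have h2 : C * lam ^ K * (‖fderiv ℝ (f^[K]) z v‖ / ‖v‖)
          ≤ C' * lam ^ K * (‖fderiv ℝ (f^[K]) z v‖ / ‖v‖) := by
        apply mul_le_mul_of_nonneg_right _ (by positivity)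
        exact mul_le_mul_of_nonneg_right hCC' (by positivity)
      have h3 := le_trans hdd h2
      have hp0 : 0 < ‖projSub (E z) ζ‖ := by simpa [norm_pos_iff] using h0
      rw [div_le_iff₀ hp0] at h3
      rw [hval]
      calc ‖fderiv ℝ (f^[K]) z (projSub (E z) ζ)‖
          ≤ (C' * lam^K * (‖fderiv ℝ (f^[K]) z v‖/‖v‖)) * ‖projSub (E z) ζ‖ := h3
        _ ≤ (C' * lam^K * (‖fderiv ℝ (f^[K]) z v‖/‖v‖)) * ‖ζ‖ :=
            mul_le_mul_of_nonneg_left (projSub_norm_le _ _) hrpos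
  have hΘstep_le : ∀ z ∈ Λ, ∀ v ∈ F z, v ≠ 0 →
      (σt * Θ z)^K ≤ C' * lam^K * (‖fderiv ℝ (f^[K]) z v‖ / ‖v‖) := by
    intro z hz v hv hv0
    refine (hΘ_le z).trans (max_le ?_ (hdomTK z hz v hv hv0))
    have hv0' : 0 < ‖v‖ := by simpa [norm_pos_iff] using hv0
    have h1 : ‖v‖ ≤ Gb^K * ‖fderiv ℝ (f^[K]) z v‖ := by
      have h2 := hwin_down z hz v 0 K
      rw [Nat.zero_add] at h2
      rwa [hρ0 z v] at h2
    have h3 : mc^K * ‖v‖ ≤ ‖fderiv ℝ (f^[K]) z v‖ := by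
      rw [hmdef, inv_pow, inv_mul_le_iff₀ (by positivity)]
      exact h1
    have h4 : mc^K ≤ ‖fderiv ℝ (f^[K]) z v‖ / ‖v‖ := by
      rw [le_div_iff₀ hv0']
      exact h3
    calc (lam*mc)^K = lam^K * mc^K := mul_pow _ _ _
      _ ≤ lam^K * (‖fderiv ℝ (f^[K]) z v‖ / ‖v‖) :=
          mul_le_mul_of_nonneg_left h4 (by positivity)
      _ = 1 * (lam^K * (‖fderiv ℝ (f^[K]) z v‖ / ‖v‖)) := (one_mul _).symm
      _ ≤ C' * (lam^K * (‖fderiv ℝ (f^[K]) z v‖ / ‖v‖)) :=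
          mul_le_mul_of_nonneg_right hC'1 (by positivity)
      _ = C' * lam^K * (‖fderiv ℝ (f^[K]) z v‖ / ‖v‖) := by ring
  -- ===== the cocycle products =====
  set Θprod : ℕ → Euc d → ℝ := fun n z => ∏ i ∈ Finset.range n, Θ (f^[i] z) with hΘproddef
  set Ξ : ℕ → Euc d → ℝ := fun k x => ∏ i ∈ Finset.range k, Θ (g^[i+1] x) with hΞdef
  have hΘprodpos : ∀ n z, 0 < Θprod n z := fun n z => Finset.prod_pos (fun i _ => hΘpos _)
  have hΞpos : ∀ k x, 0 < Ξ k x := fun k x => Finset.prod_pos (fun i _ => hΘpos _)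
  have hΘprod_succ : ∀ (n : ℕ) (x : Euc d), Θprod (n+1) x = Θprod n (f x) * Θ x := by
    intro n x
    simp only [hΘproddef]
    rw [Finset.prod_range_succ']
    rfl
  have hΞ_succ : ∀ (k : ℕ) (x : Euc d), Ξ (k+1) (f x) = Ξ k x * Θ x := by
    intro k x
    simp only [hΞdef]
    have h1 : ∀ i : ℕ, g^[i+1] (f x) = g^[i] x := by
      intro i; rw [Function.iterate_succ_apply, hgf x]
    calc ∏ i ∈ Finset.range (k+1), Θ (g^[i+1] (f x))
        = ∏ i ∈ Finset.range (k+1), Θ (g^[i] x) :=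
          Finset.prod_congr rfl (fun i _ => by rw [h1 i])
      _ = (∏ i ∈ Finset.range k, Θ (g^[i+1] x)) * Θ (g^[0] x) := Finset.prod_range_succ' _ k
      _ = (∏ i ∈ Finset.range k, Θ (g^[i+1] x)) * Θ x := by rw [Function.iterate_zero_apply]
  -- Θprod over the backward orbit
  have hΘprod_back : ∀ x : Euc d, Θprod N (g^[M] x) = Θ x * Ξ M x := by
    intro x
    simp only [hΘproddef, hΞdef]
    rw [hMN]
    calc ∏ i ∈ Finset.range (M+1), Θ (f^[i] (g^[M] x))
        = ∏ i ∈ Finset.range (M+1), Θ (g^[M - i] x) := by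
          refine Finset.prod_congr rfl (fun i hi => ?_)
          rw [hfg_le i M (Nat.lt_succ_iff.mp (Finset.mem_range.mp hi)) x]
      _ = ∏ i ∈ Finset.range (M+1), Θ (g^[i] x) := by
          have h2 := Finset.prod_range_reflect (fun i => Θ (g^[i] x)) (M+1)
          simpa using h2
      _ = Θ x * ∏ i ∈ Finset.range M, Θ (g^[i+1] x) := by
          rw [Finset.prod_range_succ']
          rw [Function.iterate_zero_apply, mul_comm]
  -- ===== main contraction/expansion estimates over the window N =====
  have hI : ∀ x ∈ Λ, ∀ u ∈ E x, u ≠ 0 →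
      ‖fderiv ℝ (f^[N]) x u‖ ≤ σ^N * Θprod N x * ‖u‖ := by
    intro x hx u hu hu0
    have hρp : ∀ j, 0 < ‖fderiv ℝ (f^[j]) x u‖ := hρpos x hx u hu0
    have hu0' : 0 < ‖u‖ := by simpa [norm_pos_iff] using hu0
    have hρ0' : ‖fderiv ℝ (f^[0]) x u‖ = ‖u‖ := by rw [hρ0 x u]
    have hstep : ∀ k, ‖fderiv ℝ (f^[k+K]) x u‖ / ‖fderiv ℝ (f^[k]) x u‖
        ≤ (σt * Θ (f^[k] x))^K := by
      intro k
      have hmemk : fderiv ℝ (f^[k]) x u ∈ E (f^[k] x) := hEmemI k x hx u hu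
      have hfix : projSub (E (f^[k] x)) (fderiv ℝ (f^[k]) x u) = fderiv ℝ (f^[k]) x u :=
        projSub_fix _ _ hmemk
      have h2 : TK (f^[k] x) (fderiv ℝ (f^[k]) x u) = fderiv ℝ (f^[k + K]) x u := by
        show fderiv ℝ (f^[K]) (f^[k] x) (projSub (E (f^[k] x)) (fderiv ℝ (f^[k]) x u)) = _
        rw [hfix, hDadd K k x u, Nat.add_comm K k]
      have h3 := (TK (f^[k] x)).le_opNorm (fderiv ℝ (f^[k]) x u)
      rw [h2] at h3
      have h5 : ‖fderiv ℝ (f^[k+K]) x u‖ / ‖fderiv ℝ (f^[k]) x u‖ ≤ ‖TK (f^[k] x)‖ := by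
        rw [div_le_iff₀ (hρp k)]
        exact h3
      exact le_trans h5 (hΘ_ge _)
    have hprodle : ∏ k ∈ Finset.range N,
        (‖fderiv ℝ (f^[k+K]) x u‖ / ‖fderiv ℝ (f^[k]) x u‖) ≤ (σt^N * Θprod N x)^K := by
      calc ∏ k ∈ Finset.range N, (‖fderiv ℝ (f^[k+K]) x u‖ / ‖fderiv ℝ (f^[k]) x u‖)
          ≤ ∏ k ∈ Finset.range N, (σt * Θ (f^[k] x))^K :=
            Finset.prod_le_prod (fun k _ => le_of_lt (div_pos (hρp _) (hρp _)))
              (fun k _ => hstep k)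
        _ = (∏ k ∈ Finset.range N, (σt * Θ (f^[k] x)))^K := by rw [Finset.prod_pow]
        _ = (σt^N * Θprod N x)^K := by
            rw [Finset.prod_mul_distrib, Finset.prod_const, Finset.card_range]
    have htele := tele_prod (fun j => ‖fderiv ℝ (f^[j]) x u‖) hρp N K
    have hlow : ((‖fderiv ℝ (f^[N]) x u‖ / ‖u‖) * ((Mb*Gb)^K)⁻¹)^K
        ≤ ∏ i ∈ Finset.range K,
          (‖fderiv ℝ (f^[N+i]) x u‖ / ‖fderiv ℝ (f^[i]) x u‖) := by
      have hfac : ∀ i ∈ Finset.range K,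
          (‖fderiv ℝ (f^[N]) x u‖ / ‖u‖) * ((Mb*Gb)^K)⁻¹
          ≤ ‖fderiv ℝ (f^[N+i]) x u‖ / ‖fderiv ℝ (f^[i]) x u‖ := by
        intro i hi
        have hi' : i ≤ K := le_of_lt (Finset.mem_range.mp hi)
        have h1 : ‖fderiv ℝ (f^[i]) x u‖ ≤ Mb^K * ‖u‖ := by
          have h2 := hwin_up x hx u 0 i
          rw [Nat.zero_add, hρ0'] at h2
          calc ‖fderiv ℝ (f^[i]) x u‖ ≤ Mb^i * ‖u‖ := h2
            _ ≤ Mb^K * ‖u‖ := by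
                apply mul_le_mul_of_nonneg_right _ (norm_nonneg u)
                exact pow_le_pow_right₀ hMb1 hi'
        have h4 : ‖fderiv ℝ (f^[N]) x u‖ ≤ Gb^K * ‖fderiv ℝ (f^[N+i]) x u‖ := by
          have h5 := hwin_down x hx u N i
          calc ‖fderiv ℝ (f^[N]) x u‖ ≤ Gb^i * ‖fderiv ℝ (f^[N+i]) x u‖ := h5
            _ ≤ Gb^K * ‖fderiv ℝ (f^[N+i]) x u‖ := by
                apply mul_le_mul_of_nonneg_right _ (norm_nonneg _)
                exact pow_le_pow_right₀ hGb1 hi'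
        have hkey : ‖fderiv ℝ (f^[N]) x u‖ * ‖fderiv ℝ (f^[i]) x u‖
            ≤ ‖fderiv ℝ (f^[N+i]) x u‖ * (‖u‖ * (Mb*Gb)^K) := by
          calc ‖fderiv ℝ (f^[N]) x u‖ * ‖fderiv ℝ (f^[i]) x u‖
              ≤ (Gb^K * ‖fderiv ℝ (f^[N+i]) x u‖) * (Mb^K * ‖u‖) :=
                mul_le_mul h4 h1 (norm_nonneg _) (by positivity)
            _ = ‖fderiv ℝ (f^[N+i]) x u‖ * (‖u‖ * (Mb*Gb)^K) := by rw [mul_pow]; ring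
        calc (‖fderiv ℝ (f^[N]) x u‖ / ‖u‖) * ((Mb*Gb)^K)⁻¹
            = ‖fderiv ℝ (f^[N]) x u‖ / (‖u‖ * (Mb*Gb)^K) := by
              rw [← div_eq_mul_inv, div_div]
          _ ≤ ‖fderiv ℝ (f^[N+i]) x u‖ / ‖fderiv ℝ (f^[i]) x u‖ := by
              rw [div_le_div_iff₀ (by positivity) (hρp i)]
              exact hkey
      calc ((‖fderiv ℝ (f^[N]) x u‖ / ‖u‖) * ((Mb*Gb)^K)⁻¹)^K
          = ∏ i ∈ Finset.range K,
            ((‖fderiv ℝ (f^[N]) x u‖ / ‖u‖) * ((Mb*Gb)^K)⁻¹) := by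
            rw [Finset.prod_const, Finset.card_range]
        _ ≤ ∏ i ∈ Finset.range K,
            (‖fderiv ℝ (f^[N+i]) x u‖ / ‖fderiv ℝ (f^[i]) x u‖) :=
            Finset.prod_le_prod (fun i _ => by positivity) hfac
    have hcomb : ((‖fderiv ℝ (f^[N]) x u‖ / ‖u‖) * ((Mb*Gb)^K)⁻¹)^K
        ≤ (σt^N * Θprod N x)^K := by
      calc ((‖fderiv ℝ (f^[N]) x u‖ / ‖u‖) * ((Mb*Gb)^K)⁻¹)^K
          ≤ ∏ i ∈ Finset.range K,
            (‖fderiv ℝ (f^[N+i]) x u‖ / ‖fderiv ℝ (f^[i]) x u‖) := hlow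
        _ = ∏ k ∈ Finset.range N,
            (‖fderiv ℝ (f^[k+K]) x u‖ / ‖fderiv ℝ (f^[k]) x u‖) := htele.symm
        _ ≤ (σt^N * Θprod N x)^K := hprodle
    have hΘN := hΘprodpos N x
    have hmain : (‖fderiv ℝ (f^[N]) x u‖ / ‖u‖) * ((Mb*Gb)^K)⁻¹ ≤ σt^N * Θprod N x :=
      le_of_pow_le_pow_left₀ hKne (by positivity) hcomb
    have hMG : (Mb*Gb)^K ≤ (σ/σt)^N := by
      calc (Mb*Gb)^K ≤ ((σ/σt)^K)^K := pow_le_pow_left₀ (by positivity) hKa K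
        _ = (σ/σt)^N := by rw [← pow_mul, hNdef]
    have h6 : ‖fderiv ℝ (f^[N]) x u‖ / ‖u‖ ≤ σt^N * Θprod N x * (Mb*Gb)^K := by
      rw [mul_inv_le_iff₀ (by positivity)] at hmain
      exact hmain.trans_eq (by ring)
    have hσσt : σt^N * (σ/σt)^N = σ^N := by
      rw [← mul_pow]
      congr 1
      field_simp
    have h7 : σt^N * Θprod N x * (Mb*Gb)^K ≤ σ^N * Θprod N x := by
      calc σt^N * Θprod N x * (Mb*Gb)^K ≤ σt^N * Θprod N x * (σ/σt)^N :=
            mul_le_mul_of_nonneg_left hMG (by positivity)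
        _ = (σt^N * (σ/σt)^N) * Θprod N x := by ring
        _ = σ^N * Θprod N x := by rw [hσσt]
    have h8 := le_trans h6 h7
    rw [div_le_iff₀ hu0'] at h8
    exact h8
  have hII : ∀ y ∈ Λ, ∀ w ∈ F y, w ≠ 0 →
      ω^N * Θprod N y * ‖w‖ ≤ ‖fderiv ℝ (f^[N]) y w‖ := by
    intro y hy w hw hw0
    have hrp : ∀ j, 0 < ‖fderiv ℝ (f^[j]) y w‖ := hρpos y hy w hw0
    have hw0' : 0 < ‖w‖ := by simpa [norm_pos_iff] using hw0
    have hρ0'' : ‖fderiv ℝ (f^[0]) y w‖ = ‖w‖ := by rw [hρ0 y w]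
    have hstep : ∀ k, (σt * Θ (f^[k] y))^K
        ≤ C' * lam^K * (‖fderiv ℝ (f^[k+K]) y w‖ / ‖fderiv ℝ (f^[k]) y w‖) := by
      intro k
      have hwk : fderiv ℝ (f^[k]) y w ∈ F (f^[k] y) := hFmemI k y hy w hw
      have hwk0 : fderiv ℝ (f^[k]) y w ≠ 0 := by
        intro h0
        have := hrp k
        rw [h0, norm_zero] at this
        exact lt_irrefl _ this
      have h1 := hΘstep_le (f^[k] y) (hmapsfI k y hy) _ hwk hwk0
      rw [hDadd K k y w, Nat.add_comm K k] at h1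
      exact h1
    have hprodge : (σt^N * Θprod N y)^K ≤ (C' * lam^K)^N *
        ∏ k ∈ Finset.range N, (‖fderiv ℝ (f^[k+K]) y w‖ / ‖fderiv ℝ (f^[k]) y w‖) := by
      calc (σt^N * Θprod N y)^K
          = (∏ k ∈ Finset.range N, (σt * Θ (f^[k] y)))^K := by
            rw [Finset.prod_mul_distrib, Finset.prod_const, Finset.card_range]
        _ = ∏ k ∈ Finset.range N, (σt * Θ (f^[k] y))^K := by rw [Finset.prod_pow]
        _ ≤ ∏ k ∈ Finset.range N,
            (C' * lam^K * (‖fderiv ℝ (f^[k+K]) y w‖ / ‖fderiv ℝ (f^[k]) y w‖)) := by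
            apply Finset.prod_le_prod
            · intro k _
              have := hΘpos (f^[k] y)
              positivity
            · intro k _; exact hstep k
        _ = (C' * lam^K)^N *
            ∏ k ∈ Finset.range N, (‖fderiv ℝ (f^[k+K]) y w‖ / ‖fderiv ℝ (f^[k]) y w‖) := by
            rw [Finset.prod_mul_distrib, Finset.prod_const, Finset.card_range]
    have htele := tele_prod (fun j => ‖fderiv ℝ (f^[j]) y w‖) hrp N K
    have hupK : ∏ i ∈ Finset.range K,
        (‖fderiv ℝ (f^[N+i]) y w‖ / ‖fderiv ℝ (f^[i]) y w‖)
        ≤ ((Mb*Gb)^K * (‖fderiv ℝ (f^[N]) y w‖ / ‖w‖))^K := by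
      have hfac : ∀ i ∈ Finset.range K,
          ‖fderiv ℝ (f^[N+i]) y w‖ / ‖fderiv ℝ (f^[i]) y w‖
          ≤ (Mb*Gb)^K * (‖fderiv ℝ (f^[N]) y w‖ / ‖w‖) := by
        intro i hi
        have hi' : i ≤ K := le_of_lt (Finset.mem_range.mp hi)
        have h1 : ‖fderiv ℝ (f^[N+i]) y w‖ ≤ Mb^K * ‖fderiv ℝ (f^[N]) y w‖ := by
          calc ‖fderiv ℝ (f^[N+i]) y w‖ ≤ Mb^i * ‖fderiv ℝ (f^[N]) y w‖ := hwin_up y hy w N i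
            _ ≤ Mb^K * ‖fderiv ℝ (f^[N]) y w‖ :=
                mul_le_mul_of_nonneg_right (pow_le_pow_right₀ hMb1 hi') (norm_nonneg _)
        have h2 : ‖w‖ ≤ Gb^K * ‖fderiv ℝ (f^[i]) y w‖ := by
          have h3 := hwin_down y hy w 0 i
          rw [Nat.zero_add, hρ0''] at h3
          calc ‖w‖ ≤ Gb^i * ‖fderiv ℝ (f^[i]) y w‖ := h3
            _ ≤ Gb^K * ‖fderiv ℝ (f^[i]) y w‖ :=
                mul_le_mul_of_nonneg_right (pow_le_pow_right₀ hGb1 hi') (norm_nonneg _)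
        have hkey : ‖fderiv ℝ (f^[N+i]) y w‖ * ‖w‖
            ≤ (Mb*Gb)^K * ‖fderiv ℝ (f^[N]) y w‖ * ‖fderiv ℝ (f^[i]) y w‖ := by
          calc ‖fderiv ℝ (f^[N+i]) y w‖ * ‖w‖
              ≤ (Mb^K * ‖fderiv ℝ (f^[N]) y w‖) * (Gb^K * ‖fderiv ℝ (f^[i]) y w‖) :=
                mul_le_mul h1 h2 (norm_nonneg _) (by positivity)
            _ = (Mb*Gb)^K * ‖fderiv ℝ (f^[N]) y w‖ * ‖fderiv ℝ (f^[i]) y w‖ := by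
                rw [mul_pow]; ring
        calc ‖fderiv ℝ (f^[N+i]) y w‖ / ‖fderiv ℝ (f^[i]) y w‖
            ≤ ((Mb*Gb)^K * ‖fderiv ℝ (f^[N]) y w‖) / ‖w‖ := by
              rw [div_le_div_iff₀ (hrp i) hw0']
              exact hkey
          _ = (Mb*Gb)^K * (‖fderiv ℝ (f^[N]) y w‖ / ‖w‖) := by rw [mul_div_assoc]
      calc ∏ i ∈ Finset.range K,
          (‖fderiv ℝ (f^[N+i]) y w‖ / ‖fderiv ℝ (f^[i]) y w‖)
          ≤ ∏ i ∈ Finset.range K, ((Mb*Gb)^K * (‖fderiv ℝ (f^[N]) y w‖ / ‖w‖)) :=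
            Finset.prod_le_prod (fun i _ => le_of_lt (div_pos (hrp _) (hrp _))) hfac
        _ = ((Mb*Gb)^K * (‖fderiv ℝ (f^[N]) y w‖ / ‖w‖))^K := by
            rw [Finset.prod_const, Finset.card_range]
    have hcomb : (σt^N * Θprod N y)^K
        ≤ (C' * lam^K)^N * ((Mb*Gb)^K * (‖fderiv ℝ (f^[N]) y w‖ / ‖w‖))^K := by
      refine hprodge.trans ?_
      apply mul_le_mul_of_nonneg_left _ (by positivity)
      rw [htele]
      exact hupK
    -- now deduce (ω^N * Θprod N y)^K ≤ (ratio)^K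
    have hgoalK : (ω^N * Θprod N y)^K ≤ (‖fderiv ℝ (f^[N]) y w‖ / ‖w‖)^K := by
      have e1 : (ω^N * Θprod N y)^K = (ω/σt)^(N*K) * (σt^N * Θprod N y)^K := by
        have hσtne : σt ≠ 0 := ne_of_gt hσt0
        field_simp
        rw [div_pow, mul_pow, mul_pow, ← pow_mul, ← pow_mul, div_mul_eq_mul_div,
          eq_div_iff (pow_ne_zero _ hσtne)]
        ring
      have e2 : (C' * lam^K)^N * ((Mb*Gb)^K * (‖fderiv ℝ (f^[N]) y w‖ / ‖w‖))^K
          = (C'^N * lam^(K*N) * (Mb*Gb)^(K*K)) * (‖fderiv ℝ (f^[N]) y w‖ / ‖w‖)^K := by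
        ring
      have e3 : (ω/σt)^(N*K) * (C'^N * lam^(K*N) * (Mb*Gb)^(K*K))
          = (C' * (Mb*Gb) * (t/σt)^K)^N := by
        have hσtne : σt ≠ 0 := ne_of_gt hσt0
        rw [htdef, hNdef]
        field_simp
        ring
      have hfactor : (C' * (Mb*Gb) * (t/σt)^K)^N ≤ 1 :=
        pow_le_one₀ (by positivity) hKb
      calc (ω^N * Θprod N y)^K
          = (ω/σt)^(N*K) * (σt^N * Θprod N y)^K := e1
        _ ≤ (ω/σt)^(N*K) * ((C' * lam^K)^N * ((Mb*Gb)^K * (‖fderiv ℝ (f^[N]) y w‖ / ‖w‖))^K) :=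
            mul_le_mul_of_nonneg_left hcomb (by positivity)
        _ = ((ω/σt)^(N*K) * (C'^N * lam^(K*N) * (Mb*Gb)^(K*K)))
            * (‖fderiv ℝ (f^[N]) y w‖ / ‖w‖)^K := by rw [e2]; ring
        _ = (C' * (Mb*Gb) * (t/σt)^K)^N * (‖fderiv ℝ (f^[N]) y w‖ / ‖w‖)^K := by rw [e3]
        _ ≤ 1 * (‖fderiv ℝ (f^[N]) y w‖ / ‖w‖)^K :=
            mul_le_mul_of_nonneg_right hfactor (by positivity)
        _ = (‖fderiv ℝ (f^[N]) y w‖ / ‖w‖)^K := one_mul _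
    have hfin : ω^N * Θprod N y ≤ ‖fderiv ℝ (f^[N]) y w‖ / ‖w‖ :=
      le_of_pow_le_pow_left₀ hKne (by positivity) hgoalK
    rw [le_div_iff₀ hw0'] at hfin
    exact hfin
  -- ===== coefficients =====
  set cβ : ℕ → Euc d → ℝ := fun j x => ((σ^j * Θprod j x)⁻¹)^2 with hcβdef
  set dγ : ℕ → Euc d → ℝ := fun k x => (ω^k * Ξ k x)^2 with hdγdef
  have hcβpos : ∀ j x, 0 < cβ j x := by
    intro j x; rw [hcβdef]; positivity
  have hdγpos : ∀ k x, 0 < dγ k x := by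
    intro k x
    rw [hdγdef]
    have := hΞpos k x
    positivity
  have hcβ0 : ∀ x, cβ 0 x = 1 := by
    intro x; rw [hcβdef]; simp [hΘproddef]
  have hdγ0 : ∀ x, dγ 0 x = 1 := by
    intro x; rw [hdγdef]; simp [hΞdef]
  have hcβ_shift : ∀ (j : ℕ) (x : Euc d), cβ j (f x) = σ^2 * Θ x^2 * cβ (j+1) x := by
    intro j x
    simp only [hcβdef]
    rw [hΘprod_succ j x, pow_succ]
    have h1 : Θprod j (f x) ≠ 0 := ne_of_gt (hΘprodpos j (f x))
    have h2 : Θ x ≠ 0 := ne_of_gt (hΘpos x)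
    have h3 : σ ≠ 0 := ne_of_gt hσ0
    field_simp
    ring
  have hdγ_shift : ∀ (k : ℕ) (x : Euc d), dγ (k+1) (f x) = ω^2 * Θ x^2 * dγ k x := by
    intro k x
    simp only [hdγdef]
    rw [hΞ_succ k x, pow_succ]
    ring
  -- ===== oblique projections =====
  set Qe : Euc d → (Euc d →L[ℝ] Euc d) := fun x => projSub (E x) with hQedef
  set Qf : Euc d → (Euc d →L[ℝ] Euc d) := fun x => projSub (F x) with hQfdef
  set Sop : Euc d → (Euc d →L[ℝ] Euc d) := fun x => 1 - Qf x * Qe x with hSopdef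
  have hSunit : ∀ x ∈ Λ, IsUnit (Sop x) := by
    intro x hx
    have hker : ∀ w2 : Euc d, Sop x w2 = 0 → w2 = 0 := by
      intro w2 hw2
      have h1 : w2 = Qf x (Qe x w2) := by
        have he : Sop x w2 = w2 - Qf x (Qe x w2) := rfl
        rw [he] at hw2
        exact sub_eq_zero.mp hw2
      have h2 : ‖w2‖ ≤ ‖Qe x w2‖ := by
        calc ‖w2‖ = ‖Qf x (Qe x w2)‖ := by rw [← h1]
          _ ≤ ‖Qe x w2‖ := projSub_norm_le _ _
      have h3 : ‖Qe x w2‖ ≤ ‖w2‖ := projSub_norm_le _ _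
      have h4 : ‖Qe x w2‖ = ‖w2‖ := le_antisymm h3 h2
      have h5 : Qe x w2 = w2 := projSub_eq_self_of_norm _ _ h4
      have hwE : w2 ∈ E x := by rw [← h5]; exact projSub_mem _ _
      have hwF : w2 ∈ F x := by
        rw [h5] at h1
        rw [h1]
        exact projSub_mem _ _
      exact (Submodule.disjoint_def.mp (hcompl x hx).disjoint) w2 hwE hwF
    have hinj : Function.Injective (Sop x) := by
      intro a b hab
      have h1 : Sop x (a - b) = 0 := by rw [map_sub, hab, sub_self]
      exact sub_eq_zero.mp (hker _ h1)
    have hinj' : Function.Injective ((Sop x : Euc d →ₗ[ℝ] Euc d)) := hinj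
    have hsurj := (LinearMap.injective_iff_surjective).mp hinj'
    set eqv := LinearEquiv.ofBijective ((Sop x : Euc d →ₗ[ℝ] Euc d)) ⟨hinj', hsurj⟩ with heqv
    refine ⟨⟨Sop x, LinearMap.toContinuousLinearMap (eqv.symm : Euc d →ₗ[ℝ] Euc d), ?_, ?_⟩, rfl⟩
    · refine ContinuousLinearMap.ext fun w2 => ?_
      simp only [ContinuousLinearMap.mul_apply, ContinuousLinearMap.one_apply]
      exact eqv.apply_symm_apply w2
    · refine ContinuousLinearMap.ext fun w2 => ?_
      simp only [ContinuousLinearMap.mul_apply, ContinuousLinearMap.one_apply]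
      exact eqv.symm_apply_apply w2
  set Pf : Euc d → (Euc d →L[ℝ] Euc d) := fun x => Ring.inverse (Sop x) * (Qf x * (1 - Qe x))
    with hPfdef
  set Pe : Euc d → (Euc d →L[ℝ] Euc d) := fun x => 1 - Pf x with hPedef
  have hPfE : ∀ x ∈ Λ, ∀ u ∈ E x, Pf x u = 0 := by
    intro x hx u hu
    have h1 : Qe x u = u := projSub_fix _ _ hu
    have h2 : (Qf x * (1 - Qe x)) u = 0 := by
      simp only [ContinuousLinearMap.mul_apply, ContinuousLinearMap.sub_apply,
        ContinuousLinearMap.one_apply]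
      rw [h1, sub_self, map_zero]
    show Ring.inverse (Sop x) ((Qf x * (1 - Qe x)) u) = 0
    rw [h2, map_zero]
  have hPfF : ∀ x ∈ Λ, ∀ v ∈ F x, Pf x v = v := by
    intro x hx v hv
    have hv1 : Qf x v = v := projSub_fix _ _ hv
    have h1 : (Qf x * (1 - Qe x)) v = Sop x v := by
      simp only [ContinuousLinearMap.mul_apply, ContinuousLinearMap.sub_apply,
        ContinuousLinearMap.one_apply, hSopdef]
      rw [map_sub, hv1]
    have h2 : Ring.inverse (Sop x) * Sop x = 1 := Ring.inverse_mul_cancel _ (hSunit x hx)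
    show Ring.inverse (Sop x) ((Qf x * (1 - Qe x)) v) = v
    rw [h1]
    have h3 := congrArg (fun (T : Euc d →L[ℝ] Euc d) => T v) h2
    simpa using h3
  have hPeE : ∀ x ∈ Λ, ∀ u ∈ E x, Pe x u = u := by
    intro x hx u hu
    rw [hPedef]
    simp only [ContinuousLinearMap.sub_apply, ContinuousLinearMap.one_apply]
    rw [hPfE x hx u hu, sub_zero]
  have hPeF : ∀ x ∈ Λ, ∀ v ∈ F x, Pe x v = 0 := by
    intro x hx v hv
    rw [hPedef]
    simp only [ContinuousLinearMap.sub_apply, ContinuousLinearMap.one_apply]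
    rw [hPfF x hx v hv, sub_self]
  have hPePf : ∀ (x : Euc d) (w : Euc d), Pe x w + Pf x w = w := by
    intro x w
    rw [hPedef]
    simp only [ContinuousLinearMap.sub_apply, ContinuousLinearMap.one_apply]
    abel
  -- ===== the bilinear forms =====
  set Tβ : ℕ → Euc d → (Euc d →L[ℝ] Euc d) :=
    fun j x => (fderiv ℝ (f^[j]) x).comp (Pe x) with hTβdef
  set Tγ : ℕ → Euc d → (Euc d →L[ℝ] Euc d) :=
    fun k x => (fderiv ℝ (g^[k]) x).comp (Pf x) with hTγdef
  set Bop : Euc d → (Euc d →L[ℝ] Euc d) := fun x =>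
      (∑ j ∈ Finset.range N, cβ j x •
        ((ContinuousLinearMap.adjoint (Tβ j x)).comp (Tβ j x))) +
      (∑ k ∈ Finset.range N, dγ k x •
        ((ContinuousLinearMap.adjoint (Tγ k x)).comp (Tγ k x))) with hBopdef
  set B : Euc d → (Euc d →L[ℝ] (Euc d →L[ℝ] ℝ)) := fun x => sqForm (Bop x) with hBdef
  have hBval : ∀ (x w w' : Euc d), B x w w'
      = (∑ j ∈ Finset.range N, cβ j x * inner ℝ (Tβ j x w) (Tβ j x w'))
      + (∑ k ∈ Finset.range N, dγ k x * inner ℝ (Tγ k x w) (Tγ k x w')) := by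
    intro x w w'
    show sqForm (Bop x) w w' = _
    rw [sqForm_apply]
    simp only [hBopdef, ContinuousLinearMap.add_apply, ContinuousLinearMap.coe_sum',
      Finset.sum_apply, ContinuousLinearMap.coe_smul', Pi.smul_apply,
      ContinuousLinearMap.coe_comp', Function.comp_apply]
    rw [inner_add_left, sum_inner, sum_inner]
    congr 1
    · refine Finset.sum_congr rfl (fun j _ => ?_)
      rw [real_inner_smul_left, ContinuousLinearMap.adjoint_inner_left]
    · refine Finset.sum_congr rfl (fun k _ => ?_)
      rw [real_inner_smul_left, ContinuousLinearMap.adjoint_inner_left]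
  have hBvv : ∀ (x w : Euc d), B x w w
      = (∑ j ∈ Finset.range N, cβ j x * ‖Tβ j x w‖^2)
      + (∑ k ∈ Finset.range N, dγ k x * ‖Tγ k x w‖^2) := by
    intro x w
    rw [hBval x w w]
    congr 1
    · exact Finset.sum_congr rfl (fun j _ => by rw [real_inner_self_eq_norm_sq])
    · exact Finset.sum_congr rfl (fun k _ => by rw [real_inner_self_eq_norm_sq])
  -- values on E and F
  have hBE : ∀ x ∈ Λ, ∀ u ∈ E x, B x u u
      = ∑ j ∈ Finset.range N, cβ j x * ‖fderiv ℝ (f^[j]) x u‖^2 := by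
    intro x hx u hu
    rw [hBvv x u]
    have h1 : ∀ j : ℕ, Tβ j x u = fderiv ℝ (f^[j]) x u := by
      intro j
      show fderiv ℝ (f^[j]) x (Pe x u) = _
      rw [hPeE x hx u hu]
    have h2 : ∀ k : ℕ, Tγ k x u = 0 := by
      intro k
      show fderiv ℝ (g^[k]) x (Pf x u) = 0
      rw [hPfE x hx u hu, map_zero]
    have h3 : (∑ k ∈ Finset.range N, dγ k x * ‖Tγ k x u‖^2) = 0 :=
      Finset.sum_eq_zero (fun k _ => by rw [h2 k]; simp)
    rw [h3, add_zero]
    exact Finset.sum_congr rfl (fun j _ => by rw [h1 j])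
  have hBF : ∀ x ∈ Λ, ∀ v ∈ F x, B x v v
      = ∑ k ∈ Finset.range N, dγ k x * ‖fderiv ℝ (g^[k]) x v‖^2 := by
    intro x hx v hv
    rw [hBvv x v]
    have h1 : ∀ k : ℕ, Tγ k x v = fderiv ℝ (g^[k]) x v := by
      intro k
      show fderiv ℝ (g^[k]) x (Pf x v) = _
      rw [hPfF x hx v hv]
    have h2 : ∀ j : ℕ, Tβ j x v = 0 := by
      intro j
      show fderiv ℝ (f^[j]) x (Pe x v) = 0
      rw [hPeF x hx v hv, map_zero]
    have h3 : (∑ j ∈ Finset.range N, cβ j x * ‖Tβ j x v‖^2) = 0 :=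
      Finset.sum_eq_zero (fun j _ => by rw [h2 j]; simp)
    rw [h3, zero_add]
    exact Finset.sum_congr rfl (fun k _ => by rw [h1 k])
  -- ===== symmetry, positivity, bounds =====
  have hBsymm : ∀ (x u v : Euc d), B x u v = B x v u := by
    intro x u v
    rw [hBval x u v, hBval x v u]
    congr 1
    · exact Finset.sum_congr rfl (fun j _ => by rw [real_inner_comm])
    · exact Finset.sum_congr rfl (fun k _ => by rw [real_inner_comm])
  have hBlow : ∀ (x w : Euc d), (1/2) * ‖w‖^2 ≤ B x w w := by
    intro x w
    rw [hBvv x w]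
    have hterm1 : ‖Pe x w‖^2 ≤ ∑ j ∈ Finset.range N, cβ j x * ‖Tβ j x w‖^2 := by
      have h0 : cβ 0 x * ‖Tβ 0 x w‖^2 = ‖Pe x w‖^2 := by
        rw [hcβ0 x, one_mul]
        have h1 : Tβ 0 x w = Pe x w := by
          show fderiv ℝ (f^[0]) x (Pe x w) = _
          rw [hρ0]
        rw [h1]
      rw [← h0]
      refine Finset.single_le_sum (f := fun j => cβ j x * ‖Tβ j x w‖^2)
        (fun j _ => mul_nonneg (le_of_lt (hcβpos j x)) (sq_nonneg _)) ?_
      rw [Finset.mem_range]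
      omega
    have hterm2 : ‖Pf x w‖^2 ≤ ∑ k ∈ Finset.range N, dγ k x * ‖Tγ k x w‖^2 := by
      have h0 : dγ 0 x * ‖Tγ 0 x w‖^2 = ‖Pf x w‖^2 := by
        rw [hdγ0 x, one_mul]
        have h1 : Tγ 0 x w = Pf x w := by
          show fderiv ℝ (g^[0]) x (Pf x w) = _
          rw [hρ0g]
        rw [h1]
      rw [← h0]
      refine Finset.single_le_sum (f := fun k => dγ k x * ‖Tγ k x w‖^2)
        (fun k _ => mul_nonneg (le_of_lt (hdγpos k x)) (sq_nonneg _)) ?_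
      rw [Finset.mem_range]
      omega
    have htri : ‖w‖ ≤ ‖Pe x w‖ + ‖Pf x w‖ := by
      calc ‖w‖ = ‖Pe x w + Pf x w‖ := by rw [hPePf x w]
        _ ≤ ‖Pe x w‖ + ‖Pf x w‖ := norm_add_le _ _
    have hsq : ‖w‖^2 ≤ (‖Pe x w‖ + ‖Pf x w‖)^2 := pow_le_pow_left₀ (norm_nonneg w) htri 2
    nlinarith [hterm1, hterm2, hsq, sq_nonneg (‖Pe x w‖ - ‖Pf x w‖)]
  have hBpos : ∀ (x w : Euc d), w ≠ 0 → 0 < B x w w := by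
    intro x w hw
    have h1 := hBlow x w
    have h2 : 0 < ‖w‖ := by simpa [norm_pos_iff] using hw
    nlinarith
  -- ===== continuity =====
  have hBcont : ContinuousOn B Λ := by
    have hTKcont : ContinuousOn TK Λ := by
      have h1 : Continuous fun z => fderiv ℝ (f^[K]) z := (hcfIter K).continuous_fderiv one_ne_zero
      exact (h1.continuousOn).clm_comp hQE
    have hΘcont : ContinuousOn Θ Λ := by
      have h2 : ContinuousOn (fun z => ‖TK z‖ ^ ((K:ℝ)⁻¹)) Λ :=
        (hTKcont.norm).rpow_const (fun z _ => Or.inr (by positivity))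
      refine continuousOn_const.mul ?_
      exact fun z hz => ((continuousWithinAt_const).max (h2 z hz))
    have hfIterCont : ∀ n : ℕ, Continuous (f^[n]) := fun n => (hcfIter n).continuous
    have hgIterCont : ∀ n : ℕ, Continuous (g^[n]) := fun n => (hcgIter n).continuous
    have hΘprodcont : ∀ n, ContinuousOn (Θprod n) Λ := by
      intro n
      induction n with
      | zero =>
          have he : Θprod 0 = fun _ => (1:ℝ) := by
            funext z; simp [hΘproddef]
          rw [he]; exact continuousOn_const
      | succ n ih =>
          have he : Θprod (n+1) = fun z => Θprod n z * Θ (f^[n] z) := by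
            funext z; simp only [hΘproddef]; rw [Finset.prod_range_succ]
          rw [he]
          exact ih.mul (hΘcont.comp ((hfIterCont n).continuousOn)
            (fun z hz => hmapsfI n z hz))
    have hΞcont : ∀ k, ContinuousOn (Ξ k) Λ := by
      intro k
      induction k with
      | zero =>
          have he : Ξ 0 = fun _ => (1:ℝ) := by
            funext z; simp [hΞdef]
          rw [he]; exact continuousOn_const
      | succ k ih =>
          have he : Ξ (k+1) = fun z => Ξ k z * Θ (g^[k+1] z) := by
            funext z; simp only [hΞdef]; rw [Finset.prod_range_succ]
          rw [he]
          exact ih.mul (hΘcont.comp ((hgIterCont (k+1)).continuousOn)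
            (fun z hz => hmapsgI (k+1) z hz))
    have hcβcont : ∀ j, ContinuousOn (cβ j) Λ := by
      intro j
      have h1 : ContinuousOn (fun x => σ^j * Θprod j x) Λ := continuousOn_const.mul (hΘprodcont j)
      have h2 : ContinuousOn (fun x => (σ^j * Θprod j x)⁻¹) Λ :=
        h1.inv₀ (fun x _ => by
          have := hΘprodpos j x
          positivity)
      have he : cβ j = fun x => ((σ^j * Θprod j x)⁻¹)^2 := rfl
      rw [he]
      exact h2.pow 2
    have hdγcont : ∀ k, ContinuousOn (dγ k) Λ := by
      intro k
      have h1 : ContinuousOn (fun x => ω^k * Ξ k x) Λ := continuousOn_const.mul (hΞcont k)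
      have he : dγ k = fun x => (ω^k * Ξ k x)^2 := rfl
      rw [he]
      exact h1.pow 2
    have hSopcont : ContinuousOn Sop Λ := by
      have he : Sop = fun x => 1 - Qf x * Qe x := rfl
      rw [he]
      exact continuousOn_const.sub (hQF.mul hQE)
    have hRinv : ContinuousOn (fun x => Ring.inverse (Sop x)) Λ := by
      intro x hx
      have h1 : ContinuousAt Ring.inverse ((hSunit x hx).unit : Euc d →L[ℝ] Euc d) :=
        NormedRing.inverse_continuousAt (hSunit x hx).unit
      rw [IsUnit.unit_spec] at h1
      exact h1.comp_continuousWithinAt (hSopcont x hx)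
    have hPfcont : ContinuousOn Pf Λ := by
      have he : Pf = fun x => Ring.inverse (Sop x) * (Qf x * (1 - Qe x)) := rfl
      rw [he]
      exact hRinv.mul (hQF.mul (continuousOn_const.sub hQE))
    have hPecont : ContinuousOn Pe Λ := by
      have he : Pe = fun x => 1 - Pf x := rfl
      rw [he]
      exact continuousOn_const.sub hPfcont
    have hTβcont : ∀ j, ContinuousOn (Tβ j) Λ := by
      intro j
      have he : Tβ j = fun x => (fderiv ℝ (f^[j]) x).comp (Pe x) := rfl
      rw [he]
      exact (((hcfIter j).continuous_fderiv one_ne_zero).continuousOn).clm_comp hPecont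
    have hTγcont : ∀ k, ContinuousOn (Tγ k) Λ := by
      intro k
      have he : Tγ k = fun x => (fderiv ℝ (g^[k]) x).comp (Pf x) := rfl
      rw [he]
      exact (((hcgIter k).continuous_fderiv one_ne_zero).continuousOn).clm_comp hPfcont
    have hadjcont : Continuous (fun T : Euc d →L[ℝ] Euc d => ContinuousLinearMap.adjoint T) :=
      (ContinuousLinearMap.adjoint :
        (Euc d →L[ℝ] Euc d) ≃ₗᵢ⋆[ℝ] (Euc d →L[ℝ] Euc d)).continuous
    have hBopcont : ContinuousOn Bop Λ := by
      have he : Bop = fun x =>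
          (∑ j ∈ Finset.range N, cβ j x •
            ((ContinuousLinearMap.adjoint (Tβ j x)).comp (Tβ j x))) +
          (∑ k ∈ Finset.range N, dγ k x •
            ((ContinuousLinearMap.adjoint (Tγ k x)).comp (Tγ k x))) := rfl
      rw [he]
      apply ContinuousOn.add
      · apply continuousOn_finset_sum
        intro j _
        exact (hcβcont j).smul
          ((hadjcont.comp_continuousOn (hTβcont j)).clm_comp (hTβcont j))
      · apply continuousOn_finset_sum
        intro k _
        exact (hdγcont k).smul
          ((hadjcont.comp_continuousOn (hTγcont k)).clm_comp (hTγcont k))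
    have he : B = fun x => sqForm (Bop x) := rfl
    rw [he]
    exact continuous_sqForm.comp_continuousOn hBopcont
  -- ===== uniform equivalence constant =====
  obtain ⟨c₁, hc₁⟩ := hΛ.exists_bound_of_continuousOn (f := B) hBcont
  set c : ℝ := Real.sqrt (max c₁ 2) with hcdef
  have hc2 : (2:ℝ) ≤ max c₁ 2 := le_max_right _ _
  have hcge : Real.sqrt 2 ≤ c := by
    rw [hcdef]; exact Real.sqrt_le_sqrt hc2
  have hc1' : 1 ≤ c := by
    have h1 : (1:ℝ) ≤ Real.sqrt 2 := by
      rw [show (1:ℝ) = Real.sqrt 1 by rw [Real.sqrt_one]]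
      exact Real.sqrt_le_sqrt (by norm_num)
    linarith
  have hcpos : 0 < c := lt_of_lt_of_le one_pos hc1'
  have hbounds : ∀ x ∈ Λ, ∀ w : Euc d,
      c⁻¹ * ‖w‖ ≤ Real.sqrt (B x w w) ∧ Real.sqrt (B x w w) ≤ c * ‖w‖ := by
    intro x hx w
    have hup : B x w w ≤ (max c₁ 2) * ‖w‖^2 := by
      calc B x w w ≤ |B x w w| := le_abs_self _
        _ = ‖B x w w‖ := (Real.norm_eq_abs _).symm
        _ ≤ ‖B x‖ * ‖w‖ * ‖w‖ := ContinuousLinearMap.le_opNorm₂ (B x) w w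
        _ ≤ (max c₁ 2) * ‖w‖ * ‖w‖ := by
            have h1 := (hc₁ x hx).trans (le_max_left c₁ 2)
            exact mul_le_mul_of_nonneg_right
              (mul_le_mul_of_nonneg_right h1 (norm_nonneg _)) (norm_nonneg _)
        _ = (max c₁ 2) * ‖w‖^2 := by ring
    have hc2pos : (0:ℝ) < max c₁ 2 := lt_of_lt_of_le two_pos hc2
    have hcsq : c^2 = max c₁ 2 := by
      rw [hcdef]
      exact Real.sq_sqrt (le_of_lt hc2pos)
    constructor
    · have h2 : (c⁻¹ * ‖w‖)^2 ≤ B x w w := by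
        have h3 : (c⁻¹ * ‖w‖)^2 = (c^2)⁻¹ * ‖w‖^2 := by
          rw [mul_pow, inv_pow]
        have h5 : (2:ℝ) ≤ c^2 := by rw [hcsq]; exact hc2
        have h6 : (c^2)⁻¹ ≤ (2:ℝ)⁻¹ := by
          apply inv_anti₀ two_pos h5
        calc (c⁻¹ * ‖w‖)^2 = (c^2)⁻¹ * ‖w‖^2 := h3
          _ ≤ (2:ℝ)⁻¹ * ‖w‖^2 := mul_le_mul_of_nonneg_right h6 (sq_nonneg _)
          _ = (1/2) * ‖w‖^2 := by norm_num
          _ ≤ B x w w := hBlow x w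
      have h7 := Real.sqrt_le_sqrt h2
      rwa [Real.sqrt_sq (by positivity)] at h7
    · have h8 : B x w w ≤ (c * ‖w‖)^2 := by
        rw [mul_pow, hcsq]
        exact hup
      have h9 := Real.sqrt_le_sqrt h8
      rwa [Real.sqrt_sq (by positivity)] at h9
  -- ===== the one-step main estimates =====
  have hβmain : ∀ x ∈ Λ, ∀ u ∈ E x, u ≠ 0 →
      B (f x) (fderiv ℝ f x u) (fderiv ℝ f x u) ≤ σ^2 * Θ x^2 * B x u u := by
    intro x hx u hu hu0
    have hu0' : (0:ℝ) < ‖u‖ := by simpa [norm_pos_iff] using hu0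
    have hDu : fderiv ℝ f x u ∈ E (f x) := hEmem x hx u hu
    rw [hBE (f x) (hmapsf x hx) _ hDu, hBE x hx u hu]
    have hIx := hI x hx u hu hu0
    have hbd : cβ N x * ‖fderiv ℝ (f^[N]) x u‖^2 ≤ cβ 0 x * ‖fderiv ℝ (f^[0]) x u‖^2 := by
      rw [hcβ0, one_mul, hρ0 x u]
      have hΘNp := hΘprodpos N x
      have hpos : (0:ℝ) < σ^N * Θprod N x := by positivity
      have h3 : ‖fderiv ℝ (f^[N]) x u‖ / (σ^N * Θprod N x) ≤ ‖u‖ := by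
        rw [div_le_iff₀ hpos]
        calc ‖fderiv ℝ (f^[N]) x u‖ ≤ σ^N * Θprod N x * ‖u‖ := hIx
          _ = ‖u‖ * (σ^N * Θprod N x) := by ring
      have h4 : (‖fderiv ℝ (f^[N]) x u‖ / (σ^N * Θprod N x))^2 ≤ ‖u‖^2 :=
        pow_le_pow_left₀ (by positivity) h3 2
      have he : cβ N x = ((σ^N * Θprod N x)⁻¹)^2 := rfl
      calc cβ N x * ‖fderiv ℝ (f^[N]) x u‖^2
          = (‖fderiv ℝ (f^[N]) x u‖ / (σ^N * Θprod N x))^2 := by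
            rw [he, div_pow]
            field_simp
          _ ≤ ‖u‖^2 := h4
    have hsum1 : ∑ j ∈ Finset.range N, cβ (j+1) x * ‖fderiv ℝ (f^[j+1]) x u‖^2
        = (∑ j ∈ Finset.range N, cβ j x * ‖fderiv ℝ (f^[j]) x u‖^2)
          - cβ 0 x * ‖fderiv ℝ (f^[0]) x u‖^2
          + cβ N x * ‖fderiv ℝ (f^[N]) x u‖^2 := by
      have h5 := Finset.sum_range_succ' (fun j => cβ j x * ‖fderiv ℝ (f^[j]) x u‖^2) N
      have h6 := Finset.sum_range_succ (fun j => cβ j x * ‖fderiv ℝ (f^[j]) x u‖^2) N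
      linarith [h5, h6]
    have hθ2 : (0:ℝ) ≤ σ^2 * Θ x^2 := by positivity
    calc ∑ j ∈ Finset.range N, cβ j (f x) * ‖fderiv ℝ (f^[j]) (f x) (fderiv ℝ f x u)‖^2
        = ∑ j ∈ Finset.range N, (σ^2 * Θ x^2) * (cβ (j+1) x * ‖fderiv ℝ (f^[j+1]) x u‖^2) := by
          refine Finset.sum_congr rfl (fun j _ => ?_)
          rw [hDsucc j x u, hcβ_shift j x]
          ring
      _ = (σ^2 * Θ x^2) * ∑ j ∈ Finset.range N, cβ (j+1) x * ‖fderiv ℝ (f^[j+1]) x u‖^2 :=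
          (Finset.mul_sum _ _ _).symm
      _ ≤ (σ^2 * Θ x^2) * ∑ j ∈ Finset.range N, cβ j x * ‖fderiv ℝ (f^[j]) x u‖^2 := by
          apply mul_le_mul_of_nonneg_left _ hθ2
          rw [hsum1]
          linarith [hbd]
      _ = σ^2 * Θ x^2 * ∑ j ∈ Finset.range N, cβ j x * ‖fderiv ℝ (f^[j]) x u‖^2 := rfl
  have hγmain : ∀ x ∈ Λ, ∀ v ∈ F x, v ≠ 0 →
      ω^2 * Θ x^2 * B x v v ≤ B (f x) (fderiv ℝ f x v) (fderiv ℝ f x v) := by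
    intro x hx v hv hv0
    have hDv : fderiv ℝ f x v ∈ F (f x) := hFmem x hx v hv
    rw [hBF (f x) (hmapsf x hx) _ hDv, hBF x hx v hv]
    have hy : g^[M] x ∈ Λ := hmapsgI M x hx
    have hwF : fderiv ℝ (g^[M]) x v ∈ F (g^[M] x) := hFmemgI M x hx v hv
    have hid : fderiv ℝ (f^[M]) (g^[M] x) (fderiv ℝ (g^[M]) x v) = v := by
      have h1 : f^[M] ∘ g^[M] = id := funext (hfgIter M)
      have h2 := hchain (f^[M]) (g^[M]) (hdfIter M) (hdgIter M) x
      rw [h1, fderiv_id] at h2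
      have h3 := congrArg (fun (T : Euc d →L[ℝ] Euc d) => T v) h2
      simpa using h3.symm
    have hw0 : fderiv ℝ (g^[M]) x v ≠ 0 := by
      intro h0
      rw [h0, map_zero] at hid
      exact hv0 hid.symm
    have hNid : fderiv ℝ (f^[N]) (g^[M] x) (fderiv ℝ (g^[M]) x v) = fderiv ℝ f x v := by
      rw [hMN, ← hDsucc' M (g^[M] x) (fderiv ℝ (g^[M]) x v), hfgIter M x, hid]
    have hIIy := hII (g^[M] x) hy _ hwF hw0
    rw [hNid, hΘprod_back x] at hIIy
    have hbd : ω^2 * Θ x^2 * (dγ M x * ‖fderiv ℝ (g^[M]) x v‖^2)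
        ≤ dγ 0 (f x) * ‖fderiv ℝ (g^[0]) (f x) (fderiv ℝ f x v)‖^2 := by
      rw [hdγ0, one_mul, hρ0g (f x) (fderiv ℝ f x v)]
      have hdg : dγ M x = (ω^M * Ξ M x)^2 := rfl
      have h6 : ω^2 * Θ x^2 * ((ω^M * Ξ M x)^2 * ‖fderiv ℝ (g^[M]) x v‖^2)
          = (ω^N * (Θ x * Ξ M x) * ‖fderiv ℝ (g^[M]) x v‖)^2 := by
        rw [hMN]
        ring
      rw [hdg, h6]
      have hθp := hΘpos x
      have hξp := hΞpos M x
      exact pow_le_pow_left₀ (by positivity) hIIy 2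
    have hsplitL : ∑ k ∈ Finset.range N, dγ k (f x) * ‖fderiv ℝ (g^[k]) (f x) (fderiv ℝ f x v)‖^2
        = (∑ k ∈ Finset.range M, dγ (k+1) (f x) * ‖fderiv ℝ (g^[k+1]) (f x) (fderiv ℝ f x v)‖^2)
          + dγ 0 (f x) * ‖fderiv ℝ (g^[0]) (f x) (fderiv ℝ f x v)‖^2 := by
      rw [hMN]
      exact Finset.sum_range_succ' _ M
    have hsplitR : ∑ k ∈ Finset.range N, dγ k x * ‖fderiv ℝ (g^[k]) x v‖^2
        = (∑ k ∈ Finset.range M, dγ k x * ‖fderiv ℝ (g^[k]) x v‖^2)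
          + dγ M x * ‖fderiv ℝ (g^[M]) x v‖^2 := by
      rw [hMN]
      exact Finset.sum_range_succ _ M
    rw [hsplitL, hsplitR, mul_add]
    apply add_le_add _ hbd
    have hterm : ∀ k ∈ Finset.range M,
        ω^2 * Θ x^2 * (dγ k x * ‖fderiv ℝ (g^[k]) x v‖^2)
        = dγ (k+1) (f x) * ‖fderiv ℝ (g^[k+1]) (f x) (fderiv ℝ f x v)‖^2 := by
      intro k _
      rw [hDgsucc k x v, hdγ_shift k x]
      ring
    rw [Finset.mul_sum]
    exact le_of_eq (Finset.sum_congr rfl hterm)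
  -- ===== conclusion =====
  refine ⟨B, lam', c, hlam'0, hlam'1, hc1', hBcont,
    (fun x _ u v => hBsymm x u v), (fun x _ w hw => hBpos x w hw), hbounds, ?_⟩
  intro x hx u hu hu0 v hv hv0
  have hBu : 0 < B x u u := hBpos x u hu0
  have hBv : 0 < B x v v := hBpos x v hv0
  have hθ := hΘpos x
  have hsu : 0 < Real.sqrt (B x u u) := Real.sqrt_pos.mpr hBu
  have hsv : 0 < Real.sqrt (B x v v) := Real.sqrt_pos.mpr hBv
  have h1 : Real.sqrt (B (f x) (fderiv ℝ f x u) (fderiv ℝ f x u))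
      ≤ σ * Θ x * Real.sqrt (B x u u) := by
    have h2 := hβmain x hx u hu hu0
    have h3 : σ^2 * Θ x^2 * B x u u = (σ * Θ x * Real.sqrt (B x u u))^2 := by
      linear_combination (-(σ^2 * Θ x^2)) * (Real.sq_sqrt (le_of_lt hBu))
    calc Real.sqrt (B (f x) (fderiv ℝ f x u) (fderiv ℝ f x u))
        ≤ Real.sqrt (σ^2 * Θ x^2 * B x u u) := Real.sqrt_le_sqrt h2
      _ = σ * Θ x * Real.sqrt (B x u u) := by
          rw [h3, Real.sqrt_sq (by positivity)]
  have h4 : ω * Θ x * Real.sqrt (B x v v)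
      ≤ Real.sqrt (B (f x) (fderiv ℝ f x v) (fderiv ℝ f x v)) := by
    have h5 := hγmain x hx v hv hv0
    have h6 : ω^2 * Θ x^2 * B x v v = (ω * Θ x * Real.sqrt (B x v v))^2 := by
      linear_combination (-(ω^2 * Θ x^2)) * (Real.sq_sqrt (le_of_lt hBv))
    calc ω * Θ x * Real.sqrt (B x v v)
        = Real.sqrt (ω^2 * Θ x^2 * B x v v) := by
          rw [h6, Real.sqrt_sq (by positivity)]
      _ ≤ Real.sqrt (B (f x) (fderiv ℝ f x v) (fderiv ℝ f x v)) := Real.sqrt_le_sqrt h5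
  have h7 : Real.sqrt (B (f x) (fderiv ℝ f x u) (fderiv ℝ f x u)) / Real.sqrt (B x u u)
      ≤ σ * Θ x := by
    rw [div_le_iff₀ hsu]
    exact h1
  have h8 : ω * Θ x
      ≤ Real.sqrt (B (f x) (fderiv ℝ f x v) (fderiv ℝ f x v)) / Real.sqrt (B x v v) := by
    rw [le_div_iff₀ hsv]
    exact h4
  have hωne : ω ≠ 0 := ne_of_gt hωpos
  have h9 : σ * Θ x ≤ lam' *
      (Real.sqrt (B (f x) (fderiv ℝ f x v) (fderiv ℝ f x v)) / Real.sqrt (B x v v)) := by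
    calc σ * Θ x = lam' * (ω * Θ x) := by
          rw [hlam'def]
          field_simp
      _ ≤ _ := mul_le_mul_of_nonneg_left h8 (le_of_lt hlam'0)
  exact le_trans h7 h9
end
end

section
/- Equip ℝ² with the maximum norm ‖(s,t)‖ = max(|s|, |t|), and for a > 0 let C_a^u := {(s,t) ∈ ℝ² : |s| ≤ a·|t|}. Given σ > 1, there exist η > 0, β > 0 and σ₁ > 1 with e^β + η < σ such that the following holds. Let Ω ⊆ ℝ² be open and let h : Ω → ℝ² be a differentiable map of the form h(x,y) = (u(x,y), v(y)) such that at every point of Ω one has |∂u/∂x| ≤ e^β, |∂u/∂y| < η and |v'(y)| ≥ σ. Then, setting ρ = (e^β + η)/σ < 1: (i) Dh_{(x,y)}(C_1^u) ⊆ C_ρ^u for every (x,y) ∈ Ω; (ii) ‖Dh_{(x,y)} w‖ ≥ σ₁·‖w‖ for every (x,y) ∈ Ω and every w ∈ C_1^u. -/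
noncomputable section

/-- The unstable cone {(s,t) : |s| ≤ a·|t|} in ℝ², for the maximum norm
(the product norm on ℝ × ℝ is the maximum norm). -/
def Cu (a : ℝ) : Set (ℝ × ℝ) := {w | |w.1| ≤ a * |w.2|}

/-- cone-field estimate for skew-product-like planar maps. -/
theorem cone_field_lemma (σ : ℝ) (hσ : 1 < σ) :
    ∃ (η β σ₁ : ℝ), 0 < η ∧ 0 < β ∧ 1 < σ₁ ∧ Real.exp β + η < σ ∧
      ∀ (Ω : Set (ℝ × ℝ)), IsOpen Ω →
      ∀ (u : ℝ × ℝ → ℝ) (v : ℝ → ℝ),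
        (∀ p ∈ Ω, DifferentiableAt ℝ u p) →
        (∀ p ∈ Ω, DifferentiableAt ℝ v p.2) →
        (∀ p ∈ Ω, |fderiv ℝ u p (1, 0)| ≤ Real.exp β) →
        (∀ p ∈ Ω, |fderiv ℝ u p (0, 1)| < η) →
        (∀ p ∈ Ω, σ ≤ |deriv v p.2|) →
        (Real.exp β + η) / σ < 1 ∧
        ∀ p ∈ Ω, ∀ w ∈ Cu 1,
          fderiv ℝ (fun q : ℝ × ℝ => (u q, v q.2)) p w ∈ Cu ((Real.exp β + η) / σ) ∧
          σ₁ * ‖w‖ ≤ ‖fderiv ℝ (fun q : ℝ × ℝ => (u q, v q.2)) p w‖ := by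
  have hσ0 : (0:ℝ) < σ := by linarith
  refine ⟨(σ - 1) / 4, Real.log ((σ + 1) / 2), σ, by linarith, ?_, hσ, ?_, ?_⟩
  · exact Real.log_pos (by linarith)
  · rw [Real.exp_log (by linarith)]; linarith
  intro Ω hΩ u v hu hv hux huy hv'
  rw [Real.exp_log (by linarith)]
  set E : ℝ := (σ + 1) / 2 + (σ - 1) / 4 with hE
  have hEσ : E < σ := by rw [hE]; linarith
  have hE0 : 0 < E := by rw [hE]; linarith
  constructor
  · exact div_lt_one hσ0 |>.2 hEσ
  intro p hp w hw
  have hw1 : |w.1| ≤ |w.2| := by simpa [Cu] using hw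
  have hdu := hu p hp
  have hdv := hv p hp
  have hDeq : fderiv ℝ (fun q : ℝ × ℝ => (u q, v q.2)) p
      = (fderiv ℝ u p).prod ((fderiv ℝ v p.2).comp (ContinuousLinearMap.snd ℝ ℝ ℝ)) := by
    have h2 : DifferentiableAt ℝ (fun q : ℝ × ℝ => v q.2) p :=
      hdv.comp p differentiable_snd.differentiableAt
    rw [hdu.fderiv_prodMk h2]
    congr 1
    rw [show (fun q : ℝ × ℝ => v q.2) = v ∘ Prod.snd from rfl,
      fderiv_comp p hdv differentiable_snd.differentiableAt]
    congr 1
    exact fderiv_snd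
  have hval : fderiv ℝ (fun q : ℝ × ℝ => (u q, v q.2)) p w
      = (fderiv ℝ u p w, deriv v p.2 * w.2) := by
    rw [hDeq]
    simp [ContinuousLinearMap.prod_apply]
    ring
  have hsplit : fderiv ℝ u p w = w.1 * fderiv ℝ u p (1,0) + w.2 * fderiv ℝ u p (0,1) := by
    have hwdecomp : w = w.1 • ((1:ℝ),(0:ℝ)) + w.2 • ((0:ℝ),(1:ℝ)) := by
      ext <;> simp
    conv_lhs => rw [hwdecomp]
    rw [(fderiv ℝ u p).map_add, (fderiv ℝ u p).map_smul, (fderiv ℝ u p).map_smul]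
    simp [mul_comm]
  have hb := hux p hp
  rw [Real.exp_log (by linarith)] at hb
  have he := huy p hp
  have hvp := hv' p hp
  have h1 : |fderiv ℝ u p w| ≤ E * |w.2| := by
    calc |fderiv ℝ u p w| = |w.1 * fderiv ℝ u p (1,0) + w.2 * fderiv ℝ u p (0,1)| := by
          rw [hsplit]
      _ ≤ |w.1| * |fderiv ℝ u p (1,0)| + |w.2| * |fderiv ℝ u p (0,1)| := by
          refine (abs_add_le _ _).trans ?_
          rw [abs_mul, abs_mul]
      _ ≤ E * |w.2| := by
          rw [hE]
          nlinarith [abs_nonneg w.1, abs_nonneg w.2, abs_nonneg (fderiv ℝ u p (0,1)),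
            abs_nonneg (fderiv ℝ u p (1,0))]
  have h2 : σ * |w.2| ≤ |deriv v p.2 * w.2| := by
    rw [abs_mul]
    exact mul_le_mul_of_nonneg_right hvp (abs_nonneg _)
  constructor
  · rw [hval]
    show |fderiv ℝ u p w| ≤ E / σ * |deriv v p.2 * w.2|
    calc |fderiv ℝ u p w| ≤ E * |w.2| := h1
      _ = E / σ * (σ * |w.2|) := by field_simp
      _ ≤ E / σ * |deriv v p.2 * w.2| :=
          mul_le_mul_of_nonneg_left h2 (by positivity)
  · rw [hval]
    have hnw : ‖w‖ = |w.2| := by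
      rw [Prod.norm_def]
      simp [Real.norm_eq_abs, max_eq_right hw1]
    rw [hnw, Prod.norm_def]
    simp only [Real.norm_eq_abs]
    calc σ * |w.2| ≤ |deriv v p.2 * w.2| := h2
      _ ≤ max |fderiv ℝ u p w| |deriv v p.2 * w.2| := le_max_right _ _
end
end

section
/- Let η > 0, δ > 0, α > 0, γ > 0, β > 0 and λ ∈ ℝ satisfy e^β < 2 and λ > −β. Let h : ℝ² → ℝ² be a C¹ map of the form h(x,y) = (u(x,y), v(y)) such that 0 < ∂u/∂x(x,y) ≤ e^{−λ} and |∂u/∂y(x,y)| < η for all (x,y) ∈ ℝ². Then there exists a C¹ map g : ℝ² → ℝ² which coincides with h outside the open ball of radius δ centered at the origin, of the form g(x,y) = (ũ(x,y), v(y)), such that: (i) 0 < ∂ũ/∂x(x,y) ≤ e^{γ−λ} and |∂ũ/∂y(x,y)| < η for all (x,y); (ii) sup_{(x,y)} ‖g(x,y) − h(x,y)‖ < α; (iii) sup_{(x,y)} ‖Dg_{(x,y)} − Dh_{(x,y)}‖_{op} < 2(e^γ − 1); (iv) ∂ũ/∂x(0,0) = e^γ·∂u/∂x(0,0) and ∂ũ/∂y(0,0)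 = ∂u/∂y(0,0), so that Dg_{(0,0)}(1,0) = e^γ·Dh_{(0,0)}(1,0). -/
noncomputable section

abbrev E2 := EuclideanSpace ℝ (Fin 2)

/-- The point of ℝ² (with the Euclidean norm) with coordinates (a, b). -/
def mk2 (a b : ℝ) : E2 := (WithLp.equiv 2 (Fin 2 → ℝ)).symm ![a, b]

/-- The first standard basis vector. -/
def e0 : E2 := mk2 1 0
/-- The second standard basis vector. -/
def e1 : E2 := mk2 0 1

open Metric MeasureTheory intervalIntegral
lemma coord_le_norm (p : E2) (i : Fin 2) : |p i| ≤ ‖p‖ := by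
  rw [EuclideanSpace.norm_eq, ← Real.sqrt_sq_eq_abs]
  apply Real.sqrt_le_sqrt
  calc p i ^ 2 = ‖p i‖ ^ 2 := by rw [Real.norm_eq_abs, sq_abs]
  _ ≤ _ := Finset.single_le_sum (f := fun j => ‖p j‖^2) (fun j _ => sq_nonneg _) (Finset.mem_univ i)

lemma norm_le_add (p : E2) : ‖p‖ ≤ |p 0| + |p 1| := by
  rw [EuclideanSpace.norm_eq, Fin.sum_univ_two]
  rw [show ‖p 0‖^2 + ‖p 1‖^2 = (p 0)^2 + (p 1)^2 by rw [Real.norm_eq_abs, Real.norm_eq_abs, sq_abs, sq_abs]]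
  have h : (p 0)^2 + (p 1)^2 ≤ (|p 0| + |p 1|)^2 := by
    have := abs_nonneg (p 0); have := abs_nonneg (p 1)
    nlinarith [sq_abs (p 0), sq_abs (p 1), mul_nonneg (abs_nonneg (p 0)) (abs_nonneg (p 1))]
  calc Real.sqrt ((p 0)^2 + (p 1)^2) ≤ Real.sqrt ((|p 0| + |p 1|)^2) := Real.sqrt_le_sqrt h
  _ = |p 0| + |p 1| := Real.sqrt_sq (by positivity)

lemma opnorm_le (φ : E2 →L[ℝ] ℝ) : ‖φ‖ ≤ |φ e0| + |φ e1| := by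
  apply ContinuousLinearMap.opNorm_le_bound _ (by positivity)
  intro x
  have hx : x = x 0 • e0 + x 1 • e1 := by
    ext i; fin_cases i <;> simp [e0, e1, mk2]
  calc ‖φ x‖ = ‖x 0 * φ e0 + x 1 * φ e1‖ := by
        conv_lhs => rw [hx]
        simp [map_add, _root_.map_smul, smul_eq_mul]
  _ ≤ |x 0 * φ e0| + |x 1 * φ e1| := abs_add_le _ _
  _ = |x 0| * |φ e0| + |x 1| * |φ e1| := by rw [abs_mul, abs_mul]
  _ ≤ ‖x‖ * |φ e0| + ‖x‖ * |φ e1| := by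
        gcongr <;> [exact coord_le_norm x 0; exact coord_le_norm x 1]
  _ = (|φ e0| + |φ e1|) * ‖x‖ := by ring

lemma mk2_decomp (a b : ℝ) : mk2 a b = a • e0 + b • e1 := by
  ext i; fin_cases i <;> simp [mk2, e0, e1]

lemma norm_smul_e0 (a : ℝ) : ‖a • (e0:E2)‖ = |a| := by
  rw [norm_smul]
  have : ‖(e0:E2)‖ = 1 := by
    rw [EuclideanSpace.norm_eq]
    simp [Fin.sum_univ_two, e0, mk2]
  simp [this, Real.norm_eq_abs]
open MeasureTheory intervalIntegral Metric

lemma exists_plateau (κ ε r : ℝ) (hκ : 0 < κ) (hε : 0 < ε) (hr : 0 < r) :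
    ∃ t : ℝ → ℝ, ContDiff ℝ 1 t ∧ t 0 = 0 ∧ deriv t 0 = 1 ∧
      (∀ x, deriv t x ≤ 1) ∧ (∀ x, -κ ≤ deriv t x) ∧ (∀ x, |t x| ≤ ε) ∧
      (∀ x, r ≤ |x| → t x = 0) ∧ (∀ x, r ≤ |x| → deriv t x = 0) := by
  -- helpers
  have hIzero : ∀ (F : ℝ → ℝ) (a b : ℝ), (∀ z ∈ Set.uIcc a b, F z = 0) →
      (∫ z in a..b, F z) = 0 := by
    intro F a b h
    rw [intervalIntegral.integral_congr (g := fun _ => (0:ℝ)) h, intervalIntegral.integral_zero]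
  have hextR : ∀ (F : ℝ → ℝ), Continuous F → (∀ z, 0 ≤ F z) → ∀ a b c : ℝ, a ≤ b → b ≤ c →
      (∫ z in a..b, F z) ≤ ∫ z in a..c, F z := by
    intro F hFc hFnn a b c hab hbc
    rw [← intervalIntegral.integral_add_adjacent_intervals (hFc.intervalIntegrable a b)
      (hFc.intervalIntegrable b c)]
    have := intervalIntegral.integral_nonneg (μ := volume) (f := F) hbc (fun u _ => hFnn u)
    linarith
  have hextL : ∀ (F : ℝ → ℝ), Continuous F → (∀ z, 0 ≤ F z) → ∀ a b c : ℝ, a ≤ b → b ≤ c →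
      (∫ z in b..c, F z) ≤ ∫ z in a..c, F z := by
    intro F hFc hFnn a b c hab hbc
    rw [← intervalIntegral.integral_add_adjacent_intervals (hFc.intervalIntegrable a b)
      (hFc.intervalIntegrable b c)]
    have := intervalIntegral.integral_nonneg (μ := volume) (f := F) hab (fun u _ => hFnn u)
    linarith
  have hIle : ∀ (F : ℝ → ℝ), Continuous F → (∀ z, F z ≤ 1) → ∀ a b : ℝ, a ≤ b →
      (∫ z in a..b, F z) ≤ b - a := by
    intro F hFc hFle a b hab
    calc (∫ z in a..b, F z) ≤ ∫ _z in a..b, (1:ℝ) :=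
          intervalIntegral.integral_mono_on hab (hFc.intervalIntegrable a b)
            (continuous_const.intervalIntegrable a b) (fun x _ => hFle x)
    _ = b - a := by simp
  -- the bump
  set f : ContDiffBump (0:ℝ) := ⟨1/2, 1, by norm_num, by norm_num⟩ with hf
  have frIn : f.rIn = 1/2 := rfl
  have frOut : f.rOut = 1 := rfl
  set g : ℝ → ℝ := fun z => f ((4*z - 2*r)/r) with hg
  have hgc : Continuous g := f.continuous.comp ((((continuous_const.mul continuous_id).sub continuous_const).div_const r))
  have hg0 : ∀ z, z ≤ r/4 → g z = 0 := by
    intro z hz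
    apply f.zero_of_le_dist
    rw [frOut, Real.dist_eq, sub_zero, abs_div, abs_of_pos hr, le_div_iff₀ hr, abs_sub_comm]
    calc (1:ℝ) * r = r := one_mul r
    _ ≤ |2*r - 4*z| := by rw [abs_of_nonneg (by linarith)]; linarith
  have hg0' : ∀ z, 3*r/4 ≤ z → g z = 0 := by
    intro z hz
    apply f.zero_of_le_dist
    rw [frOut, Real.dist_eq, sub_zero, abs_div, abs_of_pos hr, le_div_iff₀ hr]
    calc (1:ℝ) * r = r := one_mul r
    _ ≤ |4*z - 2*r| := by rw [abs_of_nonneg (by linarith)]; linarith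
  have hgnn : ∀ z, 0 ≤ g z := fun z => f.nonneg
  have hgle1 : ∀ z, g z ≤ 1 := fun z => f.le_one
  set J : ℝ := ∫ z in (0:ℝ)..r, g z with hJ
  have hJpos : 0 < J := by
    rw [hJ, ← intervalIntegral.integral_add_adjacent_intervals
        (hgc.intervalIntegrable 0 (r/4)) (hgc.intervalIntegrable (r/4) r),
      ← intervalIntegral.integral_add_adjacent_intervals (a := r/4) (b := 3*r/4) (c := r)
        (hgc.intervalIntegrable _ _) (hgc.intervalIntegrable _ _)]
    have h1 : (∫ z in (0:ℝ)..(r/4), g z) = 0 := by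
      apply hIzero; intro z hz
      rw [Set.uIcc_of_le (by linarith)] at hz
      exact hg0 z hz.2
    have h2 : (∫ z in (3*r/4)..r, g z) = 0 := by
      apply hIzero; intro z hz
      rw [Set.uIcc_of_le (by linarith)] at hz
      exact hg0' z hz.1
    have h3 : 0 < ∫ z in (r/4)..(3*r/4), g z := by
      apply intervalIntegral.intervalIntegral_pos_of_pos_on (hgc.intervalIntegrable _ _)
      · intro z hz
        apply f.pos_of_mem_ball
        rw [mem_ball, frOut, Real.dist_eq, sub_zero, abs_div, abs_of_pos hr, div_lt_iff₀ hr,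
          one_mul, abs_lt]
        constructor <;> [linarith [hz.1]; linarith [hz.2]]
      · linarith
    linarith
  -- the small scale
  set l : ℝ := min (min ε (r/4)) (κ*J/2) with hl
  have hl0 : 0 < l := by
    apply lt_min (lt_min hε (by linarith)) (by positivity)
  have hlε : l ≤ ε := le_trans (min_le_left _ _) (min_le_left _ _)
  have hlr : l ≤ r/4 := le_trans (min_le_left _ _) (min_le_right _ _)
  have hlκ : l ≤ κ*J/2 := min_le_right _ _
  set F0 : ℝ → ℝ := fun z => f (z/l) with hF0
  have hF0c : Continuous F0 := f.continuous.comp (continuous_id.div_const l)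
  have hF0z : ∀ z, l ≤ |z| → F0 z = 0 := by
    intro z hz
    apply f.zero_of_le_dist
    rw [frOut, Real.dist_eq, sub_zero, abs_div, abs_of_pos hl0, le_div_iff₀ hl0, one_mul]
    exact hz
  have hF0one : F0 0 = 1 := by
    apply f.one_of_mem_closedBall
    rw [mem_closedBall, frIn, Real.dist_eq]
    norm_num
  have hF0nn : ∀ z, 0 ≤ F0 z := fun z => f.nonneg
  have hF0le1 : ∀ z, F0 z ≤ 1 := fun z => f.le_one
  -- masses
  set A : ℝ := ∫ z in (0:ℝ)..r, F0 z with hA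
  set A' : ℝ := ∫ z in (-r)..(0:ℝ), F0 z with hA'
  have hAnn : 0 ≤ A :=
    intervalIntegral.integral_nonneg (by linarith) (fun u _ => hF0nn u)
  have hA'nn : 0 ≤ A' :=
    intervalIntegral.integral_nonneg (by linarith) (fun u _ => hF0nn u)
  have hAle : A ≤ l := by
    rw [hA, ← intervalIntegral.integral_add_adjacent_intervals
      (hF0c.intervalIntegrable 0 l) (hF0c.intervalIntegrable l r)]
    have h1 : (∫ z in l..r, F0 z) = 0 := by
      apply hIzero; intro z hz
      rw [Set.uIcc_of_le (by linarith)] at hz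
      exact hF0z z (le_trans hz.1 (le_abs_self z))
    have h2 := hIle F0 hF0c hF0le1 0 l (le_of_lt hl0)
    rw [h1]; linarith
  have hA'le : A' ≤ l := by
    rw [hA', ← intervalIntegral.integral_add_adjacent_intervals
      (hF0c.intervalIntegrable (-r) (-l)) (hF0c.intervalIntegrable (-l) 0)]
    have h1 : (∫ z in (-r)..(-l), F0 z) = 0 := by
      apply hIzero; intro z hz
      rw [Set.uIcc_of_le (by linarith)] at hz
      apply hF0z z
      rw [abs_of_nonpos (by linarith [hz.2])]
      linarith [hz.2]
    have h2 := hIle F0 hF0c hF0le1 (-l) 0 (by linarith)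
    rw [h1]; linarith
  set c : ℝ := A/J with hc
  set c' : ℝ := A'/J with hc'
  have hcnn : 0 ≤ c := div_nonneg hAnn (le_of_lt hJpos)
  have hc'nn : 0 ≤ c' := div_nonneg hA'nn (le_of_lt hJpos)
  have hcle : c ≤ l/J := by rw [hc]; gcongr
  have hc'le : c' ≤ l/J := by rw [hc']; gcongr
  -- ψ and t
  set ψ : ℝ → ℝ := fun z => F0 z - c * g z - c' * g (-z) with hψ
  have hψc : Continuous ψ := by
    apply (hF0c.sub ((continuous_const.mul hgc))).sub
    exact continuous_const.mul (hgc.comp continuous_neg)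
  set t : ℝ → ℝ := fun x => ∫ z in (0:ℝ)..x, ψ z with ht
  have hderiv : ∀ x, deriv t x = ψ x := fun x => Continuous.deriv_integral ψ hψc 0 x
  have hcd : ContDiff ℝ 1 t := by
    rw [contDiff_one_iff_deriv]
    refine ⟨fun x => ((Continuous.integral_hasStrictDerivAt hψc 0 x).hasDerivAt).differentiableAt, ?_⟩
    have : deriv t = ψ := funext hderiv
    rw [this]; exact hψc
  -- ψ pointwise facts
  have hψ0 : ψ 0 = 1 := by
    have h1 : g 0 = 0 := hg0 0 (by linarith)
    have h2 : g (-0) = 0 := by rw [neg_zero]; exact h1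
    simp only [hψ, hF0one, h1, h2, mul_zero, sub_zero]
  have hψle1 : ∀ z, ψ z ≤ 1 := by
    intro z
    have := hF0le1 z
    have h1 : 0 ≤ c * g z := mul_nonneg hcnn (hgnn z)
    have h2 : 0 ≤ c' * g (-z) := mul_nonneg hc'nn (hgnn (-z))
    simp only [hψ]; linarith
  have hψge : ∀ z, -κ ≤ ψ z := by
    intro z
    have h0 := hF0nn z
    have h1 : c * g z ≤ l/J := le_trans (mul_le_of_le_one_right hcnn (hgle1 z)) hcle
    have h2 : c' * g (-z) ≤ l/J := le_trans (mul_le_of_le_one_right hc'nn (hgle1 (-z))) hc'le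
    have h3 : l/J ≤ κ/2 := by
      rw [div_le_div_iff₀ hJpos (by norm_num : (0:ℝ) < 2)] at *
      nlinarith
    simp only [hψ]; linarith
  have hψz : ∀ z, r ≤ |z| → ψ z = 0 := by
    intro z hz
    have h0 : F0 z = 0 := hF0z z (by linarith)
    have h1 : g z = 0 := by
      rcases le_or_gt r z with h | h
      · exact hg0' z (by linarith)
      · apply hg0 z
        rcases abs_cases z with ⟨h2, _⟩ | ⟨h2, _⟩ <;> linarith
    have h2 : g (-z) = 0 := by
      rcases le_or_gt r z with h | h
      · exact hg0 (-z) (by linarith)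
      · apply hg0' (-z)
        rcases abs_cases z with ⟨h2, _⟩ | ⟨h2, _⟩ <;> linarith
    simp only [hψ, h0, h1, h2, mul_zero, sub_zero]
  -- integral decomposition
  have hsplit : ∀ a b : ℝ, (∫ z in a..b, ψ z) =
      (∫ z in a..b, F0 z) - c * (∫ z in a..b, g z) - c' * (∫ z in a..b, g (-z)) := by
    intro a b
    have i1 := Continuous.intervalIntegrable (μ := volume) hF0c a b
    have i2 : IntervalIntegrable (fun z => c * g z) volume a b :=
      Continuous.intervalIntegrable (continuous_const.mul hgc) a b
    have i3 : IntervalIntegrable (fun z => c' * g (-z)) volume a b :=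
      Continuous.intervalIntegrable (continuous_const.mul (hgc.comp continuous_neg)) a b
    rw [hψ]
    rw [intervalIntegral.integral_sub (i1.sub i2) i3, intervalIntegral.integral_sub i1 i2,
      intervalIntegral.integral_const_mul, intervalIntegral.integral_const_mul]
  have hgneg0 : ∀ a b : ℝ, -r/4 ≤ a → a ≤ b → (∫ z in a..b, g (-z)) = 0 := by
    intro a b ha hab
    apply hIzero
    intro z hz
    rw [Set.uIcc_of_le hab] at hz
    exact hg0 (-z) (by linarith [hz.1])
  have hgz : ∀ a b : ℝ, a ≤ b → b ≤ r/4 → (∫ z in a..b, g z) = 0 := by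
    intro a b hab hb
    apply hIzero
    intro z hz
    rw [Set.uIcc_of_le hab] at hz
    exact hg0 z (by linarith [hz.2])
  have hcJ : c * J = A := by
    rw [hc]; field_simp
  have hc'J : c' * J = A' := by
    rw [hc']; field_simp
  have hIr : (∫ z in (0:ℝ)..r, ψ z) = 0 := by
    rw [hsplit, hgneg0 0 r (by linarith) (by linarith), mul_zero, sub_zero, ← hA, ← hJ, hcJ,
      sub_self]
  have hIl : (∫ z in (-r)..(0:ℝ), ψ z) = 0 := by
    have e1 : (∫ z in (-r)..(0:ℝ), g (-z)) = J := by
      rw [intervalIntegral.integral_comp_neg (f := g), neg_zero, neg_neg, ← hJ]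
    have e2 : (∫ z in (-r)..(0:ℝ), g z) = 0 := hgz (-r) 0 (by linarith) (by linarith)
    rw [hsplit, e1, e2, mul_zero, sub_zero, ← hA', hc'J, sub_self]
  have htr : ∀ x, r ≤ x → t x = 0 := by
    intro x hx
    have e1 : (∫ z in r..x, ψ z) = 0 := by
      apply hIzero
      intro z hz
      rw [Set.uIcc_of_le hx] at hz
      exact hψz z (le_trans hz.1 (le_abs_self z))
    have : t x = (∫ z in (0:ℝ)..r, ψ z) + ∫ z in r..x, ψ z :=
      (intervalIntegral.integral_add_adjacent_intervals (hψc.intervalIntegrable 0 r)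
        (hψc.intervalIntegrable r x)).symm
    rw [this, hIr, e1, add_zero]
  have htl : ∀ x, x ≤ -r → t x = 0 := by
    intro x hx
    have e1 : (∫ z in x..(-r), ψ z) = 0 := by
      apply hIzero
      intro z hz
      rw [Set.uIcc_of_le hx] at hz
      apply hψz z
      rw [abs_of_nonpos (by linarith [hz.2])]
      linarith [hz.2]
    have : (∫ z in x..(0:ℝ), ψ z) = (∫ z in x..(-r), ψ z) + ∫ z in (-r)..(0:ℝ), ψ z :=
      (intervalIntegral.integral_add_adjacent_intervals (hψc.intervalIntegrable x (-r))
        (hψc.intervalIntegrable (-r) 0)).symm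
    have e2 : t x = -∫ z in x..(0:ℝ), ψ z := intervalIntegral.integral_symm x 0
    rw [e2, this, e1, hIl, zero_add, neg_zero]
  have htz : ∀ x, r ≤ |x| → t x = 0 := by
    intro x hx
    rcases abs_cases x with ⟨h, _⟩ | ⟨h, _⟩
    · exact htr x (h ▸ hx)
    · exact htl x (by linarith)
  have htle : ∀ x, |t x| ≤ l := by
    intro x
    rcases le_total 0 x with hx0 | hx0
    · rcases le_total x r with hxr | hxr
      · have e1 : (∫ z in (0:ℝ)..x, g (-z)) = 0 := hgneg0 0 x (by linarith) hx0
        have e2 : t x = (∫ z in (0:ℝ)..x, F0 z) - c * (∫ z in (0:ℝ)..x, g z) := by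
          rw [ht]
          simp only [hsplit 0 x, e1, mul_zero, sub_zero]
        have b1 : 0 ≤ ∫ z in (0:ℝ)..x, F0 z :=
          intervalIntegral.integral_nonneg hx0 (fun u _ => hF0nn u)
        have b2 : (∫ z in (0:ℝ)..x, F0 z) ≤ A := hextR F0 hF0c hF0nn 0 x r hx0 hxr
        have b3 : 0 ≤ ∫ z in (0:ℝ)..x, g z :=
          intervalIntegral.integral_nonneg hx0 (fun u _ => hgnn u)
        have b4 : (∫ z in (0:ℝ)..x, g z) ≤ J := by
          rw [hJ]; exact hextR g hgc hgnn 0 x r hx0 hxr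
        have b5 : c * (∫ z in (0:ℝ)..x, g z) ≤ A := by
          calc c * (∫ z in (0:ℝ)..x, g z) ≤ c * J := by gcongr
          _ = A := hcJ
        have b6 : 0 ≤ c * (∫ z in (0:ℝ)..x, g z) := mul_nonneg hcnn b3
        rw [e2]
        rw [abs_le]
        constructor <;> [linarith; linarith]
      · rw [htr x hxr, abs_zero]; exact le_of_lt hl0
    · rcases le_total (-r) x with hxr | hxr
      · have e0 : (∫ z in x..(0:ℝ), g z) = 0 := hgz x 0 hx0 (by linarith)
        have e1 : t x = -∫ z in x..(0:ℝ), ψ z := intervalIntegral.integral_symm x 0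
        have e2 : (∫ z in x..(0:ℝ), ψ z) =
            (∫ z in x..(0:ℝ), F0 z) - c' * (∫ z in x..(0:ℝ), g (-z)) := by
          rw [hsplit x 0, e0, mul_zero, sub_zero]
        have b1 : 0 ≤ ∫ z in x..(0:ℝ), F0 z :=
          intervalIntegral.integral_nonneg hx0 (fun u _ => hF0nn u)
        have b2 : (∫ z in x..(0:ℝ), F0 z) ≤ A' := by
          rw [hA']; exact hextL F0 hF0c hF0nn (-r) x 0 hxr hx0
        have b3 : 0 ≤ ∫ z in x..(0:ℝ), g (-z) :=
          intervalIntegral.integral_nonneg hx0 (fun u _ => hgnn (-u))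
        have b4 : (∫ z in x..(0:ℝ), g (-z)) ≤ J := by
          have := hextL (fun z => g (-z)) (hgc.comp continuous_neg) (fun z => hgnn (-z))
            (-r) x 0 hxr hx0
          have e3 : (∫ z in (-r)..(0:ℝ), g (-z)) = J := by
            rw [intervalIntegral.integral_comp_neg (f := g), neg_zero, neg_neg, ← hJ]
          calc (∫ z in x..(0:ℝ), g (-z)) ≤ ∫ z in (-r)..(0:ℝ), g (-z) := this
          _ = J := e3
        have b5 : c' * (∫ z in x..(0:ℝ), g (-z)) ≤ A' := by
          calc c' * (∫ z in x..(0:ℝ), g (-z)) ≤ c' * J := by gcongr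
          _ = A' := hc'J
        have b6 : 0 ≤ c' * (∫ z in x..(0:ℝ), g (-z)) := mul_nonneg hc'nn b3
        rw [e1, e2, abs_neg, abs_le]
        constructor <;> [linarith; linarith]
      · rw [htl x hxr, abs_zero]; exact le_of_lt hl0
  refine ⟨t, hcd, ?_, ?_, ?_, ?_, ?_, ?_, ?_⟩
  · rw [ht]; exact intervalIntegral.integral_same
  · rw [hderiv 0, hψ0]
  · intro x; rw [hderiv x]; exact hψle1 x
  · intro x; rw [hderiv x]; exact hψge x
  · intro x; exact le_trans (htle x) hlε
  · exact htz
  · intro x hx; rw [hderiv x]; exact hψz x hx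
open Metric

lemma exists_rho (r : ℝ) (hr : 0 < r) :
    ∃ ρ : ℝ → ℝ, ∃ C : ℝ, ContDiff ℝ 1 ρ ∧ ρ 0 = 1 ∧ deriv ρ 0 = 0 ∧
      (∀ y, 0 ≤ ρ y) ∧ (∀ y, ρ y ≤ 1) ∧ 0 < C ∧ (∀ y, |deriv ρ y| ≤ C) ∧
      (∀ y, r ≤ |y| → ρ y = 0) ∧ (∀ y, r ≤ |y| → deriv ρ y = 0) := by
  set f : ContDiffBump (0:ℝ) := ⟨r/4, r/2, by positivity, by linarith⟩ with hf
  set ρ : ℝ → ℝ := fun y => f y with hρ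
  have hcd : ContDiff ℝ 1 ρ := f.contDiff
  have hz : ∀ y, r ≤ |y| → ρ y = 0 := by
    intro y hy
    apply f.zero_of_le_dist
    rw [Real.dist_eq, sub_zero]
    show r/2 ≤ |y|
    linarith
  have hdz : ∀ y, r ≤ |y| → deriv ρ y = 0 := by
    intro y hy
    have hev : ρ =ᶠ[nhds y] (fun _ => (0:ℝ)) := by
      have : Metric.ball y (r/4) ∈ nhds y := Metric.ball_mem_nhds y (by positivity)
      filter_upwards [this] with z hz'
      apply f.zero_of_le_dist
      rw [Real.dist_eq, sub_zero]
      show r/2 ≤ |z|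
      rw [mem_ball, Real.dist_eq] at hz'
      rcases abs_cases (z - y) with ⟨h1, _⟩ | ⟨h1, _⟩ <;>
        rcases abs_cases y with ⟨h2, _⟩ | ⟨h2, _⟩ <;>
        rcases abs_cases z with ⟨h3, _⟩ | ⟨h3, _⟩ <;> linarith
    rw [hev.deriv_eq, deriv_const]
  have hone : ρ 0 = 1 := f.one_of_mem_closedBall (by simp [dist_self]; positivity)
  have hd0 : deriv ρ 0 = 0 := by
    have hev : ρ =ᶠ[nhds 0] (fun _ => (1:ℝ)) := f.eventuallyEq_one
    rw [hev.deriv_eq, deriv_const]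
  have hDc : Continuous (deriv ρ) := (contDiff_one_iff_deriv.mp hcd).2
  have hcs : HasCompactSupport (deriv ρ) := f.hasCompactSupport.deriv
  obtain ⟨y0, hy0⟩ := Continuous.exists_forall_ge_of_hasCompactSupport hDc.abs hcs.abs
  exact ⟨ρ, |deriv ρ y0| + 1, hcd, hone, hd0, fun y => f.nonneg, fun y => f.le_one,
    by positivity, fun y => by linarith [hy0 y], hz, hdz⟩

set_option maxHeartbeats 2000000 in
/-- local C¹ perturbation lemma weakening the contraction rate along
the first coordinate of a skew-product-like planar map. -/
theorem perturbation_lemma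
    (η δ α γ β lam : ℝ) (hη : 0 < η) (hδ : 0 < δ) (hα : 0 < α) (hγ : 0 < γ)
    (hβ : 0 < β) (hβ2 : Real.exp β < 2) (hlam : -β < lam)
    (u : E2 → ℝ) (v : ℝ → ℝ) (hu : ContDiff ℝ 1 u) (hv : ContDiff ℝ 1 v)
    (hux : ∀ p : E2, 0 < fderiv ℝ u p e0 ∧ fderiv ℝ u p e0 ≤ Real.exp (-lam))
    (huy : ∀ p : E2, |fderiv ℝ u p e1| < η) :
    ∃ ut : E2 → ℝ, ContDiff ℝ 1 ut ∧
      -- g coincides with h outside the open ball of radius δ at the origin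
      (∀ p : E2, p ∉ Metric.ball (0 : E2) δ → ut p = u p) ∧
      -- (i)
      (∀ p : E2, 0 < fderiv ℝ ut p e0 ∧ fderiv ℝ ut p e0 ≤ Real.exp (γ - lam)) ∧
      (∀ p : E2, |fderiv ℝ ut p e1| < η) ∧
      -- (ii)
      (∀ p : E2, ‖mk2 (ut p) (v (p 1)) - mk2 (u p) (v (p 1))‖ < α) ∧
      -- (iii)
      (∀ p : E2,
        ‖fderiv ℝ (fun q : E2 => mk2 (ut q) (v (q 1))) p -
          fderiv ℝ (fun q : E2 => mk2 (u q) (v (q 1))) p‖ < 2 * (Real.exp γ - 1)) ∧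
      -- (iv)
      fderiv ℝ ut 0 e0 = Real.exp γ * fderiv ℝ u 0 e0 ∧
      fderiv ℝ ut 0 e1 = fderiv ℝ u 0 e1 := by
  -- basic exponential facts
  have he2 : Real.exp (-lam) < 2 := lt_trans (Real.exp_lt_exp.mpr (by linarith)) hβ2
  have hγ1 : 1 < Real.exp γ := by nlinarith [Real.add_one_le_exp γ]
  have hexppos := Real.exp_pos (-lam)
  -- differentiability of u
  have hud : Differentiable ℝ u := hu.differentiable one_ne_zero
  have hDu : Continuous (fderiv ℝ u) := hu.continuous_fderiv one_ne_zero
  have hcont0 : Continuous (fun p : E2 => fderiv ℝ u p e0) :=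
    ((ContinuousLinearMap.apply ℝ ℝ e0).continuous).comp hDu
  have hcont1 : Continuous (fun p : E2 => |fderiv ℝ u p e1|) :=
    (((ContinuousLinearMap.apply ℝ ℝ e1).continuous).comp hDu).abs
  -- min of u_x and max of |u_y| on the closed ball
  have hK : IsCompact (closedBall (0:E2) δ) := isCompact_closedBall _ _
  have hKne : (closedBall (0:E2) δ).Nonempty := ⟨0, mem_closedBall_self (le_of_lt hδ)⟩
  obtain ⟨pm, hpmK, hpm⟩ := hK.exists_isMinOn hKne hcont0.continuousOn
  set m : ℝ := fderiv ℝ u pm e0 with hm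
  have hm0 : 0 < m := (hux pm).1
  have hmle : ∀ p ∈ closedBall (0:E2) δ, m ≤ fderiv ℝ u p e0 := fun p hp => hpm hp
  obtain ⟨pM, hpMK, hpM⟩ := hK.exists_isMaxOn hKne hcont1.continuousOn
  set η₁ : ℝ := |fderiv ℝ u pM e1| with hη₁
  have hη₁lt : η₁ < η := huy pM
  have hη₁nn : 0 ≤ η₁ := abs_nonneg _
  have hη₁le : ∀ p ∈ closedBall (0:E2) δ, |fderiv ℝ u p e1| ≤ η₁ := fun p hp => hpM hp
  -- the perturbation size
  set a0 : ℝ := fderiv ℝ u 0 e0 with ha0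
  have ha0pos : 0 < a0 := (hux 0).1
  have ha0le : a0 ≤ Real.exp (-lam) := (hux 0).2
  set d0 : ℝ := (Real.exp γ - 1) * a0 with hd0
  have hd0pos : 0 < d0 := mul_pos (by linarith) ha0pos
  have hd0le : d0 ≤ (Real.exp γ - 1) * Real.exp (-lam) := by
    rw [hd0]; gcongr
  -- get ρ and t
  obtain ⟨ρ, C, hρcd, hρ0, hρd0, hρnn, hρle1, hC0, hρd, hρz, hρdz⟩ := exists_rho (δ/2) (by linarith)
  set κ : ℝ := min 1 (m/(2*d0)) with hκ
  have hκ0 : 0 < κ := lt_min one_pos (by positivity)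
  have hκ1 : κ ≤ 1 := min_le_left _ _
  have hκm : d0 * κ ≤ m/2 := by
    calc d0 * κ ≤ d0 * (m/(2*d0)) := by gcongr; exact min_le_right _ _
    _ = m/2 := by field_simp
  set ε : ℝ := min (α/(2*d0)) (min ((η - η₁)/(2*d0*C)) ((Real.exp γ - 1)*(2 - Real.exp (-lam))/(2*d0*C))) with hε
  have hεpos : 0 < ε := by
    have h1 : 0 < Real.exp γ - 1 := by linarith
    have h2 : 0 < 2 - Real.exp (-lam) := by linarith
    have h3 : 0 < η - η₁ := by linarith
    apply lt_min (by positivity) (lt_min (by positivity) (by positivity))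
  have hεα : d0 * ε ≤ α/2 := by
    have h := min_le_left (α/(2*d0)) (min ((η - η₁)/(2*d0*C)) ((Real.exp γ - 1)*(2 - Real.exp (-lam))/(2*d0*C)))
    rw [← hε] at h
    calc d0 * ε ≤ d0 * (α/(2*d0)) := by gcongr
    _ = α/2 := by field_simp
  have hεη : d0 * ε * C ≤ (η - η₁)/2 := by
    have h : ε ≤ (η - η₁)/(2*d0*C) := le_trans (min_le_right _ _) (min_le_left _ _)
    calc d0 * ε * C ≤ d0 * ((η - η₁)/(2*d0*C)) * C := by gcongr
    _ = (η - η₁)/2 := by field_simp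
  have hεop : d0 * ε * C ≤ (Real.exp γ - 1)*(2 - Real.exp (-lam))/2 := by
    have h : ε ≤ (Real.exp γ - 1)*(2 - Real.exp (-lam))/(2*d0*C) :=
      le_trans (min_le_right _ _) (min_le_right _ _)
    calc d0 * ε * C ≤ d0 * ((Real.exp γ - 1)*(2 - Real.exp (-lam))/(2*d0*C)) * C := by gcongr
    _ = (Real.exp γ - 1)*(2 - Real.exp (-lam))/2 := by field_simp
  obtain ⟨t, htcd, ht0, htd0, htdle, htdge, htle, htz, htdz⟩ :=
    exists_plateau κ ε (δ/2) hκ0 hεpos (by linarith)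
  have htdiff : Differentiable ℝ t := (contDiff_one_iff_deriv.mp htcd).1
  have hρdiff : Differentiable ℝ ρ := (contDiff_one_iff_deriv.mp hρcd).1
  have htabs : ∀ x, |deriv t x| ≤ 1 := by
    intro x
    rw [abs_le]
    exact ⟨by linarith [htdge x], htdle x⟩
  -- the perturbation
  set w : E2 → ℝ := fun p => d0 * (t (p 0) * ρ (p 1)) with hw
  set ut : E2 → ℝ := fun p => u p + w p with hut
  set wx : E2 → ℝ := fun p => d0 * (ρ (p 1) * deriv t (p 0)) with hwx
  set wy : E2 → ℝ := fun p => d0 * (t (p 0) * deriv ρ (p 1)) with hwy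
  -- projections
  set P0 : E2 →L[ℝ] ℝ := EuclideanSpace.proj (0 : Fin 2) with hP0
  set P1 : E2 →L[ℝ] ℝ := EuclideanSpace.proj (1 : Fin 2) with hP1
  have hP0e0 : P0 e0 = 1 := rfl
  have hP0e1 : P0 e1 = 0 := rfl
  have hP1e0 : P1 e0 = 0 := rfl
  have hP1e1 : P1 e1 = 1 := rfl
  have hTq : ∀ p : E2, HasFDerivAt (fun q : E2 => t (q 0)) (deriv t (p 0) • P0) p := by
    intro p
    exact HasDerivAt.comp_hasFDerivAt p ((htdiff (p 0)).hasDerivAt) P0.hasFDerivAt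
  have hRq : ∀ p : E2, HasFDerivAt (fun q : E2 => ρ (q 1)) (deriv ρ (p 1) • P1) p := by
    intro p
    exact HasDerivAt.comp_hasFDerivAt p ((hρdiff (p 1)).hasDerivAt) P1.hasFDerivAt
  set Dw : E2 → (E2 →L[ℝ] ℝ) := fun p =>
    d0 • (t (p 0) • (deriv ρ (p 1) • P1) + ρ (p 1) • (deriv t (p 0) • P0)) with hDw
  have hw' : ∀ p : E2, HasFDerivAt w (Dw p) p := by
    intro p
    exact ((hTq p).mul (hRq p)).const_mul d0
  have hDwe0 : ∀ p : E2, Dw p e0 = wx p := by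
    intro p
    simp [hDw, hwx, ContinuousLinearMap.add_apply, ContinuousLinearMap.smul_apply,
      hP0e0, hP1e0, smul_eq_mul]
  have hDwe1 : ∀ p : E2, Dw p e1 = wy p := by
    intro p
    simp [hDw, hwy, ContinuousLinearMap.add_apply, ContinuousLinearMap.smul_apply,
      hP0e1, hP1e1, smul_eq_mul]
  have hwcd : ContDiff ℝ 1 w :=
    contDiff_const.mul ((htcd.comp (P0.contDiff)).mul (hρcd.comp (P1.contDiff)))
  have hutcd : ContDiff ℝ 1 ut := hu.add hwcd
  have hut' : ∀ p : E2, HasFDerivAt ut (fderiv ℝ u p + Dw p) p := by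
    intro p
    exact ((hud p).hasFDerivAt).add (hw' p)
  have hute0 : ∀ p : E2, fderiv ℝ ut p e0 = fderiv ℝ u p e0 + wx p := by
    intro p
    rw [(hut' p).fderiv, ContinuousLinearMap.add_apply, hDwe0]
  have hute1 : ∀ p : E2, fderiv ℝ ut p e1 = fderiv ℝ u p e1 + wy p := by
    intro p
    rw [(hut' p).fderiv, ContinuousLinearMap.add_apply, hDwe1]
  -- vanishing outside the box
  have hvan : ∀ p : E2, δ/2 ≤ |p 0| ∨ δ/2 ≤ |p 1| → w p = 0 ∧ wx p = 0 ∧ wy p = 0 := by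
    intro p hp
    rcases hp with h | h
    · simp only [hw, hwx, hwy]
      rw [htz (p 0) h, htdz (p 0) h]
      norm_num
    · simp only [hw, hwx, hwy]
      rw [hρz (p 1) h, hρdz (p 1) h]
      norm_num
  have hball : ∀ p : E2, |p 0| < δ/2 → |p 1| < δ/2 → p ∈ closedBall (0:E2) δ := by
    intro p h0 h1
    rw [mem_closedBall, dist_zero_right]
    linarith [norm_le_add p]
  -- pointwise bounds on wx / wy
  have hwxlow : ∀ p : E2, -(d0 * κ) ≤ wx p := by
    intro p
    simp only [hwx]
    have h1 := hρnn (p 1); have h2 := hρle1 (p 1); have h3 := htdge (p 0)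
    have key : -κ ≤ ρ (p 1) * deriv t (p 0) := by
      nlinarith [mul_nonneg h1 (show (0:ℝ) ≤ deriv t (p 0) + κ by linarith),
        mul_nonneg (sub_nonneg.mpr h2) hκ0.le]
    calc -(d0 * κ) = d0 * (-κ) := by ring
    _ ≤ d0 * (ρ (p 1) * deriv t (p 0)) := mul_le_mul_of_nonneg_left key hd0pos.le
  have hwxhigh : ∀ p : E2, wx p ≤ d0 := by
    intro p
    simp only [hwx]
    have h1 := hρnn (p 1); have h2 := hρle1 (p 1); have h3 := htdle (p 0)
    have key : ρ (p 1) * deriv t (p 0) ≤ 1 := by nlinarith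
    calc d0 * (ρ (p 1) * deriv t (p 0)) ≤ d0 * 1 := mul_le_mul_of_nonneg_left key hd0pos.le
    _ = d0 := mul_one d0
  have hwxabs : ∀ p : E2, |wx p| ≤ d0 := by
    intro p
    rw [abs_le]
    refine ⟨?_, hwxhigh p⟩
    have := hwxlow p
    nlinarith [hκ1, hd0pos.le]
  have hwyabs : ∀ p : E2, |wy p| ≤ d0 * ε * C := by
    intro p
    simp only [hwy]
    rw [abs_mul d0 (t (p 0) * deriv ρ (p 1)), abs_of_pos hd0pos,
      abs_mul (t (p 0)) (deriv ρ (p 1))]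
    have h1 := htle (p 0); have h2 := hρd (p 1)
    have h3 := abs_nonneg (t (p 0)); have h4 := abs_nonneg (deriv ρ (p 1))
    calc d0 * (|t (p 0)| * |deriv ρ (p 1)|) ≤ d0 * (ε * C) :=
          mul_le_mul_of_nonneg_left (mul_le_mul h1 h2 h4 hεpos.le) hd0pos.le
    _ = d0 * ε * C := by ring
  have hwabs : ∀ p : E2, |w p| ≤ d0 * ε := by
    intro p
    simp only [hw]
    rw [abs_mul d0 (t (p 0) * ρ (p 1)), abs_of_pos hd0pos, abs_mul (t (p 0)) (ρ (p 1))]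
    have h1 := htle (p 0)
    have h2 : |ρ (p 1)| ≤ 1 := by rw [abs_of_nonneg (hρnn _)]; exact hρle1 _
    have h3 := abs_nonneg (t (p 0)); have h4 := abs_nonneg (ρ (p 1))
    calc d0 * (|t (p 0)| * |ρ (p 1)|) ≤ d0 * (ε * 1) :=
          mul_le_mul_of_nonneg_left (mul_le_mul h1 h2 h4 hεpos.le) hd0pos.le
    _ = d0 * ε := by ring
  -- conclusion
  refine ⟨ut, hutcd, ?_, ?_, ?_, ?_, ?_, ?_, ?_⟩
  · -- coincidence outside the ball
    intro p hp
    rw [mem_ball, dist_zero_right, not_lt] at hp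
    have hc : δ/2 ≤ |p 0| ∨ δ/2 ≤ |p 1| := by
      by_contra hcon
      push_neg at hcon
      have := norm_le_add p
      linarith [hcon.1, hcon.2]
    have := (hvan p hc).1
    rw [hut]
    simp only [this, add_zero]
  · -- (i) first part
    intro p
    rw [hute0 p]
    rcases le_or_gt (δ/2) |p 0| with h | h
    · rw [(hvan p (Or.inl h)).2.1, add_zero]
      refine ⟨(hux p).1, le_trans (hux p).2 (Real.exp_le_exp.mpr (by linarith))⟩
    rcases le_or_gt (δ/2) |p 1| with h' | h'
    · rw [(hvan p (Or.inr h')).2.1, add_zero]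
      refine ⟨(hux p).1, le_trans (hux p).2 (Real.exp_le_exp.mpr (by linarith))⟩
    have hpK := hball p h h'
    constructor
    · have h1 := hmle p hpK
      have h2 := hwxlow p
      linarith [hκm]
    · have h1 := (hux p).2
      have h2 := hwxhigh p
      have h3 : Real.exp (γ - lam) = Real.exp γ * Real.exp (-lam) := by
        rw [← Real.exp_add]; ring_nf
      rw [h3]
      nlinarith [hd0le]
  · -- (i) second part
    intro p
    rw [hute1 p]
    rcases le_or_gt (δ/2) |p 0| with h | h
    · rw [(hvan p (Or.inl h)).2.2, add_zero]; exact huy p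
    rcases le_or_gt (δ/2) |p 1| with h' | h'
    · rw [(hvan p (Or.inr h')).2.2, add_zero]; exact huy p
    have hpK := hball p h h'
    calc |fderiv ℝ u p e1 + wy p| ≤ |fderiv ℝ u p e1| + |wy p| := abs_add_le _ _
    _ ≤ η₁ + d0 * ε * C := add_le_add (hη₁le p hpK) (hwyabs p)
    _ < η := by linarith [hεη]
  · -- (ii)
    intro p
    have hdiff : mk2 (ut p) (v (p 1)) - mk2 (u p) (v (p 1)) = w p • e0 := by
      rw [mk2_decomp, mk2_decomp, hut]
      simp only
      rw [add_smul]
      abel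
    rw [hdiff, norm_smul_e0]
    calc |w p| ≤ d0 * ε := hwabs p
    _ ≤ α/2 := hεα
    _ < α := by linarith
  · -- (iii)
    intro p
    have hveq : ∀ q : E2, HasFDerivAt (fun q : E2 => v (q 1)) (deriv v (q 1) • P1) q := by
      intro q
      exact HasDerivAt.comp_hasFDerivAt q
        (((contDiff_one_iff_deriv.mp hv).1 (q 1)).hasDerivAt) P1.hasFDerivAt
    have hH : HasFDerivAt (fun q : E2 => mk2 (u q) (v (q 1)))
        ((fderiv ℝ u p).smulRight e0 + (deriv v (p 1) • P1).smulRight e1) p := by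
      have e : (fun q : E2 => mk2 (u q) (v (q 1))) = fun q => u q • e0 + v (q 1) • e1 := by
        funext q; rw [mk2_decomp]
      rw [e]
      exact (((hud p).hasFDerivAt).smul_const e0).add ((hveq p).smul_const e1)
    have hG : HasFDerivAt (fun q : E2 => mk2 (ut q) (v (q 1)))
        (((fderiv ℝ u p + Dw p)).smulRight e0 + (deriv v (p 1) • P1).smulRight e1) p := by
      have e : (fun q : E2 => mk2 (ut q) (v (q 1))) = fun q => ut q • e0 + v (q 1) • e1 := by
        funext q; rw [mk2_decomp]
      rw [e]
      exact (((hut' p)).smul_const e0).add ((hveq p).smul_const e1)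
    rw [hG.fderiv, hH.fderiv]
    have ee : ((fderiv ℝ u p + Dw p)).smulRight e0 + (deriv v (p 1) • P1).smulRight e1
        - ((fderiv ℝ u p).smulRight e0 + (deriv v (p 1) • P1).smulRight e1)
        = (Dw p).smulRight e0 := by
      refine ContinuousLinearMap.ext fun x => ?_
      simp only [ContinuousLinearMap.sub_apply, ContinuousLinearMap.add_apply,
        ContinuousLinearMap.smulRight_apply, add_smul]
      abel
    rw [ee]
    have hnorm : ‖(Dw p).smulRight e0‖ = ‖Dw p‖ := by
      rw [ContinuousLinearMap.norm_smulRight_apply]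
      have : ‖(e0:E2)‖ = 1 := by
        have := norm_smul_e0 1
        simpa using this
      rw [this, mul_one]
    rw [hnorm]
    have hb : ‖Dw p‖ ≤ |wx p| + |wy p| := by
      have := opnorm_le (Dw p)
      rw [hDwe0, hDwe1] at this
      exact this
    have h1 := hwxabs p
    have h2 := hwyabs p
    have h3 : d0 * ε * C ≤ (Real.exp γ - 1)*(2 - Real.exp (-lam))/2 := hεop
    calc ‖Dw p‖ ≤ |wx p| + |wy p| := hb
    _ ≤ d0 + (Real.exp γ - 1)*(2 - Real.exp (-lam))/2 := by linarith
    _ < 2 * (Real.exp γ - 1) := by nlinarith [hd0le]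
  · -- (iv) e0
    rw [hute0 0]
    have h0 : ((0:E2) 0) = 0 := rfl
    have h1 : ((0:E2) 1) = 0 := rfl
    simp only [hwx, h0, h1, hρ0, htd0, mul_one, one_mul]
    rw [hd0]
    ring
  · -- (iv) e1
    rw [hute1 0]
    have h0 : ((0:E2) 0) = 0 := rfl
    have h1 : ((0:E2) 1) = 0 := rfl
    simp only [hwy, h0, h1, ht0, hρd0, mul_zero, zero_mul, add_zero]
end
end
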